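/- arXiv:1109.1412 — 9 statements merged into one kernel-verified Lean document; each statement's English description precedes it below -/
import Mathlib

section
/- Cauchy's determinant formula: for complex numbers x'_1,…,x'_K and t_1,…,t_K with all t_j+K-x'_i nonzero, det[(t_j+K)/(t_j+K-x'_i)]_{i,j=1}^K = (-1)^{K(K-1)/2} · ∏_{j=1}^K (t_j+K) · V(x'_1,…,x'_K)V(t_1,…,t_K) / ∏_{i,j}(t_j+K-x'_i), where V denotes the Vandermonde determinant ∏_{i<j}(z_i-z_j). -/
open Finset Matrix

lemma pairProd_split {n : ℕ} (f : Fin (n+1) → Fin (n+1) → ℂ) :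
    ∏ p ∈ univ.filter (fun p : Fin (n+1) × Fin (n+1) => p.1 < p.2), f p.1 p.2 =
      (∏ p ∈ univ.filter (fun p : Fin n × Fin n => p.1 < p.2), f p.1.castSucc p.2.castSucc) *
        ∏ i : Fin n, f i.castSucc (Fin.last n) := by
  rw [← Finset.prod_filter_mul_prod_filter_not
        (univ.filter fun p : Fin (n+1) × Fin (n+1) => p.1 < p.2)
        (fun p => p.2 = Fin.last n), mul_comm]
  congr 1
  · -- pairs with p.2 ≠ last  ↔  pairs of Fin n
    refine Finset.prod_bij'
      (fun (p : Fin (n+1) × Fin (n+1)) hp =>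
        ((p.1.castPred ?_, p.2.castPred ?_) : Fin n × Fin n))
      (fun p _ => (p.1.castSucc, p.2.castSucc)) ?_ ?_ ?_ ?_ ?_
    · -- p.1 ≠ last
      simp only [mem_filter, mem_univ, true_and] at hp
      exact Fin.lt_last_iff_ne_last.mp (hp.1.trans (Fin.lt_last_iff_ne_last.mpr hp.2))
    · simp only [mem_filter, mem_univ, true_and] at hp
      exact hp.2
    · -- hi
      intro p hp
      simp only [mem_filter, mem_univ, true_and] at hp ⊢
      exact Fin.castPred_lt_castPred_iff.mpr hp.1
    · -- hj
      intro p hp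
      simp only [mem_filter, mem_univ, true_and] at hp ⊢
      exact ⟨Fin.castSucc_lt_castSucc_iff.mpr hp, (Fin.castSucc_lt_last _).ne⟩
    · intro p hp
      simp [Fin.castSucc_castPred]
    · intro p hp
      simp [Fin.castPred_castSucc]
    · intro p hp
      simp [Fin.castSucc_castPred]
  · -- pairs with p.2 = last ↔ Fin n
    refine Finset.prod_bij'
      (fun (p : Fin (n+1) × Fin (n+1)) hp => p.1.castPred ?_)
      (fun i (_ : i ∈ (univ : Finset (Fin n))) => (i.castSucc, Fin.last n)) ?_ ?_ ?_ ?_ ?_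
    · simp only [mem_filter, mem_univ, true_and] at hp
      exact Fin.lt_last_iff_ne_last.mp (hp.2 ▸ hp.1)
    · intro p hp; exact mem_univ _
    · intro i hi
      simp [Fin.castSucc_lt_last]
    · intro p hp
      simp only [mem_filter, mem_univ, true_and] at hp
      ext
      · simp [Fin.castSucc_castPred]
      · simp [hp.2]
    · intro i hi
      simp [Fin.castPred_castSucc]
    · intro p hp
      simp only [mem_filter, mem_univ, true_and] at hp
      simp [hp.2, Fin.castSucc_castPred]

lemma cauchy_det : ∀ (n : ℕ) (x c : Fin n → ℂ), (∀ i j, c j - x i ≠ 0) →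
    Matrix.det (Matrix.of fun i j : Fin n => 1 / (c j - x i)) =
      (∏ p ∈ univ.filter (fun p : Fin n × Fin n => p.1 < p.2), (x p.1 - x p.2)) *
      (∏ p ∈ univ.filter (fun p : Fin n × Fin n => p.1 < p.2), (c p.2 - c p.1)) /
      ∏ i : Fin n, ∏ j : Fin n, (c j - x i) := by
  intro n
  induction n with
  | zero => intro x c h; simp
  | succ n ih =>
    intro x c h
    set L := Fin.last n with hL
    -- auxiliary matrices
    set E : Matrix (Fin (n+1)) (Fin (n+1)) ℂ :=
      Matrix.of (fun i j => if j = L then 1 else 1 / (c j - x i)) with hE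
    set D : Matrix (Fin (n+1)) (Fin (n+1)) ℂ :=
      Matrix.of (fun i j =>
        if i = L then 1
        else (if j = L then 0 else 1 / (c j - x i))) with hD
    set u : Fin (n+1) → ℂ := fun i => 1 / (c L - x i) with hu
    set v : Fin (n+1) → ℂ := fun j => if j = L then 1 else (c L - c j) with hv
    set p : Fin (n+1) → ℂ := fun i => if i = L then 1 else (x i - x L) with hp
    set q : Fin (n+1) → ℂ := fun j => if j = L then 1 else 1 / (c j - x L) with hq
    -- step 1 : column operations
    have step1 : Matrix.det (Matrix.of fun i j : Fin (n+1) => u i * (v j * E i j)) =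
        Matrix.det (Matrix.of fun i j : Fin (n+1) => 1 / (c j - x i)) := by
      have := Matrix.det_eq_of_forall_row_eq_smul_add_const
        (A := (Matrix.of fun i j : Fin (n+1) => u i * (v j * E i j))ᵀ)
        (B := (Matrix.of fun i j : Fin (n+1) => 1 / (c j - x i))ᵀ)
        (fun j => if j = L then 0 else -1) L (by simp) ?_
      · rw [← Matrix.det_transpose (Matrix.of fun i j : Fin (n+1) => u i * (v j * E i j)),
          ← Matrix.det_transpose (Matrix.of fun i j : Fin (n+1) => 1 / (c j - x i)), this]
      · intro j i
        simp only [Matrix.transpose_apply, Matrix.of_apply, hu, hv, hE]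
        by_cases hj : j = L
        · simp [hj]
        · simp only [hj, if_neg hj, ite_false]
          have h1 := h i j
          have h2 := h i L
          field_simp
          ring_nf
    -- step 2 : row operations
    have step2 : Matrix.det (Matrix.of fun i j : Fin (n+1) => p i * (q j * D i j)) =
        Matrix.det E := by
      apply Matrix.det_eq_of_forall_row_eq_smul_add_const
        (fun i => if i = L then 0 else -1) L (by simp)
      intro i j
      simp only [Matrix.of_apply, hp, hq, hD, hE]
      by_cases hi : i = L
      · simp [hi]
      · simp only [hi, if_neg hi, ite_false]
        by_cases hj : j = L
        · simp [hj]
        · simp only [hj, if_neg hj, ite_false]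
          have h1 := h i j
          have h2 := h (L) j
          field_simp
          ring_nf
    -- step 3 : det D equals smaller Cauchy determinant
    have step3 : Matrix.det D =
        Matrix.det (Matrix.of fun i j : Fin n => 1 / (c j.castSucc - x i.castSucc)) := by
      rw [Matrix.det_succ_column D L]
      rw [Finset.sum_eq_single L]
      · have hsub : D.submatrix L.succAbove L.succAbove =
            Matrix.of fun i j : Fin n => 1 / (c j.castSucc - x i.castSucc) := by
          ext i j
          simp [hD, hL, Fin.succAbove_last, (Fin.castSucc_lt_last i).ne, (Fin.castSucc_lt_last j).ne]
        have hDLL : D L L = 1 := by simp [hD]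
        have hpow : ((-1:ℂ))^((L:ℕ)+(L:ℕ)) = 1 := by
          rw [← two_mul, pow_mul]; norm_num
        rw [hDLL, hpow, hsub]
        ring
      · intro i _ hiL
        simp [hD, hiL]
      · simp
    -- assemble
    have hdet1 : Matrix.det (Matrix.of fun i j : Fin (n+1) => 1 / (c j - x i))
        = (∏ i, u i) * ((∏ j, v j) * ((∏ i, p i) * ((∏ j, q j) *
            Matrix.det (Matrix.of fun i j : Fin n => 1 / (c j.castSucc - x i.castSucc))))) := by
      have e1 : Matrix.det (Matrix.of fun i j : Fin (n+1) => u i * (v j * E i j)) =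
          (∏ i, u i) * Matrix.det (Matrix.of fun i j : Fin (n+1) => v j * E i j) :=
        Matrix.det_mul_column u (Matrix.of fun i j => v j * E i j)
      have e2 : Matrix.det (Matrix.of fun i j : Fin (n+1) => v j * E i j) =
          (∏ j, v j) * Matrix.det E := Matrix.det_mul_row v E
      have e3 : Matrix.det (Matrix.of fun i j : Fin (n+1) => p i * (q j * D i j)) =
          (∏ i, p i) * Matrix.det (Matrix.of fun i j : Fin (n+1) => q j * D i j) :=
        Matrix.det_mul_column p (Matrix.of fun i j => q j * D i j)
      have e4 : Matrix.det (Matrix.of fun i j : Fin (n+1) => q j * D i j) =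
          (∏ j, q j) * Matrix.det D := Matrix.det_mul_row q D
      rw [← step1, e1, e2, ← step2, e3, e4, step3]
    have hcsl : ∀ j : Fin n, j.castSucc ≠ Fin.last n := fun j => (Fin.castSucc_lt_last j).ne
    have hvprod : ∏ j, v j = ∏ j : Fin n, (c L - c j.castSucc) := by
      rw [Fin.prod_univ_castSucc]
      simp [hv, hL, hcsl]
    have hpprod : ∏ i, p i = ∏ i : Fin n, (x i.castSucc - x L) := by
      rw [Fin.prod_univ_castSucc]
      simp [hp, hL, hcsl]
    have huprod : ∏ i, u i = ((∏ i : Fin n, (c L - x i.castSucc)) * (c L - x L))⁻¹ := by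
      have : ∏ i, u i = (∏ i : Fin (n+1), (c L - x i))⁻¹ := by
        simp [hu, one_div]
      rw [this, Fin.prod_univ_castSucc]
    have hqprod : ∏ j, q j = (∏ j : Fin n, (c j.castSucc - x L))⁻¹ := by
      rw [Fin.prod_univ_castSucc]
      simp [hq, hL, hcsl, one_div]
    have hsmall : Matrix.det (Matrix.of fun i j : Fin n => 1 / (c j.castSucc - x i.castSucc)) =
        (∏ p ∈ univ.filter (fun p : Fin n × Fin n => p.1 < p.2),
            (x p.1.castSucc - x p.2.castSucc)) *
          (∏ p ∈ univ.filter (fun p : Fin n × Fin n => p.1 < p.2),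
            (c p.2.castSucc - c p.1.castSucc)) /
          ∏ i : Fin n, ∏ j : Fin n, (c j.castSucc - x i.castSucc) :=
      ih (fun i => x i.castSucc) (fun j => c j.castSucc) (fun i j => h _ _)
    have hQ : ∏ i : Fin (n+1), ∏ j : Fin (n+1), (c j - x i)
        = (∏ i : Fin n, ∏ j : Fin n, (c j.castSucc - x i.castSucc)) *
          (∏ i : Fin n, (c L - x i.castSucc)) *
          ((∏ j : Fin n, (c j.castSucc - x L)) * (c L - x L)) := by
      simp only [Fin.prod_univ_castSucc, hL, Finset.prod_mul_distrib]
      ring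
    have hPx : ∏ p ∈ univ.filter (fun p : Fin (n+1) × Fin (n+1) => p.1 < p.2), (x p.1 - x p.2)
        = (∏ p ∈ univ.filter (fun p : Fin n × Fin n => p.1 < p.2),
            (x p.1.castSucc - x p.2.castSucc)) * ∏ i : Fin n, (x i.castSucc - x L) := by
      rw [hL]; exact pairProd_split (fun i j => x i - x j)
    have hPc : ∏ p ∈ univ.filter (fun p : Fin (n+1) × Fin (n+1) => p.1 < p.2), (c p.2 - c p.1)
        = (∏ p ∈ univ.filter (fun p : Fin n × Fin n => p.1 < p.2),
            (c p.2.castSucc - c p.1.castSucc)) * ∏ i : Fin n, (c L - c i.castSucc) := by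
      rw [hL]; exact pairProd_split (fun i j => c j - c i)
    have hQ' : (∏ i : Fin n, ∏ j : Fin n, (c j.castSucc - x i.castSucc)) ≠ 0 :=
      Finset.prod_ne_zero_iff.mpr fun i _ =>
        Finset.prod_ne_zero_iff.mpr fun j _ => h _ _
    have hA1 : (∏ i : Fin n, (c L - x i.castSucc)) ≠ 0 :=
      Finset.prod_ne_zero_iff.mpr fun i _ => h _ _
    have hA2 : (∏ j : Fin n, (c j.castSucc - x L)) ≠ 0 :=
      Finset.prod_ne_zero_iff.mpr fun j _ => h _ _
    have ha0 : c L - x L ≠ 0 := h L L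
    rw [hdet1, huprod, hvprod, hpprod, hqprod, hsmall, hPx, hPc, hQ]
    field_simp

lemma card_pairs (n : ℕ) :
    (univ.filter (fun p : Fin n × Fin n => p.1 < p.2)).card = n * (n - 1) / 2 := by
  have h1 : (univ.filter (fun p : Fin n × Fin n => p.1 < p.2)).card
      = ∑ i : Fin n, (Finset.Ioi i).card := by
    rw [Finset.card_filter, Fintype.sum_prod_type]
    refine Finset.sum_congr rfl fun i _ => ?_
    rw [← Finset.filter_lt_eq_Ioi, Finset.card_filter]
  rw [h1]
  simp only [Fin.card_Ioi]
  rw [Fin.sum_univ_eq_sum_range (fun k => n - 1 - k),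
    show (∑ i ∈ Finset.range n, (n - 1 - i)) = ∑ i ∈ Finset.range n, id (n - 1 - i) from rfl,
    Finset.sum_range_reflect id n]
  simpa using Finset.sum_range_id n

/-- Cauchy's determinant formula:
`det[(t_j+K)/(t_j+K-x'_i)] = (-1)^{K(K-1)/2} ∏_j (t_j+K) · V(x')V(t) / ∏_{i,j}(t_j+K-x'_i)`,
where `V(z) = ∏_{i<j}(z_i - z_j)`. -/
theorem stmt_1 (K : ℕ) (x t : Fin K → ℂ)
    (h : ∀ i j : Fin K, t j + K - x i ≠ 0) :
    Matrix.det (Matrix.of fun i j : Fin K => (t j + K) / (t j + K - x i)) =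
      (-1) ^ (K * (K - 1) / 2) * (∏ j : Fin K, (t j + K)) *
        (∏ p ∈ Finset.univ.filter (fun p : Fin K × Fin K => p.1 < p.2), (x p.1 - x p.2)) *
        (∏ p ∈ Finset.univ.filter (fun p : Fin K × Fin K => p.1 < p.2), (t p.1 - t p.2)) /
        ∏ i : Fin K, ∏ j : Fin K, (t j + K - x i) := by
  have key : Matrix.det (Matrix.of fun i j : Fin K => 1 / (t j + K - x i)) =
      (∏ p ∈ univ.filter (fun p : Fin K × Fin K => p.1 < p.2), (x p.1 - x p.2)) *
      (∏ p ∈ univ.filter (fun p : Fin K × Fin K => p.1 < p.2),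
        (t p.2 + K - (t p.1 + K))) /
      ∏ i : Fin K, ∏ j : Fin K, (t j + K - x i) :=
    cauchy_det K x (fun j => t j + K) (fun i j => h i j)
  have hM : (Matrix.of fun i j : Fin K => (t j + K) / (t j + K - x i)) =
      Matrix.of (fun i j => (t j + (K : ℂ)) *
        ((Matrix.of fun i j : Fin K => 1 / (t j + K - x i)) i j)) := by
    ext i j
    simp [div_eq_mul_inv, one_div]
  have hsign : ∏ p ∈ univ.filter (fun p : Fin K × Fin K => p.1 < p.2),
      (t p.2 + (K : ℂ) - (t p.1 + K)) =
      (-1) ^ (K * (K - 1) / 2) *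
        ∏ p ∈ univ.filter (fun p : Fin K × Fin K => p.1 < p.2), (t p.1 - t p.2) := by
    rw [← card_pairs K, ← Finset.prod_const (-1 : ℂ), ← Finset.prod_mul_distrib]
    refine Finset.prod_congr rfl fun p _ => ?_
    ring
  rw [hM, Matrix.det_mul_row (fun j => t j + (K : ℂ)), key, hsign]
  ring
end

section
/- Krattenthaler's determinant lemma: for indeterminates X_1,…,X_n, A_2,…,A_n, B_2,…,B_n, one has det[(X_i+A_n)(X_i+A_{n-1})⋯(X_i+A_{j+1})·(X_i+B_j)(X_i+B_{j-1})⋯(X_i+B_2)]_{i,j=1}^n = ∏_{1≤i<j≤n}(X_i-X_j) · ∏_{2≤i≤j≤n}(B_i-A_j). -/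
open Finset Matrix Polynomial

namespace Kratt

variable {R : Type*} [CommRing R]

/-- The matrix after `k` passes of column operations. -/
def E (n : ℕ) (X A B : ℕ → R) (k : ℕ) : Matrix (Fin n) (Fin n) R :=
  Matrix.of fun i j => (∏ m ∈ Finset.Icc (j.val + 2) n, (X (i.val + 1) + A m)) *
    ∏ m ∈ Finset.Icc 2 (j.val + 1 - k), (X (i.val + 1) + B m)

lemma pass (n : ℕ) (X A B : ℕ → R) (k : ℕ) :
    (E n X A B k).det
      = (∏ j ∈ Finset.Icc (k + 2) n, (B (j - k) - A j)) * (E n X A B (k + 1)).det := by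
  rcases n with _ | m
  · rw [Finset.Icc_eq_empty (by omega)]
    simp [Matrix.det_isEmpty]
  set v : Fin (m + 1) → R :=
    fun j => if k + 1 ≤ j.val then B (j.val + 1 - k) - A (j.val + 1) else 1 with hv
  have h1 : (E (m + 1) X A B k).det
      = (Matrix.of fun i j : Fin (m + 1) => v j * E (m + 1) X A B (k + 1) i j).det := by
    apply Matrix.det_eq_of_forall_col_eq_smul_add_pred
      (fun j : Fin m => if k ≤ j.val then 1 else 0)
    · intro i
      simp only [Matrix.of_apply, E, hv, Fin.val_zero]
      simp only [show ¬ (k + 1 ≤ 0) by omega, if_false]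
      rw [Finset.Icc_eq_empty (show ¬ (2 ≤ 0 + 1 - k) by omega),
        Finset.Icc_eq_empty (show ¬ (2 ≤ 0 + 1 - (k + 1)) by omega)]
      ring
    · intro i j
      simp only [Matrix.of_apply, E, Fin.val_succ, Fin.coe_castSucc, hv]
      by_cases hk : k ≤ j.val
      · rw [if_pos (show k + 1 ≤ j.val + 1 by omega), if_pos hk]
        have hsplit : Finset.Icc (j.val + 2) (m + 1)
            = insert (j.val + 2) (Finset.Icc (j.val + 1 + 2) (m + 1)) := by
          ext x
          simp only [Finset.mem_Icc, Finset.mem_insert]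
          omega
        have hA : (∏ m' ∈ Finset.Icc (j.val + 2) (m + 1), (X (i.val + 1) + A m'))
            = (X (i.val + 1) + A (j.val + 2))
                * ∏ m' ∈ Finset.Icc (j.val + 1 + 2) (m + 1), (X (i.val + 1) + A m') := by
          rw [hsplit, Finset.prod_insert (by simp)]
        have hB : (∏ m' ∈ Finset.Icc 2 (j.val + 1 + 1 - k), (X (i.val + 1) + B m'))
            = (∏ m' ∈ Finset.Icc 2 (j.val + 1 - k), (X (i.val + 1) + B m'))
                * (X (i.val + 1) + B (j.val + 1 - k + 1)) := by
          rw [show j.val + 1 + 1 - k = (j.val + 1 - k) + 1 by omega]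
          exact Finset.prod_Icc_succ_top (by omega) _
        rw [hB, hA, show j.val + 1 + 1 - (k + 1) = j.val + 1 - k by omega,
          show j.val + 1 + 1 - k = j.val + 1 - k + 1 by omega,
          show j.val + 1 + 1 = j.val + 2 by omega]
        ring
      · rw [if_neg (show ¬ (k + 1 ≤ j.val + 1) by omega), if_neg hk,
          Finset.Icc_eq_empty (show ¬ (2 ≤ j.val + 1 + 1 - k) by omega),
          Finset.Icc_eq_empty (show ¬ (2 ≤ j.val + 1 + 1 - (k + 1)) by omega)]
        ring
  rw [h1, Matrix.det_mul_row v (E (m + 1) X A B (k + 1))]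
  congr 1
  have hval : (∏ j : Fin (m + 1), v j)
      = ∏ jv ∈ Finset.range (m + 1),
          (if k + 1 ≤ jv then B (jv + 1 - k) - A (jv + 1) else 1) :=
    Fin.prod_univ_eq_prod_range
      (fun jv => if k + 1 ≤ jv then B (jv + 1 - k) - A (jv + 1) else 1) (m + 1)
  rw [hval, ← Finset.prod_filter]
  apply Finset.prod_nbij' (fun jv => jv + 1) (fun j => j - 1)
  · intro a ha
    simp only [Finset.mem_filter, Finset.mem_range] at ha
    simp only [Finset.mem_Icc]
    omega
  · intro a ha
    simp only [Finset.mem_Icc] at ha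
    simp only [Finset.mem_filter, Finset.mem_range]
    omega
  · intro a _; omega
  · intro a ha
    simp only [Finset.mem_Icc] at ha
    omega
  · intro a _; rfl

lemma chain (n : ℕ) (X A B : ℕ → R) (t : ℕ) :
    (E n X A B 0).det
      = (∏ k ∈ Finset.range t, ∏ j ∈ Finset.Icc (k + 2) n, (B (j - k) - A j))
          * (E n X A B t).det := by
  induction t with
  | zero => simp
  | succ t ih =>
      rw [ih, pass n X A B t, Finset.prod_range_succ]
      ring

lemma BAprod (n : ℕ) (A B : ℕ → R) :
    (∏ k ∈ Finset.range n, ∏ j ∈ Finset.Icc (k + 2) n, (B (j - k) - A j))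
      = ∏ p ∈ (Finset.Icc 2 n ×ˢ Finset.Icc 2 n).filter (fun p : ℕ × ℕ => p.1 ≤ p.2),
          (B p.1 - A p.2) := by
  rw [Finset.prod_sigma' (Finset.range n) (fun k => Finset.Icc (k + 2) n)
    (fun k j => B (j - k) - A j)]
  apply Finset.prod_nbij' (fun x => (x.2 - x.1, x.2)) (fun p => ⟨p.2 - p.1, p.2⟩)
  · rintro ⟨k, j⟩ hx
    simp only [Finset.mem_sigma, Finset.mem_range, Finset.mem_Icc] at hx
    simp only [Finset.mem_filter, Finset.mem_product, Finset.mem_Icc]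
    omega
  · rintro ⟨a, b⟩ hp
    simp only [Finset.mem_filter, Finset.mem_product, Finset.mem_Icc] at hp
    simp only [Finset.mem_sigma, Finset.mem_range, Finset.mem_Icc]
    omega
  · rintro ⟨k, j⟩ hx
    simp only [Finset.mem_sigma, Finset.mem_range, Finset.mem_Icc] at hx
    simp [show j - (j - k) = k by omega]
  · rintro ⟨a, b⟩ hp
    simp only [Finset.mem_filter, Finset.mem_product, Finset.mem_Icc] at hp
    simp [show b - (b - a) = a by omega]
  · rintro ⟨k, j⟩ hx
    rfl

lemma detG (n : ℕ) (X A : ℕ → R) :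
    (Matrix.of fun i j : Fin n =>
        ∏ m ∈ Finset.Icc (j.val + 2) n, (X (i.val + 1) + A m)).det
      = ∏ p ∈ Finset.univ.filter (fun p : Fin n × Fin n => p.1 < p.2),
          (X (p.1.val + 1) - X (p.2.val + 1)) := by
  nontriviality R
  set G : Matrix (Fin n) (Fin n) R :=
    Matrix.of fun i j : Fin n => ∏ m ∈ Finset.Icc (j.val + 2) n, (X (i.val + 1) + A m) with hG
  set p : Fin n → R[X] := fun j => ∏ m ∈ Finset.Icc (n + 1 - j.val) n, (Polynomial.X + C (A m))
    with hp
  set v : Fin n → R := fun i => X (n - i.val) with hvdef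
  have hmonic : ∀ j : Fin n, (p j).Monic := fun j =>
    Polynomial.monic_prod_of_monic _ _ fun m _ => Polynomial.monic_X_add_C (A m)
  have hdeg : ∀ j : Fin n, (p j).natDegree = j.val := by
    intro j
    rw [hp, Polynomial.natDegree_prod_of_monic _ _ (fun m _ => Polynomial.monic_X_add_C (A m))]
    simp only [Polynomial.natDegree_X_add_C, Finset.sum_const, smul_eq_mul, mul_one,
      Nat.card_Icc]
    omega
  have hsub : G.submatrix Fin.revPerm Fin.revPerm
      = Matrix.of fun i j : Fin n => (p j).eval (v i) := by
    ext i j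
    simp only [Matrix.submatrix_apply, hG, Matrix.of_apply, Fin.revPerm_apply, hp, hvdef,
      Polynomial.eval_prod, Polynomial.eval_add, Polynomial.eval_X, Polynomial.eval_C]
    have h1 : (Fin.rev j).val + 2 = n + 1 - j.val := by
      rw [Fin.val_rev]; omega
    have h2 : (Fin.rev i).val + 1 = n - i.val := by
      rw [Fin.val_rev]; omega
    rw [h1, h2]
  have hdet : G.det = (Matrix.vandermonde v).det := by
    rw [← Matrix.det_submatrix_equiv_self Fin.revPerm G, hsub,
      ← Matrix.det_eval_matrixOfPolynomials_eq_det_vandermonde v p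
        (fun j => hdeg j) hmonic]
  rw [hdet, Matrix.det_vandermonde,
    Finset.prod_sigma' Finset.univ (fun i : Fin n => Finset.Ioi i) (fun i j => v j - v i)]
  apply Finset.prod_nbij' (fun x => (Fin.rev x.2, Fin.rev x.1))
    (fun q => ⟨Fin.rev q.2, Fin.rev q.1⟩)
  · rintro ⟨i, j⟩ hx
    simp only [Finset.mem_sigma, Finset.mem_Ioi] at hx
    simp only [Finset.mem_filter, Finset.mem_univ, true_and]
    exact Fin.rev_lt_rev.mpr hx.2
  · rintro ⟨a, b⟩ hq
    simp only [Finset.mem_filter, Finset.mem_univ, true_and] at hq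
    simp only [Finset.mem_sigma, Finset.mem_univ, Finset.mem_Ioi, true_and]
    exact Fin.rev_lt_rev.mpr hq
  · rintro ⟨i, j⟩ _
    simp [Fin.rev_rev]
  · rintro ⟨a, b⟩ _
    simp [Fin.rev_rev]
  · rintro ⟨i, j⟩ hx
    simp only [hvdef]
    have h1 : (Fin.rev j).val + 1 = n - j.val := by rw [Fin.val_rev]; omega
    have h2 : (Fin.rev i).val + 1 = n - i.val := by rw [Fin.val_rev]; omega
    rw [h1, h2]

end Kratt

/-- Krattenthaler's determinant lemma: in any commutative ring (in particular for
indeterminates over `ℤ`), with `X_1,…,X_n`, `A_2,…,A_n`, `B_2,…,B_n`,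
`det[(X_i+A_n)⋯(X_i+A_{j+1})·(X_i+B_j)⋯(X_i+B_2)]_{i,j=1}^n
  = ∏_{1≤i<j≤n}(X_i-X_j) · ∏_{2≤i≤j≤n}(B_i-A_j)`. -/
theorem stmt_2 (R : Type*) [CommRing R] (n : ℕ) (X A B : ℕ → R) :
    Matrix.det (Matrix.of fun i j : Fin n =>
        (∏ m ∈ Finset.Icc (j.val + 2) n, (X (i.val + 1) + A m)) *
          ∏ m ∈ Finset.Icc 2 (j.val + 1), (X (i.val + 1) + B m)) =
      (∏ p ∈ Finset.univ.filter (fun p : Fin n × Fin n => p.1 < p.2),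
          (X (p.1.val + 1) - X (p.2.val + 1))) *
        ∏ p ∈ (Finset.Icc 2 n ×ˢ Finset.Icc 2 n).filter (fun p : ℕ × ℕ => p.1 ≤ p.2),
          (B p.1 - A p.2) := by
  have h0 : (Matrix.of fun i j : Fin n =>
        (∏ m ∈ Finset.Icc (j.val + 2) n, (X (i.val + 1) + A m)) *
          ∏ m ∈ Finset.Icc 2 (j.val + 1), (X (i.val + 1) + B m))
      = Kratt.E n X A B 0 := by
    ext i j
    simp [Kratt.E]
  have hend : Kratt.E n X A B n
      = Matrix.of fun i j : Fin n =>
          ∏ m ∈ Finset.Icc (j.val + 2) n, (X (i.val + 1) + A m) := by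
    ext i j
    simp only [Kratt.E, Matrix.of_apply]
    rw [Finset.Icc_eq_empty (show ¬ (2 ≤ j.val + 1 - n) by omega)]
    simp
  rw [h0, Kratt.chain n X A B n, hend, Kratt.detG n X A, Kratt.BAprod n A B, mul_comm]
end

section
/- For integers n ≥ 2 and N > K ≥ 1 with n = N-K+1, one has det[(t_i+1)(t_i+2)⋯(t_i+j-1)·(t_i+N-K+j+1)⋯(t_i+N)]_{i,j=1}^K = V(t_1,…,t_K)·(-1)^{K(K-1)/2}·∏_{i=1}^K (N-K+i-1)!/(N-K)!, as polynomials in t_1,…,t_K. -/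
open Finset Polynomial Matrix

lemma hIccRange (n : ℕ) (f : ℕ → ℂ) : ∏ i ∈ Icc 1 n, f i = ∏ j ∈ range n, f (j+1) := by
  rw [← Finset.Ico_add_one_right_eq_Icc, prod_Ico_eq_prod_range]
  simp [add_comm]

lemma prod_Icc_cast (n : ℕ) : ∏ m ∈ Icc 1 n, (m : ℂ) = (n.factorial : ℂ) := by
  rw [← Nat.cast_prod, ← Finset.Ico_add_one_right_eq_Icc, Finset.prod_Ico_id_eq_factorial]

lemma prod_Icc_shift (c lo hi : ℕ) (f : ℕ → ℂ) :
    ∏ m ∈ Icc (c + lo) (c + hi), f m = ∏ r ∈ Icc lo hi, f (c + r) := by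
  rw [← Finset.map_add_left_Icc, Finset.prod_map]
  rfl

lemma fact_mul_prod (a b : ℕ) (h : a ≤ b) :
    a.factorial * ∏ r ∈ Icc (a+1) b, r = b.factorial := by
  induction b with
  | zero => interval_cases a; simp
  | succ n ih =>
    rcases Nat.eq_or_lt_of_le h with rfl | h'
    · rw [Finset.Icc_eq_empty (by omega), prod_empty, mul_one]
    · have ha : a ≤ n := by omega
      rw [Finset.prod_Icc_succ_top (by omega), ← mul_assoc, ih ha, Nat.factorial_succ]; ring

lemma fact_div_eq (a b : ℕ) (h : a ≤ b) :
    ((b.factorial : ℂ) / (a.factorial : ℂ)) = ∏ r ∈ Icc (a+1) b, (r : ℂ) := by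
  rw [← Nat.cast_prod, div_eq_iff (by exact_mod_cast Nat.factorial_ne_zero a), ← Nat.cast_mul,
    mul_comm, fact_mul_prod a b h]

lemma neg_fact (n : ℕ) : ∏ m ∈ Icc 1 n, ((m : ℂ) - (n + 1)) = (-1)^n * (n.factorial : ℂ) := by
  have h1 : ∀ m ∈ Icc 1 n, ((m:ℂ) - (n+1)) = (-1) * ((n + 1 - m : ℕ) : ℂ) := by
    intro m hm
    simp only [mem_Icc] at hm
    have : (((n + 1 - m : ℕ)) : ℂ) = (n : ℂ) + 1 - m := by
      push_cast [Nat.cast_sub (by omega : m ≤ n + 1)]; ring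
    rw [this]; ring
  rw [Finset.prod_congr rfl h1, Finset.prod_mul_distrib, Finset.prod_const, Nat.card_Icc,
    Nat.add_sub_cancel]
  congr 1
  rw [hIccRange]
  have h2 : ∀ j ∈ range n, ((n + 1 - (j+1) : ℕ) : ℂ) = (((n - 1 - j) + 1 : ℕ) : ℂ) := by
    intro j hj; simp only [mem_range] at hj; congr 1; omega
  rw [Finset.prod_congr rfl h2, ← Nat.cast_prod,
    Finset.prod_range_reflect (fun j => j + 1) n, Finset.prod_range_add_one_eq_factorial]

lemma prod_Ioi_fin {K : ℕ} (i : Fin K) (f : ℕ → ℂ) :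
    ∏ j ∈ Finset.Ioi i, f j.val = ∏ m ∈ Icc (i.val + 1) (K - 1), f m := by
  rw [show Icc (i.val + 1) (K-1) = Ioc i.val (K-1) from Finset.Icc_add_one_left_eq_Ioc _ _,
    Finset.Ioc_sub_one_right_eq_Ioo, ← Fin.map_valEmbedding_Ioi, Finset.prod_map]
  rfl

lemma prod_pairs_eq {K : ℕ} (g : Fin K → Fin K → ℂ) :
    ∏ p ∈ Finset.univ.filter (fun p : Fin K × Fin K => p.1 < p.2), g p.1 p.2
      = ∏ i : Fin K, ∏ j ∈ Finset.Ioi i, g i j := by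
  rw [Finset.prod_sigma']
  exact Finset.prod_nbij' (i := fun (p : Fin K × Fin K) => (⟨p.1, p.2⟩ : (_ : Fin K) × Fin K))
    (j := fun (x : (_ : Fin K) × Fin K) => (x.1, x.2))
    (by simp [Finset.mem_Ioi]) (by simp [Finset.mem_Ioi]) (by simp) (by simp) (by simp)

/-- Vandermonde det vs the pair-product. -/
lemma vdm_pairs {K' : ℕ} (s : Fin (K'+1) → ℂ) :
    (Matrix.vandermonde s).det
      = (∏ p ∈ Finset.univ.filter (fun p : Fin (K'+1) × Fin (K'+1) => p.1 < p.2),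
          (s p.1 - s p.2)) * (-1)^((K'+1)*K'/2) := by
  rw [Matrix.det_vandermonde, prod_pairs_eq (fun i j => s i - s j)]
  have hrow : ∀ i : Fin (K'+1), ∏ j ∈ Finset.Ioi i, (s j - s i)
      = (-1:ℂ)^(K' - i.val) * ∏ j ∈ Finset.Ioi i, (s i - s j) := by
    intro i
    rw [Finset.prod_congr rfl (fun j _ => show s j - s i = (-1) * (s i - s j) by ring),
      Finset.prod_mul_distrib, Finset.prod_const, Fin.card_Ioi]
    norm_num
  rw [Finset.prod_congr rfl (fun i _ => hrow i), Finset.prod_mul_distrib]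
  rw [Finset.prod_pow_eq_pow_sum]
  rw [Fin.sum_univ_eq_sum_range (fun m => K' - m) (K'+1)]
  have hsum : ∑ i ∈ range (K'+1), (K' - i) = (K'+1)*K'/2 := by
    calc ∑ i ∈ range (K'+1), (K' - i) = ∑ i ∈ range (K'+1), (K'+1-1-i) :=
          Finset.sum_congr rfl (fun i _ => by omega)
    _ = ∑ i ∈ range (K'+1), i := Finset.sum_range_reflect (fun m => m) (K'+1)
    _ = (K'+1)*(K'+1-1)/2 := Finset.sum_range_id (K'+1)
    _ = (K'+1)*K'/2 := by norm_num
  rw [hsum]; ring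

/-- For `N > K ≥ 1` and `n = N-K+1 ≥ 2`:
`det[(t_i+1)⋯(t_i+j-1)·(t_i+N-K+j+1)⋯(t_i+N)]_{i,j=1}^K
  = V(t)·(-1)^{K(K-1)/2}·∏_{i=1}^K (N-K+i-1)!/(N-K)!`. -/
theorem stmt_3 (N K n : ℕ) (hK : 1 ≤ K) (hKN : K < N) (hn : n = N - K + 1) (hn2 : 2 ≤ n)
    (t : Fin K → ℂ) :
    Matrix.det (Matrix.of fun i j : Fin K =>
        (∏ m ∈ Finset.Icc 1 j.val, (t i + m)) *
          ∏ m ∈ Finset.Icc (N - K + j.val + 2) N, (t i + m)) =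
      (∏ p ∈ Finset.univ.filter (fun p : Fin K × Fin K => p.1 < p.2), (t p.1 - t p.2)) *
        (-1) ^ (K * (K - 1) / 2) *
        ∏ i ∈ Finset.Icc 1 K,
          ((Nat.factorial (N - K + i - 1) : ℂ) / (Nat.factorial (N - K) : ℂ)) := by
  obtain ⟨K', rfl⟩ : ∃ K', K = K' + 1 := ⟨K - 1, by omega⟩
  obtain ⟨a, rfl⟩ : ∃ a, N = K' + a + 2 := ⟨N - K' - 2, by omega⟩
  clear hn hn2 hK hKN
  have e2 : K' + a + 2 - (K' + 1) = a + 1 := by omega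
  have e1 : ∀ j : ℕ, a + 1 + j + 2 = a + j + 3 := fun j => by omega
  simp only [e2, e1, Nat.add_sub_cancel]
  -- the polynomials
  set p : Fin (K'+1) → ℂ[X] := fun j =>
    (∏ m ∈ Icc 1 j.val, (X + C (m:ℂ))) * ∏ m ∈ Icc (a + j.val + 3) (K'+a+2), (X + C (m:ℂ))
    with hp
  have hmon1 : ∀ j : Fin (K'+1), (∏ m ∈ Icc 1 j.val, (X + C (m:ℂ))).Monic :=
    fun j => monic_prod_of_monic _ _ (fun m _ => monic_X_add_C _)
  have hmon2 : ∀ j : Fin (K'+1), (∏ m ∈ Icc (a + j.val + 3) (K'+a+2), (X + C (m:ℂ))).Monic :=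
    fun j => monic_prod_of_monic _ _ (fun m _ => monic_X_add_C _)
  have hdeg : ∀ j, (p j).natDegree < K' + 1 := by
    intro j
    rw [hp]
    simp only []
    rw [(hmon1 j).natDegree_mul (hmon2 j),
      Polynomial.natDegree_prod_of_monic _ _ (fun m _ => monic_X_add_C _),
      Polynomial.natDegree_prod_of_monic _ _ (fun m _ => monic_X_add_C _)]
    simp only [Polynomial.natDegree_X_add_C, Finset.sum_const, smul_eq_mul, mul_one,
      Nat.card_Icc]
    have := j.isLt
    omega
  -- factorization through the vandermonde matrix
  have key : ∀ s : Fin (K'+1) → ℂ,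
      (Matrix.of fun i j : Fin (K'+1) =>
        (∏ m ∈ Icc 1 j.val, (s i + m)) * ∏ m ∈ Icc (a + j.val + 3) (K'+a+2), (s i + m)).det
      = (Matrix.vandermonde s).det * (Matrix.of fun k j : Fin (K'+1) => (p j).coeff k).det := by
    intro s
    have hM : (Matrix.of fun i j : Fin (K'+1) =>
        (∏ m ∈ Icc 1 j.val, (s i + m)) * ∏ m ∈ Icc (a + j.val + 3) (K'+a+2), (s i + m))
        = Matrix.of fun i j => (p j).eval (s i) := by
      ext i j
      simp [hp, Polynomial.eval_prod]
    rw [hM, ← Matrix.det_mul]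
    congr 1
    ext i j
    rw [Matrix.mul_apply, Matrix.of_apply, Polynomial.eval_eq_sum_range' (hdeg j),
      ← Fin.sum_univ_eq_sum_range (fun k => (p j).coeff k * s i ^ k) (K'+1)]
    exact Finset.sum_congr rfl fun k _ => by
      simp [Matrix.vandermonde_apply, mul_comm]
  -- evaluation point
  set ts : Fin (K'+1) → ℂ := fun i => -(i.val : ℂ) with hts
  set Mstar := Matrix.of fun i j : Fin (K'+1) =>
    (∏ m ∈ Icc 1 j.val, (ts i + m)) * ∏ m ∈ Icc (a + j.val + 3) (K'+a+2), (ts i + m)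
    with hMs
  set σ := finRotate (K'+1) with hσ
  have hrotval : ∀ i : Fin (K'+1), i ≠ Fin.last K' → (σ i).val = i.val + 1 := by
    intro i hi
    rw [hσ, finRotate_succ_apply, Fin.val_add_one]
    simp [hi]
  have hrotlast : σ (Fin.last K') = 0 := by
    rw [hσ, finRotate_succ_apply, Fin.last_add_one]
  have htri : (Mstar.submatrix σ id).BlockTriangular OrderDual.toDual := by
    intro i j hij
    have hij' : i < j := hij
    have hine : i ≠ Fin.last K' := by
      intro h
      have := j.isLt
      have hv : i.val < j.val := hij'
      rw [h] at hv
      simp only [Fin.val_last] at hv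
      omega
    have hv : (σ i).val = i.val + 1 := hrotval i hine
    have hvj : i.val + 1 ≤ j.val := hij'
    simp only [Matrix.submatrix_apply, id_eq, hMs, Matrix.of_apply]
    apply mul_eq_zero_of_left
    refine Finset.prod_eq_zero (Finset.mem_Icc.mpr ⟨by omega, hvj⟩ : i.val + 1 ∈ Icc 1 j.val) ?_
    rw [hts]
    simp only [hv]
    push_cast
    ring
  have hsign : ((Equiv.Perm.sign σ : ℤ) : ℂ) = (-1)^K' := by
    rw [hσ, sign_finRotate]
    push_cast
    ring
  have hMdet : Mstar.det = (-1:ℂ)^K' * ∏ i, Mstar (σ i) i := by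
    have hperm := Matrix.det_permute σ Mstar
    have hdiag := Matrix.det_of_lowerTriangular (Mstar.submatrix σ id) htri
    have h2 : ((-1:ℂ)^K') * ((-1:ℂ)^K') = 1 := by
      rw [← mul_pow]; norm_num
    have : ∏ i, Mstar (σ i) i = ((-1:ℂ)^K') * Mstar.det := by
      rw [← hsign, ← hperm, hdiag]
      exact Finset.prod_congr rfl fun i _ => rfl
    rw [this, ← mul_assoc, h2, one_mul]
  -- diagonal entries
  have hdiagval : ∏ i, Mstar (σ i) i
      = (∏ i0 ∈ range K', ((-1:ℂ)^i0 * (i0.factorial : ℂ)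
          * ∏ r ∈ Icc (a+2) (K'+a+1-i0), (r:ℂ))) * (K'.factorial : ℂ) := by
    rw [Fin.prod_univ_castSucc]
    congr 1
    · rw [← Fin.prod_univ_eq_prod_range (fun i0 => ((-1:ℂ)^i0 * (i0.factorial : ℂ)
        * ∏ r ∈ Icc (a+2) (K'+a+1-i0), (r:ℂ))) K']
      refine Finset.prod_congr rfl fun i _ => ?_
      have hne : (Fin.castSucc i) ≠ Fin.last K' := by
        intro h
        have := i.isLt
        have : (Fin.castSucc i).val = K' := by rw [h]; rfl
        simp only [Fin.coe_castSucc] at this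
        omega
      have hv : (σ (Fin.castSucc i)).val = i.val + 1 := by
        rw [hrotval _ hne]; rfl
      have hi0 : i.val < K' := i.isLt
      simp only [hMs, Matrix.of_apply, hts, hv, Fin.coe_castSucc]
      congr 1
      · -- first product
        rw [← neg_fact i.val]
        refine Finset.prod_congr rfl fun m hm => ?_
        push_cast
        ring
      · -- second product
        have e : Icc (a + i.val + 3) (K'+a+2)
            = Icc ((i.val+1) + (a+2)) ((i.val+1) + (K'+a+1-i.val)) := by
          congr 1 <;> omega
        rw [e, prod_Icc_shift]
        refine Finset.prod_congr rfl fun r hr => ?_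
        push_cast
        ring
    · have hv0 : (σ (Fin.last K')).val = 0 := by rw [hrotlast]; rfl
      simp only [hMs, Matrix.of_apply, hts, hv0, Fin.val_last]
      rw [Finset.Icc_eq_empty (show ¬ (a + K' + 3 ≤ K'+a+2) by omega), Finset.prod_empty,
        mul_one]
      rw [← prod_Icc_cast K']
      refine Finset.prod_congr rfl fun m hm => ?_
      push_cast
      ring
  -- vandermonde at the evaluation point
  have hW : (Matrix.vandermonde ts).det
      = ∏ m ∈ range (K'+1), ((-1:ℂ)^m * (m.factorial : ℂ)) := by
    rw [Matrix.det_vandermonde]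
    have hrow : ∀ i : Fin (K'+1), ∏ j ∈ Finset.Ioi i, (ts j - ts i)
        = (-1:ℂ)^(K' - i.val) * ((K' - i.val).factorial : ℂ) := by
      intro i
      have h1 : ∀ j ∈ Finset.Ioi i, ts j - ts i
          = (fun m : ℕ => (-1:ℂ) * (-(i.val:ℂ) + m)) j.val := by
        intro j _
        simp only [hts]
        ring
      rw [Finset.prod_congr rfl h1, prod_Ioi_fin i (fun m => (-1:ℂ) * (-(i.val:ℂ) + m))]
      simp only [Nat.add_sub_cancel]
      rw [Finset.prod_mul_distrib, Finset.prod_const, Nat.card_Icc]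
      have e : Icc (i.val + 1) K' = Icc (i.val + 1) (i.val + (K' - i.val)) := by
        congr 1
        omega
      rw [e, prod_Icc_shift i.val 1 (K' - i.val)]
      rw [Finset.prod_congr rfl
        (fun r hr => show -((i.val:ℕ):ℂ) + ((i.val + r : ℕ):ℂ) = (r:ℂ) by push_cast; ring)]
      rw [prod_Icc_cast]
      congr 2
      omega
    rw [Finset.prod_congr rfl (fun i _ => hrow i)]
    rw [Fin.prod_univ_eq_prod_range (fun m => (-1:ℂ)^(K'-m) * ((K'-m).factorial : ℂ)) (K'+1)]
    calc ∏ m ∈ range (K'+1), ((-1:ℂ)^(K'-m) * ((K'-m).factorial : ℂ))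
        = ∏ m ∈ range (K'+1), ((-1:ℂ)^(K'+1-1-m) * ((K'+1-1-m).factorial : ℂ)) :=
          Finset.prod_congr rfl (fun m _ => by norm_num)
      _ = ∏ m ∈ range (K'+1), ((-1:ℂ)^m * (m.factorial : ℂ)) :=
          Finset.prod_range_reflect (fun m => (-1:ℂ)^m * (m.factorial : ℂ)) (K'+1)
  have hWne : (Matrix.vandermonde ts).det ≠ 0 := by
    rw [hW]
    refine Finset.prod_ne_zero_iff.mpr fun m _ => mul_ne_zero (pow_ne_zero _ (by norm_num)) ?_
    exact_mod_cast Nat.factorial_ne_zero m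
  -- reindex the RHS constant
  have hc : ∏ i ∈ Icc 1 (K'+1), (((a+1+i-1).factorial : ℂ) / ((a+1).factorial : ℂ))
      = ∏ j ∈ range (K'+1), ∏ r ∈ Icc (a+2) (a+1+j), (r:ℂ) := by
    rw [hIccRange (K'+1) (fun i => ((a+1+i-1).factorial : ℂ) / ((a+1).factorial : ℂ))]
    refine Finset.prod_congr rfl fun j hj => ?_
    have e : a+1+(j+1)-1 = a+1+j := by omega
    rw [e, fact_div_eq (a+1) (a+1+j) (by omega)]
  -- the scalar identity
  have hscalar : (-1:ℂ)^K' * ((∏ i0 ∈ range K', ((-1:ℂ)^i0 * (i0.factorial:ℂ)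
        * ∏ r ∈ Icc (a+2) (K'+a+1-i0), (r:ℂ))) * (K'.factorial:ℂ))
      = (∏ m ∈ range (K'+1), ((-1:ℂ)^m * (m.factorial:ℂ)))
        * ∏ j ∈ range (K'+1), ∏ r ∈ Icc (a+2) (a+1+j), (r:ℂ) := by
    rw [Finset.prod_range_succ (fun m => (-1:ℂ)^m * (m.factorial:ℂ)) K',
      Finset.prod_range_succ' (fun j => ∏ r ∈ Icc (a+2) (a+1+j), (r:ℂ)) K']
    rw [show (∏ r ∈ Icc (a+2) (a+1+0), (r:ℂ)) = 1 from by
      rw [Finset.Icc_eq_empty (by omega), Finset.prod_empty]]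
    have hrefl : ∏ j ∈ range K', ∏ r ∈ Icc (a+2) (a+1+(j+1)), (r:ℂ)
        = ∏ i0 ∈ range K', ∏ r ∈ Icc (a+2) (K'+a+1-i0), (r:ℂ) := by
      rw [← Finset.prod_range_reflect (fun j => ∏ r ∈ Icc (a+2) (a+1+(j+1)), (r:ℂ)) K']
      refine Finset.prod_congr rfl fun j hj => ?_
      simp only [mem_range] at hj
      have e : a+1+(K'-1-j+1) = K'+a+1-j := by omega
      rw [e]
    rw [hrefl, Finset.prod_mul_distrib]
    ring
  -- determine the determinant of the coefficient matrix
  have hDc : (Matrix.of fun k j : Fin (K'+1) => (p j).coeff k).det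
      = ∏ i ∈ Icc 1 (K'+1), (((a+1+i-1).factorial : ℂ) / ((a+1).factorial : ℂ)) := by
    have h1 := key ts
    rw [← hMs] at h1
    apply mul_left_cancel₀ hWne
    rw [← h1, hMdet, hdiagval, hc, hW]
    exact hscalar
  rw [key t, hDc, vdm_pairs t]
end

section
/- Weyl's dimension formula for U(N): the number of triangular Gelfand–Tsetlin schemes with top row ν = (ν_1 ≥ … ≥ ν_N) ∈ ℤ^N equals ∏_{1≤i<j≤N} (ν_i - ν_j + j - i)/(j - i). -/
/-- A triangular Gelfand–Tsetlin scheme with `N` rows and top row `ν`: an array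
`f j i` (`0 ≤ i ≤ j < N`, row `j` having `j+1` entries) whose top row (the row with
`N` entries) equals `ν` and whose consecutive rows interlace:
`λ^{(j+1)}_{i+1} ≤ λ^{(j)}_i ≤ λ^{(j+1)}_i`. -/
def IsGTScheme (N : ℕ) (ν : Fin N → ℤ) (f : (j : Fin N) → Fin (j.val + 1) → ℤ) : Prop :=
  (∀ (j : Fin N) (h : j.val + 1 = N) (i : Fin (j.val + 1)), f j i = ν (Fin.cast h i)) ∧
    (∀ (j : ℕ) (hj : j + 1 < N) (i : Fin (j + 1)),
      f ⟨j + 1, hj⟩ i.succ ≤ f ⟨j, Nat.lt_of_succ_lt hj⟩ i ∧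
        f ⟨j, Nat.lt_of_succ_lt hj⟩ i ≤ f ⟨j + 1, hj⟩ i.castSucc)

/-- `Dim_N ν`: the number of triangular Gelfand–Tsetlin schemes with top row `ν`. -/
noncomputable def GTDim (N : ℕ) (ν : Fin N → ℤ) : ℕ :=
  Nat.card { f : (j : Fin N) → Fin (j.val + 1) → ℤ // IsGTScheme N ν f }


open Finset Polynomial

abbrev GTset (N : ℕ) (ν : Fin N → ℤ) := { f : (j : Fin N) → Fin (j.val + 1) → ℤ // IsGTScheme N ν f }

noncomputable def gtBox (N : ℕ) (ν : Fin (N + 1) → ℤ) : Finset (Fin N → ℤ) :=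
  Fintype.piFinset fun i => Finset.Icc (ν i.succ) (ν i.castSucc)

lemma apply_congr {M : ℕ} (f : (j : Fin M) → Fin (j.val + 1) → ℤ) {a b : ℕ}
    {ha : a < M} {hb : b < M} (h : a = b) {i : Fin (a + 1)} {i' : Fin (b + 1)}
    (hi : i.val = i'.val) : f ⟨a, ha⟩ i = f ⟨b, hb⟩ i' := by
  subst h; cases Fin.ext hi; rfl

lemma gtdim_zero (ν : Fin 0 → ℤ) : GTDim 0 ν = 1 := by
  rw [GTDim, Nat.card_eq_one_iff_unique]
  constructor
  · constructor
    intro f g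
    apply Subtype.ext
    funext j
    exact j.elim0
  · exact ⟨⟨fun j => j.elim0, fun j => j.elim0, fun j hj => by omega⟩⟩

lemma gtdim_one (ν : Fin 1 → ℤ) : GTDim 1 ν = 1 := by
  rw [GTDim, Nat.card_eq_one_iff_unique]
  constructor
  · constructor
    intro f g
    apply Subtype.ext
    funext j i
    rw [f.2.1 j (by omega) i, g.2.1 j (by omega) i]
  · refine ⟨⟨fun j i => ν ⟨i.val, by have := i.isLt; have := j.isLt; omega⟩, ?_, ?_⟩⟩
    · intro j h i
      congr 1
    · intro j hj; omega


def gtEquiv (M : ℕ) (ν : Fin (M + 2) → ℤ) :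
    GTset (M + 2) ν ≃ Σ μ : gtBox (M + 1) ν, GTset (M + 1) (μ : Fin (M + 1) → ℤ) where
  toFun f :=
    ⟨⟨fun i => f.1 ⟨M, by omega⟩ i, by
        rw [gtBox, Fintype.mem_piFinset]
        intro i
        rw [Finset.mem_Icc]
        have h2 := f.2.2 M (by omega) i
        have ht1 := f.2.1 ⟨M + 1, by omega⟩ rfl i.succ
        have ht2 := f.2.1 ⟨M + 1, by omega⟩ rfl i.castSucc
        constructor
        · refine le_trans (le_of_eq ?_) h2.1
          rw [ht1]; congr 1
        · refine le_trans h2.2 (le_of_eq ?_)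
          rw [ht2]; congr 1⟩,
     ⟨fun j i => f.1 ⟨j.val, by have := j.isLt; omega⟩ i, by
        constructor
        · intro j h i
          show f.1 _ _ = _
          refine apply_congr f.1 (show j.val = M by omega) ?_
          rfl
        · intro j hj i
          exact f.2.2 j (by omega) i⟩⟩
  invFun p :=
    ⟨fun j i => if h : j.val < M + 1 then p.2.1 ⟨j.val, h⟩ i
      else ν ⟨i.val, by have := i.isLt; have := j.isLt; omega⟩, by
      constructor
      · intro j h i
        dsimp only
        rw [dif_neg (by omega)]
        exact congrArg ν (Fin.ext rfl)
      · intro j hj i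
        dsimp only
        by_cases hjM : j + 1 < M + 1
        · simp only [dif_pos hjM, dif_pos (show j < M + 1 by omega)]
          exact p.2.2.2 j hjM i
        · have hjM' : (j : ℕ) < M + 1 := by omega
          have hj1 : j + 1 = M + 1 := by omega
          simp only [dif_neg hjM, dif_pos hjM']
          have hmem := (Fintype.mem_piFinset).1 p.1.2 (Fin.cast hj1 i)
          rw [Finset.mem_Icc] at hmem
          have htop := p.2.2.1 ⟨j, hjM'⟩ hj1 i
          rw [htop]
          exact ⟨hmem.1, hmem.2⟩⟩
  left_inv f := by
    apply Subtype.ext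
    funext j i
    dsimp only
    by_cases h : (j : ℕ) < M + 1
    · rw [dif_pos h]
    · rw [dif_neg h]
      rw [f.2.1 j (by have := j.isLt; omega) i]
      exact (congrArg ν (Fin.ext rfl)).symm
  right_inv := by
    rintro ⟨⟨μ, hμ⟩, g, hg⟩
    have e1 : (fun i : Fin (M + 1) =>
        (fun (j : Fin (M + 2)) (i : Fin (j.val + 1)) =>
          if h : j.val < M + 1 then g ⟨j.val, h⟩ i
          else ν ⟨i.val, by have := i.isLt; have := j.isLt; omega⟩) ⟨M, by omega⟩ i) = μ := by
      funext i
      dsimp only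
      rw [dif_pos (by omega)]
      exact (hg.1 ⟨M, by omega⟩ rfl i).trans (congrArg μ (Fin.ext rfl))
    subst e1
    apply Sigma.ext
    · rfl
    · apply heq_of_eq
      apply Subtype.ext
      funext j i
      dsimp only
      rw [dif_pos (by have := j.isLt; omega)]


lemma gtFinite : ∀ (N : ℕ) (ν : Fin N → ℤ), Finite (GTset N ν) := by
  intro N
  induction N with
  | zero => intro ν; infer_instance
  | succ N IH =>
    cases N with
    | zero =>
      intro ν
      have : Subsingleton (GTset 1 ν) := by
        constructor
        intro f g
        apply Subtype.ext
        funext j i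
        rw [f.2.1 j (by omega) i, g.2.1 j (by omega) i]
      exact Finite.of_subsingleton
    | succ M =>
      intro ν
      haveI : ∀ μ : {x // x ∈ gtBox (M + 1) ν}, Finite (GTset (M + 1) (μ : Fin (M + 1) → ℤ)) :=
        fun μ => IH _
      exact Finite.of_equiv _ (gtEquiv M ν).symm

lemma gtdim_rec (M : ℕ) (ν : Fin (M + 2) → ℤ) :
    GTDim (M + 2) ν = ∑ μ ∈ gtBox (M + 1) ν, GTDim (M + 1) μ := by
  haveI : ∀ μ : {x // x ∈ gtBox (M + 1) ν}, Finite (GTset (M + 1) (μ : Fin (M + 1) → ℤ)) :=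
    fun μ => gtFinite _ _
  letI : ∀ μ : {x // x ∈ gtBox (M + 1) ν}, Fintype (GTset (M + 1) (μ : Fin (M + 1) → ℤ)) :=
    fun μ => Fintype.ofFinite _
  rw [GTDim, Nat.card_congr (gtEquiv M ν), Nat.card_eq_fintype_card, Fintype.card_sigma,
    ← Finset.sum_coe_sort (gtBox (M + 1) ν) (fun μ => GTDim (M + 1) μ)]
  congr 1
  funext μ
  rw [GTDim, Nat.card_eq_fintype_card]

def pairemb1 (m : ℕ) : (Σ _ : Fin m, Fin m) ↪ Fin m × Fin m where
  toFun q := (q.1, q.2)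
  inj' := by
    rintro ⟨a, b⟩ ⟨c, d⟩ h
    simp only [Prod.mk.injEq] at h
    obtain ⟨rfl, rfl⟩ := h
    rfl

def pairemb2 (m : ℕ) : (Σ _ : Fin m, Fin m) ↪ Fin m × Fin m where
  toFun q := (q.2, q.1)
  inj' := by
    rintro ⟨a, b⟩ ⟨c, d⟩ h
    simp only [Prod.mk.injEq] at h
    obtain ⟨rfl, rfl⟩ := h
    rfl

lemma filter_eq_sigmaIoi (m : ℕ) :
    (univ.filter (fun p : Fin m × Fin m => p.1 < p.2)) =
      ((univ : Finset (Fin m)).sigma fun i => Ioi i).map (pairemb1 m) := by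
  ext ⟨a, b⟩
  simp only [mem_filter, mem_univ, true_and, mem_map, mem_sigma, mem_Ioi, pairemb1,
    Function.Embedding.coeFn_mk]
  constructor
  · intro h; exact ⟨⟨a, b⟩, h, rfl⟩
  · rintro ⟨⟨c, d⟩, h, he⟩
    obtain ⟨rfl, rfl⟩ : c = a ∧ d = b := by
      exact Prod.ext_iff.1 he
    exact h

lemma filter_eq_sigmaIio (m : ℕ) :
    (univ.filter (fun p : Fin m × Fin m => p.1 < p.2)) =
      ((univ : Finset (Fin m)).sigma fun j => Iio j).map (pairemb2 m) := by
  ext ⟨a, b⟩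
  simp only [mem_filter, mem_univ, true_and, mem_map, mem_sigma, mem_Iio, pairemb2,
    Function.Embedding.coeFn_mk]
  constructor
  · intro h; exact ⟨⟨b, a⟩, h, rfl⟩
  · rintro ⟨⟨c, d⟩, h, he⟩
    obtain ⟨rfl, rfl⟩ : d = a ∧ c = b := by
      exact Prod.ext_iff.1 he
    exact h

lemma pair_prod_Ioi (m : ℕ) (g : Fin m → Fin m → ℚ) :
    ∏ p ∈ univ.filter (fun p : Fin m × Fin m => p.1 < p.2), g p.1 p.2 =
      ∏ i : Fin m, ∏ j ∈ Ioi i, g i j := by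
  rw [filter_eq_sigmaIoi, Finset.prod_map, Finset.prod_sigma]
  rfl

lemma pair_prod_Iio (m : ℕ) (g : Fin m → Fin m → ℚ) :
    ∏ p ∈ univ.filter (fun p : Fin m × Fin m => p.1 < p.2), g p.1 p.2 =
      ∏ j : Fin m, ∏ i ∈ Iio j, g i j := by
  rw [filter_eq_sigmaIio, Finset.prod_map, Finset.prod_sigma]
  rfl

lemma pair_card (m : ℕ) :
    (univ.filter (fun p : Fin m × Fin m => p.1 < p.2)).card = ∑ j : Fin m, j.val := by
  rw [filter_eq_sigmaIio, Finset.card_map, Finset.card_sigma]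
  exact Finset.sum_congr rfl fun j _ => Fin.card_Iio j

lemma prodneg {α : Type*} (s : Finset α) (f : α → ℚ) :
    ∏ p ∈ s, (-f p) = (-1) ^ s.card * ∏ p ∈ s, f p := by
  rw [Finset.prod_congr rfl (fun p _ => (neg_one_mul (f p)).symm), Finset.prod_mul_distrib,
    Finset.prod_const]

lemma factq (n : ℕ) : ∏ k ∈ range n, ((n : ℚ) - k) = (Nat.factorial n : ℚ) := by
  induction n with
  | zero => simp
  | succ n IH =>
    rw [Finset.prod_range_succ']
    have h1 : ∀ x ∈ range n, ((n + 1 : ℕ) : ℚ) - ((x + 1 : ℕ) : ℚ) = (n : ℚ) - x := by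
      intro x _; push_cast; ring
    rw [Finset.prod_congr rfl h1, IH]
    push_cast [Nat.factorial_succ]
    ring

noncomputable def Pp (j : ℕ) : ℚ[X] := ∏ k ∈ range j, (X + C ((k : ℚ) + 1))

noncomputable def Rp (j : ℕ) : ℚ[X] := ∏ k ∈ range (j + 1), (X + C (k : ℚ))

lemma Pp_monic (j : ℕ) : (Pp j).Monic :=
  monic_prod_of_monic _ _ fun k _ => monic_X_add_C _

lemma Rp_monic (j : ℕ) : (Rp j).Monic :=
  monic_prod_of_monic _ _ fun k _ => monic_X_add_C _

lemma Pp_natDegree (j : ℕ) : (Pp j).natDegree = j := by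
  rw [Pp, natDegree_prod_of_monic _ _ fun k _ => monic_X_add_C _,
    Finset.sum_congr rfl fun k (_ : k ∈ range j) => natDegree_X_add_C ((k : ℚ) + 1)]
  simp

lemma Rp_natDegree (j : ℕ) : (Rp j).natDegree = j + 1 := by
  rw [Rp, natDegree_prod_of_monic _ _ fun k _ => monic_X_add_C _,
    Finset.sum_congr rfl fun k (_ : k ∈ range (j + 1)) => natDegree_X_add_C ((k : ℚ))]
  simp

lemma Pp_eval (j : ℕ) (s : ℚ) : (Pp j).eval s = ∏ k ∈ range j, (s + k + 1) := by
  rw [Pp, eval_prod]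
  exact Finset.prod_congr rfl fun k _ => by simp [add_assoc]

lemma Rp_eval (j : ℕ) (s : ℚ) : (Rp j).eval s = ∏ k ∈ range (j + 1), (s + k) := by
  rw [Rp, eval_prod]
  exact Finset.prod_congr rfl fun k _ => by simp

lemma Pp_diff (j : ℕ) (s : ℚ) :
    (Pp (j + 1)).eval s - (Pp (j + 1)).eval (s - 1) = ((j : ℚ) + 1) * (Pp j).eval s := by
  rw [Pp_eval, Pp_eval, Pp_eval, Finset.prod_range_succ, Finset.prod_range_succ']
  have h1 : ∀ x ∈ range j, (s - 1 + ((x + 1 : ℕ) : ℚ) + 1) = s + x + 1 := by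
    intro x _; push_cast; ring
  rw [Finset.prod_congr rfl h1]
  push_cast
  ring

lemma Icc_int_succ (a b : ℤ) (h : a - 1 ≤ b) :
    Finset.Icc a (b + 1) = insert (b + 1) (Finset.Icc a b) := by
  ext t
  simp only [Finset.mem_Icc, Finset.mem_insert]
  omega

lemma myind (m : ℤ) (P : ℤ → Prop) (h0 : P m) (h1 : ∀ n, m ≤ n → P n → P (n + 1)) :
    ∀ n : ℤ, m ≤ n → P n := by
  intro n hn
  obtain ⟨k, rfl⟩ : ∃ k : ℕ, n = m + k := ⟨(n - m).toNat, by omega⟩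
  clear hn
  induction k with
  | zero => simpa using h0
  | succ k IH =>
    have he : (m + ((k + 1 : ℕ) : ℤ)) = (m + k) + 1 := by push_cast; ring
    rw [he]
    exact h1 _ (by omega) IH

lemma tele (j : ℕ) (c : ℚ) (a : ℤ) : ∀ b : ℤ, a - 1 ≤ b →
    ((j : ℚ) + 1) * ∑ t ∈ Finset.Icc a b, (Pp j).eval ((t : ℚ) + c) =
      (Pp (j + 1)).eval ((b : ℚ) + c) - (Pp (j + 1)).eval ((a : ℚ) - 1 + c) := by
  refine myind (a - 1) _ ?_ ?_
  · rw [Finset.Icc_eq_empty (by omega)]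
    push_cast
    simp
  · intro b hb IH
    rw [Icc_int_succ a b (by omega), Finset.sum_insert (by simp), mul_add, IH]
    have hd := Pp_diff j (((b : ℚ) + 1) + c)
    push_cast
    rw [show ((b : ℚ) + 1 + c - 1) = (b : ℚ) + c by ring] at hd
    linarith [hd]

noncomputable def xqv (n : ℕ) (ν : Fin (n + 1) → ℤ) : Fin (n + 1) → ℚ :=
  fun i => (ν i : ℚ) + ((n : ℚ) - (i.val : ℚ))

noncomputable def Amat (n : ℕ) (μ : Fin n → ℤ) : Matrix (Fin n) (Fin n) ℚ :=
  Matrix.of fun i j => (Pp j.val).eval ((μ i : ℚ) + ((n : ℚ) - 1 - (i.val : ℚ)))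

noncomputable def Bmat (n : ℕ) (ν : Fin (n + 1) → ℤ) : Matrix (Fin n) (Fin n) ℚ :=
  Matrix.of fun i j => ∑ t ∈ Finset.Icc (ν i.succ) (ν i.castSucc),
    (Pp j.val).eval ((t : ℚ) + ((n : ℚ) - 1 - (i.val : ℚ)))

noncomputable def Cmat (n : ℕ) (ν : Fin (n + 1) → ℤ) : Matrix (Fin n) (Fin n) ℚ :=
  Matrix.of fun i j => (Rp j.val).eval (xqv n ν i.castSucc) - (Rp j.val).eval (xqv n ν i.succ)

noncomputable def phip (n : ℕ) : Fin (n + 1) → ℚ[X] :=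
  fun j => Fin.cases 1 (fun j' : Fin n => Rp j'.val) j

noncomputable def Dmat (n : ℕ) (ν : Fin (n + 1) → ℤ) : Matrix (Fin (n + 1)) (Fin (n + 1)) ℚ :=
  Matrix.of fun i j => (phip n j).eval (xqv n ν i)

def Lmat (n : ℕ) : Matrix (Fin (n + 1)) (Fin (n + 1)) ℚ :=
  Matrix.of fun i j => if i = j then 1 else if j.val = i.val + 1 then -1 else 0

noncomputable def Emat (n : ℕ) (ν : Fin (n + 1) → ℤ) : Matrix (Fin (n + 1)) (Fin (n + 1)) ℚ :=
  Matrix.of fun i k => Dmat n ν i k -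
    (if h : i.val + 1 < n + 1 then Dmat n ν ⟨i.val + 1, h⟩ k else 0)

lemma detA (n : ℕ) (μ : Fin n → ℤ) :
    (Amat n μ).det = ∏ i : Fin n, ∏ j ∈ Finset.Ioi i,
      (((μ j : ℚ) + ((n : ℚ) - 1 - (j.val : ℚ))) - ((μ i : ℚ) + ((n : ℚ) - 1 - (i.val : ℚ)))) := by
  rw [Amat, ← Matrix.det_eval_matrixOfPolynomials_eq_det_vandermonde
      (fun i => (μ i : ℚ) + ((n : ℚ) - 1 - (i.val : ℚ))) (fun j : Fin n => Pp j.val)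
      (fun j => Pp_natDegree j.val) (fun j => Pp_monic j.val),
    Matrix.det_vandermonde]

lemma phip_deg (n : ℕ) (j : Fin (n + 1)) : (phip n j).natDegree = j.val := by
  induction j using Fin.cases with
  | zero => simp [phip]
  | succ j' => simp [phip, Rp_natDegree]

lemma phip_monic (n : ℕ) (j : Fin (n + 1)) : (phip n j).Monic := by
  induction j using Fin.cases with
  | zero => simpa [phip] using monic_one
  | succ j' => simpa [phip] using Rp_monic j'.val

lemma detD (n : ℕ) (ν : Fin (n + 1) → ℤ) :
    (Dmat n ν).det = ∏ i : Fin (n + 1), ∏ j ∈ Finset.Ioi i, (xqv n ν j - xqv n ν i) := by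
  rw [Dmat, ← Matrix.det_eval_matrixOfPolynomials_eq_det_vandermonde
      (xqv n ν) (phip n) (phip_deg n) (phip_monic n), Matrix.det_vandermonde]

lemma detL (n : ℕ) : (Lmat n).det = 1 := by
  have ht : (Lmat n).BlockTriangular id := by
    intro i j h
    simp only [id] at h
    have h1 : ¬(i = j) := by intro he; subst he; exact lt_irrefl _ h
    have h2 : ¬(j.val = i.val + 1) := by have := h; omega
    simp [Lmat, h1, h2]
  rw [Matrix.det_of_upperTriangular ht]
  simp [Lmat]

lemma LD_eq (n : ℕ) (ν : Fin (n + 1) → ℤ) : Lmat n * Dmat n ν = Emat n ν := by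
  ext i k
  rw [Matrix.mul_apply]
  simp only [Emat, Matrix.of_apply]
  by_cases hi : i.val + 1 < n + 1
  · have hne : (⟨i.val + 1, hi⟩ : Fin (n + 1)) ≠ i := by
      intro he
      have := congrArg Fin.val he
      simp at this
    have hstep : ∀ j : Fin (n + 1), Lmat n i j * Dmat n ν j k =
        (if j = i then Dmat n ν j k else 0) +
          (if j = (⟨i.val + 1, hi⟩ : Fin (n + 1)) then -Dmat n ν j k else 0) := by
      intro j
      by_cases h1 : j = i
      · rw [h1, if_pos rfl, if_neg (Ne.symm hne)]
        have : Lmat n i i = 1 := by simp [Lmat]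
        rw [this, one_mul, add_zero]
      · by_cases h2 : j = (⟨i.val + 1, hi⟩ : Fin (n + 1))
        · rw [h2, if_neg hne, if_pos rfl]
          have : Lmat n i (⟨i.val + 1, hi⟩ : Fin (n + 1)) = -1 := by
            have h3 : ¬(i = (⟨i.val + 1, hi⟩ : Fin (n + 1))) := fun he => hne he.symm
            simp [Lmat, h3]
          rw [this, zero_add, neg_one_mul]
        · have h3 : ¬(i = j) := fun he => h1 he.symm
          have h4 : ¬(j.val = i.val + 1) := by
            intro hv
            exact h2 (Fin.ext hv)
          have : Lmat n i j = 0 := by simp [Lmat, h3, h4]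
          rw [this, zero_mul, if_neg h1, if_neg h2, add_zero]
    rw [Finset.sum_congr rfl (fun j _ => hstep j), Finset.sum_add_distrib,
      Finset.sum_ite_eq' Finset.univ, Finset.sum_ite_eq' Finset.univ, dif_pos hi]
    simp [sub_eq_add_neg]
  · have hstep : ∀ j : Fin (n + 1), Lmat n i j * Dmat n ν j k =
        (if j = i then Dmat n ν j k else 0) := by
      intro j
      by_cases h1 : j = i
      · rw [h1, if_pos rfl]
        have : Lmat n i i = 1 := by simp [Lmat]
        rw [this, one_mul]
      · have h3 : ¬(i = j) := fun he => h1 he.symm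
        have h4 : ¬(j.val = i.val + 1) := by have := j.isLt; omega
        have : Lmat n i j = 0 := by simp [Lmat, h3, h4]
        rw [this, zero_mul, if_neg h1]
    rw [Finset.sum_congr rfl (fun j _ => hstep j), Finset.sum_ite_eq' Finset.univ, dif_neg hi]
    simp

lemma Dmat_col0 (n : ℕ) (ν : Fin (n + 1) → ℤ) (i : Fin (n + 1)) : Dmat n ν i 0 = 1 := by
  simp [Dmat, phip]

lemma Emat_submatrix (n : ℕ) (ν : Fin (n + 1) → ℤ) :
    (Emat n ν).submatrix (Fin.last n).succAbove Fin.succ = Cmat n ν := by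
  ext i j
  rw [Matrix.submatrix_apply, Fin.succAbove_last]
  simp only [Emat, Cmat, Matrix.of_apply]
  have hi : (i.castSucc.val) + 1 < n + 1 := by
    have := i.isLt
    simp
  rw [dif_pos hi]
  have h1 : Dmat n ν i.castSucc j.succ = (Rp j.val).eval (xqv n ν i.castSucc) := by
    simp [Dmat, phip]
  have h2 : Dmat n ν ⟨i.castSucc.val + 1, hi⟩ j.succ = (Rp j.val).eval (xqv n ν i.succ) := by
    have he : (⟨i.castSucc.val + 1, hi⟩ : Fin (n + 1)) = i.succ := by
      apply Fin.ext
      simp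
    rw [he]
    simp [Dmat, phip]
  rw [h1, h2]

lemma detE (n : ℕ) (ν : Fin (n + 1) → ℤ) :
    (Emat n ν).det = (-1) ^ n * (Cmat n ν).det := by
  rw [Matrix.det_succ_column_zero]
  rw [Finset.sum_eq_single (Fin.last n)]
  · have hE : Emat n ν (Fin.last n) 0 = 1 := by
      simp only [Emat, Matrix.of_apply]
      rw [dif_neg (by simp), Dmat_col0]
      ring
    rw [hE, Emat_submatrix]
    simp [Fin.val_last]
  · intro i _ hne
    have hi : i.val + 1 < n + 1 := by
      have := Fin.val_lt_last hne
      omega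
    have hE : Emat n ν i 0 = 0 := by
      simp only [Emat, Matrix.of_apply]
      rw [dif_pos hi, Dmat_col0, Dmat_col0]
      ring
    simp [hE]
  · intro h
    exact absurd (Finset.mem_univ _) h

lemma detC_eq (n : ℕ) (ν : Fin (n + 1) → ℤ) :
    (Cmat n ν).det = (-1) ^ n * (Dmat n ν).det := by
  have h1 : (Emat n ν).det = (Dmat n ν).det := by
    rw [← LD_eq, Matrix.det_mul, detL, one_mul]
  have h2 := detE n ν
  rw [h1] at h2
  have h3 : ((-1 : ℚ) ^ n) * ((-1 : ℚ) ^ n) = 1 := by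
    rw [← mul_pow]
    norm_num
  calc (Cmat n ν).det = (((-1 : ℚ) ^ n) * ((-1 : ℚ) ^ n)) * (Cmat n ν).det := by rw [h3, one_mul]
    _ = (-1) ^ n * (Dmat n ν).det := by rw [mul_assoc, ← h2]

lemma PR_eval (j : ℕ) (s : ℚ) : (Pp (j + 1)).eval (s - 1) = (Rp j).eval s := by
  rw [Pp_eval, Rp_eval]
  exact Finset.prod_congr rfl fun k _ => by ring

lemma B_eq_C (n : ℕ) (ν : Fin (n + 1) → ℤ) (hν : ∀ i : Fin n, ν i.succ ≤ ν i.castSucc) :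
    Bmat n ν = Matrix.of fun i j => (1 / ((j.val : ℚ) + 1)) * Cmat n ν i j := by
  ext i j
  simp only [Bmat, Cmat, Matrix.of_apply]
  have ht := tele j.val ((n : ℚ) - 1 - (i.val : ℚ)) (ν i.succ) (ν i.castSucc)
    (by have := hν i; omega)
  have e1 : ((ν i.castSucc : ℚ) + ((n : ℚ) - 1 - (i.val : ℚ))) = xqv n ν i.castSucc - 1 := by
    simp [xqv, Fin.coe_castSucc]
    ring
  have e2 : ((ν i.succ : ℚ) - 1 + ((n : ℚ) - 1 - (i.val : ℚ))) = xqv n ν i.succ - 1 := by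
    simp [xqv, Fin.val_succ]
    push_cast
    ring
  rw [e1, e2, PR_eval, PR_eval] at ht
  have hj : ((j.val : ℚ) + 1) ≠ 0 := by positivity
  field_simp
  linarith [ht]

lemma detB_eq (n : ℕ) (ν : Fin (n + 1) → ℤ) (hν : ∀ i : Fin n, ν i.succ ≤ ν i.castSucc) :
    (Bmat n ν).det = (∏ j : Fin n, (1 / ((j.val : ℚ) + 1))) * (Cmat n ν).det := by
  rw [B_eq_C n ν hν]
  exact Matrix.det_mul_row _ _

lemma prod_succ_fact (n : ℕ) : ∏ j : Fin n, ((j.val : ℚ) + 1) = (Nat.factorial n : ℚ) := by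
  rw [Fin.prod_univ_eq_prod_range (fun k => ((k : ℚ) + 1))]
  induction n with
  | zero => simp
  | succ n IH =>
    rw [Finset.prod_range_succ, IH, Nat.factorial_succ]
    push_cast
    ring

lemma sum_detA (n : ℕ) (ν : Fin (n + 1) → ℤ) :
    ∑ μ ∈ gtBox n ν, (Amat n μ).det = (Bmat n ν).det := by
  have hA : ∀ μ : Fin n → ℤ, (Amat n μ).det = ∑ σ : Equiv.Perm (Fin n),
      Equiv.Perm.sign σ • ∏ i : Fin n,
        (Pp (σ i).val).eval ((μ i : ℚ) + ((n : ℚ) - 1 - (i.val : ℚ))) := by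
    intro μ
    rw [← Matrix.det_transpose, Matrix.det_apply]
    rfl
  have hB : (Bmat n ν).det = ∑ σ : Equiv.Perm (Fin n),
      Equiv.Perm.sign σ • ∏ i : Fin n, ∑ t ∈ Finset.Icc (ν i.succ) (ν i.castSucc),
        (Pp (σ i).val).eval ((t : ℚ) + ((n : ℚ) - 1 - (i.val : ℚ))) := by
    rw [← Matrix.det_transpose, Matrix.det_apply]
    rfl
  rw [Finset.sum_congr rfl (fun μ _ => hA μ), Finset.sum_comm, hB]
  apply Finset.sum_congr rfl
  intro σ _
  rw [← Finset.smul_sum]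
  congr 1
  rw [Finset.prod_univ_sum]
  rfl

noncomputable def Wq (m : ℕ) (κ : Fin m → ℤ) : ℚ :=
  ∏ p ∈ Finset.univ.filter (fun p : Fin m × Fin m => p.1 < p.2),
    (((κ p.1 : ℚ) - (κ p.2 : ℚ) + (p.2.val : ℚ) - (p.1.val : ℚ)) /
      ((p.2.val : ℚ) - (p.1.val : ℚ)))

lemma VV_A (n : ℕ) (μ : Fin n → ℤ) :
    ∏ p ∈ Finset.univ.filter (fun p : Fin n × Fin n => p.1 < p.2),
      ((μ p.1 : ℚ) - (μ p.2 : ℚ) + (p.2.val : ℚ) - (p.1.val : ℚ)) =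
    (-1) ^ (∑ j : Fin n, j.val) * (Amat n μ).det := by
  rw [detA, ← pair_prod_Ioi n (fun i j =>
    ((μ j : ℚ) + ((n : ℚ) - 1 - (j.val : ℚ))) - ((μ i : ℚ) + ((n : ℚ) - 1 - (i.val : ℚ)))),
    Finset.prod_congr rfl (fun (p : Fin n × Fin n) _ =>
      show ((μ p.1 : ℚ) - (μ p.2 : ℚ) + (p.2.val : ℚ) - (p.1.val : ℚ)) =
        -(((μ p.2 : ℚ) + ((n : ℚ) - 1 - (p.2.val : ℚ))) -
          ((μ p.1 : ℚ) + ((n : ℚ) - 1 - (p.1.val : ℚ)))) from by ring),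
    prodneg, pair_card]

lemma VV_D (n : ℕ) (ν : Fin (n + 1) → ℤ) :
    ∏ p ∈ Finset.univ.filter (fun p : Fin (n + 1) × Fin (n + 1) => p.1 < p.2),
      ((ν p.1 : ℚ) - (ν p.2 : ℚ) + (p.2.val : ℚ) - (p.1.val : ℚ)) =
    (-1) ^ (∑ j : Fin (n + 1), j.val) * (Dmat n ν).det := by
  rw [detD, ← pair_prod_Ioi (n + 1) (fun i j => xqv n ν j - xqv n ν i),
    Finset.prod_congr rfl (fun (p : Fin (n + 1) × Fin (n + 1)) _ =>
      show ((ν p.1 : ℚ) - (ν p.2 : ℚ) + (p.2.val : ℚ) - (p.1.val : ℚ)) =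
        -(xqv n ν p.2 - xqv n ν p.1) from by simp [xqv]; ring),
    prodneg, pair_card]

lemma DD_eq (m : ℕ) :
    ∏ p ∈ Finset.univ.filter (fun p : Fin m × Fin m => p.1 < p.2),
      ((p.2.val : ℚ) - (p.1.val : ℚ)) = ∏ j : Fin m, (Nat.factorial j.val : ℚ) := by
  rw [pair_prod_Iio m (fun i j => (j.val : ℚ) - (i.val : ℚ))]
  apply Finset.prod_congr rfl
  intro j _
  have h1 : ∏ i ∈ Finset.Iio j, ((j.val : ℚ) - (i.val : ℚ)) =
      ∏ k ∈ Finset.Iio j.val, ((j.val : ℚ) - (k : ℚ)) := by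
    rw [← Fin.map_valEmbedding_Iio, Finset.prod_map]
    rfl
  rw [h1, Nat.Iio_eq_range, factq]

lemma DD_ne (m : ℕ) : (∏ j : Fin m, (Nat.factorial j.val : ℚ)) ≠ 0 := by
  apply Finset.prod_ne_zero_iff.2
  intro j _
  positivity

lemma prod_inv_fact (n : ℕ) :
    (∏ j : Fin n, (1 / ((j.val : ℚ) + 1))) = 1 / (Nat.factorial n : ℚ) := by
  simp only [one_div]
  rw [Finset.prod_inv_distrib, prod_succ_fact]

lemma key (n : ℕ) (ν : Fin (n + 1) → ℤ) (hν : ∀ i : Fin n, ν i.succ ≤ ν i.castSucc) :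
    ∑ μ ∈ gtBox n ν, Wq n μ = Wq (n + 1) ν := by
  have hWsplit : ∀ (m : ℕ) (κ : Fin m → ℤ), Wq m κ =
      (∏ p ∈ Finset.univ.filter (fun p : Fin m × Fin m => p.1 < p.2),
        ((κ p.1 : ℚ) - (κ p.2 : ℚ) + (p.2.val : ℚ) - (p.1.val : ℚ))) /
      (∏ p ∈ Finset.univ.filter (fun p : Fin m × Fin m => p.1 < p.2),
        ((p.2.val : ℚ) - (p.1.val : ℚ))) := by
    intro m κ
    rw [Wq, Finset.prod_div_distrib]
  have hKs : (∑ j : Fin (n + 1), j.val) = (∑ j : Fin n, j.val) + n := by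
    rw [Fin.sum_univ_castSucc]
    simp
  have hPs : (∏ j : Fin (n + 1), (Nat.factorial j.val : ℚ)) =
      (∏ j : Fin n, (Nat.factorial j.val : ℚ)) * (Nat.factorial n : ℚ) := by
    rw [Fin.prod_univ_castSucc]
    simp
  have step1 : ∑ μ ∈ gtBox n ν, Wq n μ = ∑ μ ∈ gtBox n ν,
      (((-1) ^ (∑ j : Fin n, j.val) * (Amat n μ).det) /
        (∏ p ∈ Finset.univ.filter (fun p : Fin n × Fin n => p.1 < p.2),
          ((p.2.val : ℚ) - (p.1.val : ℚ)))) :=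
    Finset.sum_congr rfl fun μ _ => by rw [hWsplit n μ, VV_A]
  rw [step1, ← Finset.sum_div, ← Finset.mul_sum, sum_detA, detB_eq n ν hν, prod_inv_fact,
    detC_eq, hWsplit (n + 1) ν, VV_D, DD_eq, DD_eq, hKs, hPs, pow_add]
  have hf : (Nat.factorial n : ℚ) ≠ 0 := by positivity
  have hP : (∏ j : Fin n, (Nat.factorial j.val : ℚ)) ≠ 0 := DD_ne n
  field_simp


lemma box_antitone (n : ℕ) (ν : Fin (n + 2) → ℤ) (μ : Fin (n + 1) → ℤ)
    (hμ : μ ∈ gtBox (n + 1) ν) : ∀ i j : Fin (n + 1), i ≤ j → μ j ≤ μ i := by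
  have hmem := Fintype.mem_piFinset.1 hμ
  have hA : Antitone μ := by
    rw [Fin.antitone_iff_succ_le]
    intro i
    have h1 := (Finset.mem_Icc.1 (hmem i.succ)).2
    have h2 := (Finset.mem_Icc.1 (hmem i.castSucc)).1
    have he : (i.succ).castSucc = (i.castSucc).succ := by
      apply Fin.ext
      simp
    refine le_trans h1 ?_
    rw [he]
    exact h2
  exact fun i j h => hA h

/-- Weyl's dimension formula: for a signature `ν = (ν_1 ≥ … ≥ ν_N)`, the number of
triangular Gelfand–Tsetlin schemes with top row `ν` equals
`∏_{1≤i<j≤N} (ν_i - ν_j + j - i)/(j - i)`. -/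
theorem stmt_12 (N : ℕ) (ν : Fin N → ℤ) (hν : ∀ i j : Fin N, i ≤ j → ν j ≤ ν i) :
    (GTDim N ν : ℚ) =
      ∏ p ∈ Finset.univ.filter (fun p : Fin N × Fin N => p.1 < p.2),
        (((ν p.1 : ℚ) - (ν p.2 : ℚ) + (p.2.val : ℚ) - (p.1.val : ℚ)) /
          ((p.2.val : ℚ) - (p.1.val : ℚ))) := by
  have main : ∀ (N : ℕ) (ν : Fin N → ℤ), (∀ i j : Fin N, i ≤ j → ν j ≤ ν i) →
      (GTDim N ν : ℚ) = Wq N ν := by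
    intro N
    induction N with
    | zero =>
      intro ν _
      rw [gtdim_zero]
      simp [Wq]
    | succ N IH =>
      intro ν hν
      cases N with
      | zero =>
        rw [gtdim_one]
        have he : (Finset.univ.filter (fun p : Fin 1 × Fin 1 => p.1 < p.2)) = ∅ := by decide
        rw [Wq, he]
        simp
      | succ M =>
        have hν' : ∀ i : Fin (M + 1), ν i.succ ≤ ν i.castSucc := fun i => hν _ _ (by
          rw [Fin.le_def]
          simp)
        rw [gtdim_rec M ν]
        push_cast
        have hc : ∑ μ ∈ gtBox (M + 1) ν, ((GTDim (M + 1) μ : ℚ)) =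
            ∑ μ ∈ gtBox (M + 1) ν, Wq (M + 1) μ :=
          Finset.sum_congr rfl fun μ hμ => IH μ (box_antitone M ν μ hμ)
        rw [hc]
        exact key (M + 1) ν hν'
  exact main N ν hν
end

section
/- Fix a signature κ of length K ≥ 1 and let N = K+1. If ν ranges over signatures of length N with κ ≺ ν and ν → ∞ in the discrete space of signatures (i.e., ν_1 → +∞ or ν_N → -∞), then the ratio Λ^N_{N-1}(ν,κ) = (N-1)!·∏_{1≤i<j≤N-1}(κ_i-κ_j+j-i) / ∏_{1≤i<j≤N}(ν_i-ν_j+j-i) tends to 0. -/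
set_option maxHeartbeats 1000000


/-- Fix a signature `κ` of length `K ≥ 1` and let `N = K+1`. As `ν` ranges over
signatures of length `N` with `κ ≺ ν`, the quantity
`Λ^N_{N-1}(ν,κ) = (N-1)!·∏_{1≤i<j≤N-1}(κ_i-κ_j+j-i) / ∏_{1≤i<j≤N}(ν_i-ν_j+j-i)`
tends to `0` as `ν → ∞`: for every `ε > 0` only finitely many such `ν` satisfy
`Λ^N_{N-1}(ν,κ) ≥ ε`. -/
theorem stmt_14 (K : ℕ) (hK : 1 ≤ K) (κ : Fin K → ℤ)
    (hκ : ∀ i j : Fin K, i ≤ j → κ j ≤ κ i) (ε : ℚ) (hε : 0 < ε) :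
    {ν : Fin (K + 1) → ℤ |
        (∀ i j : Fin (K + 1), i ≤ j → ν j ≤ ν i) ∧
        (∀ i : Fin K, ν i.succ ≤ κ i ∧ κ i ≤ ν i.castSucc) ∧
        ε ≤ (Nat.factorial K : ℚ) *
            (∏ p ∈ Finset.univ.filter (fun p : Fin K × Fin K => p.1 < p.2),
              ((κ p.1 : ℚ) - (κ p.2 : ℚ) + (p.2.val : ℚ) - (p.1.val : ℚ))) /
            ∏ p ∈ Finset.univ.filter (fun p : Fin (K + 1) × Fin (K + 1) => p.1 < p.2),
              ((ν p.1 : ℚ) - (ν p.2 : ℚ) + (p.2.val : ℚ) - (p.1.val : ℚ))}.Finite := by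
  classical
  set A : ℚ := (Nat.factorial K : ℚ) *
      (∏ p ∈ Finset.univ.filter (fun p : Fin K × Fin K => p.1 < p.2),
        ((κ p.1 : ℚ) - (κ p.2 : ℚ) + (p.2.val : ℚ) - (p.1.val : ℚ))) with hAdef
  have hA : 0 < A := by
    apply mul_pos (by positivity)
    apply Finset.prod_pos
    intro p hp
    simp only [Finset.mem_filter] at hp
    have h1 : κ p.2 ≤ κ p.1 := hκ _ _ (le_of_lt hp.2)
    have h2 : (p.1.val : ℚ) + 1 ≤ p.2.val := by exact_mod_cast hp.2
    have h3 : (κ p.2 : ℚ) ≤ (κ p.1 : ℚ) := by exact_mod_cast h1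
    linarith
  set k0 : Fin K := ⟨0, hK⟩ with hk0
  set kK : Fin K := ⟨K - 1, by omega⟩ with hkK
  set L : ℤ := ⌊(κ k0 : ℚ) - A / ε⌋ with hL
  set U : ℤ := ⌈(κ kK : ℚ) + A / ε⌉ with hU
  apply Set.Finite.subset
    (Set.Finite.pi (fun i : Fin (K + 1) => Set.finite_Icc L U))
  rintro ν ⟨hmono, hint, hεle⟩
  set D : ℚ := ∏ p ∈ Finset.univ.filter
      (fun p : Fin (K + 1) × Fin (K + 1) => p.1 < p.2),
      ((ν p.1 : ℚ) - (ν p.2 : ℚ) + (p.2.val : ℚ) - (p.1.val : ℚ)) with hDdef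
  have hfac : ∀ p ∈ Finset.univ.filter
      (fun p : Fin (K + 1) × Fin (K + 1) => p.1 < p.2),
      (1 : ℚ) ≤ (ν p.1 : ℚ) - (ν p.2 : ℚ) + (p.2.val : ℚ) - (p.1.val : ℚ) := by
    intro p hp
    simp only [Finset.mem_filter] at hp
    have h1 : ν p.2 ≤ ν p.1 := hmono _ _ (le_of_lt hp.2)
    have h2 : (p.1.val : ℚ) + 1 ≤ p.2.val := by exact_mod_cast hp.2
    have h3 : (ν p.2 : ℚ) ≤ (ν p.1 : ℚ) := by exact_mod_cast h1
    linarith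
  have hfac0 : ∀ p ∈ Finset.univ.filter
      (fun p : Fin (K + 1) × Fin (K + 1) => p.1 < p.2),
      (0 : ℚ) ≤ (ν p.1 : ℚ) - (ν p.2 : ℚ) + (p.2.val : ℚ) - (p.1.val : ℚ) :=
    fun p hp => le_trans zero_le_one (hfac p hp)
  have hD1 : (1 : ℚ) ≤ D := by
    rw [hDdef]
    have h := Finset.prod_le_prod
      (s := Finset.univ.filter (fun p : Fin (K + 1) × Fin (K + 1) => p.1 < p.2))
      (f := fun _ => (1 : ℚ))
      (g := fun p : Fin (K + 1) × Fin (K + 1) =>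
        (ν p.1 : ℚ) - (ν p.2 : ℚ) + (p.2.val : ℚ) - (p.1.val : ℚ))
      (by intro p hp; norm_num) hfac
    simpa using h
  have hD0 : (0 : ℚ) < D := lt_of_lt_of_le one_pos hD1
  have hDle : D ≤ A / ε := by
    rw [le_div_iff₀ hε]
    rw [le_div_iff₀ hD0] at hεle
    linarith
  set i0 : Fin (K + 1) := Fin.castSucc k0 with hi0
  set iK : Fin (K + 1) := Fin.succ kK with hiK
  have hpair : (i0, iK) ∈ Finset.univ.filter
      (fun p : Fin (K + 1) × Fin (K + 1) => p.1 < p.2) := by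
    simp only [Finset.mem_filter, Finset.mem_univ, true_and]
    simp only [hi0, hiK, Fin.lt_def, Fin.coe_castSucc, Fin.val_succ, hk0, hkK]
    omega
  have key : (ν i0 : ℚ) - (ν iK : ℚ) + (iK.val : ℚ) - (i0.val : ℚ) ≤ D := by
    have h := (Finset.mul_prod_erase _
      (fun p : Fin (K + 1) × Fin (K + 1) =>
        (ν p.1 : ℚ) - (ν p.2 : ℚ) + (p.2.val : ℚ) - (p.1.val : ℚ)) hpair).symm
    have herase : (1 : ℚ) ≤ ∏ p ∈ (Finset.univ.filter
        (fun p : Fin (K + 1) × Fin (K + 1) => p.1 < p.2)).erase (i0, iK),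
        ((ν p.1 : ℚ) - (ν p.2 : ℚ) + (p.2.val : ℚ) - (p.1.val : ℚ)) := by
      have h := Finset.prod_le_prod
        (s := (Finset.univ.filter
          (fun p : Fin (K + 1) × Fin (K + 1) => p.1 < p.2)).erase (i0, iK))
        (f := fun _ => (1 : ℚ))
        (g := fun p : Fin (K + 1) × Fin (K + 1) =>
          (ν p.1 : ℚ) - (ν p.2 : ℚ) + (p.2.val : ℚ) - (p.1.val : ℚ))
        (by intro p hp; norm_num)
        (fun p hp => hfac p (Finset.mem_of_mem_erase hp))
      simpa using h
    have hfpos : (0 : ℚ) ≤ (ν i0 : ℚ) - (ν iK : ℚ) + (iK.val : ℚ) - (i0.val : ℚ) :=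
      le_trans zero_le_one (hfac (i0, iK) hpair)
    have := le_mul_of_one_le_right hfpos herase
    rw [hDdef]
    calc (ν i0 : ℚ) - (ν iK : ℚ) + (iK.val : ℚ) - (i0.val : ℚ) ≤ _ := this
      _ = _ := (Finset.mul_prod_erase _
        (fun p : Fin (K + 1) × Fin (K + 1) =>
          (ν p.1 : ℚ) - (ν p.2 : ℚ) + (p.2.val : ℚ) - (p.1.val : ℚ)) hpair)
  have hv1 : i0.val = 0 := by simp [hi0, hk0]
  have hv2 : iK.val = K := by simp [hiK, hkK]; omega
  have hvals : (i0.val : ℚ) = 0 ∧ (iK.val : ℚ) = K := by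
    rw [hv1, hv2]; simp
  have hlo : κ k0 ≤ ν i0 := (hint k0).2
  have hhi : ν iK ≤ κ kK := (hint kK).1
  have hkey2 : (ν i0 : ℚ) - (ν iK : ℚ) ≤ A / ε := by
    have h1 : (0 : ℚ) ≤ (iK.val : ℚ) - (i0.val : ℚ) := by
      have hk : (0 : ℚ) ≤ (K : ℚ) := Nat.cast_nonneg K
      rw [hvals.1, hvals.2]; linarith
    linarith [le_trans key hDle]
  intro i _
  have hdown : ν iK ≤ ν i := by
    apply hmono
    simp only [Fin.le_def, hiK, Fin.val_succ, hkK]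
    omega
  have hup : ν i ≤ ν i0 := by
    apply hmono
    simp only [Fin.le_def, hi0, Fin.coe_castSucc, hk0]
    omega
  constructor
  · -- L ≤ ν i
    have h1 : (κ k0 : ℚ) - A / ε ≤ (ν iK : ℚ) := by
      have : (κ k0 : ℚ) ≤ (ν i0 : ℚ) := by exact_mod_cast hlo
      linarith
    have h2 : (L : ℚ) ≤ (ν iK : ℚ) := le_trans (Int.floor_le _) h1
    have h3 : L ≤ ν iK := by exact_mod_cast h2
    exact le_trans h3 hdown
  · -- ν i ≤ U
    have h1 : (ν i0 : ℚ) ≤ (κ kK : ℚ) + A / ε := by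
      have : (ν iK : ℚ) ≤ (κ kK : ℚ) := by exact_mod_cast hhi
      linarith
    have h2 : (ν i0 : ℚ) ≤ (U : ℚ) := le_trans h1 (Int.le_ceil _)
    have h3 : ν i0 ≤ U := by exact_mod_cast h2
    exact le_trans hup h3
end

section
/- For integers a ≤ b, set L = {a,…,b} with n = b-a+1 ≥ 2 points. The rational functions f_{L,k}(t) = ∏_{x∈L}(t-x) / ∏_{x∈L}(t-x-k), for k ∈ ℤ, form a basis of the vector space V_L of rational functions in t that are regular on ℂ ∪ {∞} except for possible simple poles at integer points outside L. -/
/-- The fraction `f_{L,k}(t) = ∏_{x∈L}(t-x) / ∏_{x∈L}(t-x-k)` for `L = {a,…,b}`. -/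
noncomputable def fL (a b k : ℤ) : RatFunc ℂ :=
  (∏ x ∈ Finset.Icc a b, ((RatFunc.X : RatFunc ℂ) - RatFunc.C (x : ℂ))) /
    ∏ x ∈ Finset.Icc a b, ((RatFunc.X : RatFunc ℂ) - RatFunc.C ((x + k : ℤ) : ℂ))

/-- The space `V_L` of rational functions regular on `ℂ ∪ {∞}` except for possible simple
poles at integer points outside `L`: the span of `1` and the fractions `1/(t-m)`,
`m ∈ ℤ ∖ L`. -/
noncomputable def VL (a b : ℤ) : Submodule ℂ (RatFunc ℂ) :=
  Submodule.span ℂ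
    ({1} ∪ {g : RatFunc ℂ | ∃ m : ℤ, m ∉ Finset.Icc a b ∧
      g = ((RatFunc.X : RatFunc ℂ) - RatFunc.C ((m : ℤ) : ℂ))⁻¹})

open Polynomial Finset

noncomputable section

local notation "Amap" => algebraMap (Polynomial ℂ) (RatFunc ℂ)

lemma stmt15_A_ne_zero {p : Polynomial ℂ} (hp : p ≠ 0) : Amap p ≠ 0 :=
  (map_ne_zero_iff _ (RatFunc.algebraMap_injective ℂ)).2 hp

lemma stmt15_A_lin (z : ℂ) : Amap (X - C z) = RatFunc.X - RatFunc.C z := by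
  rw [map_sub, RatFunc.algebraMap_X, RatFunc.algebraMap_C]

lemma stmt15_lin_ne (z : ℂ) : (RatFunc.X - RatFunc.C z : RatFunc ℂ) ≠ 0 := by
  rw [← stmt15_A_lin]
  exact stmt15_A_ne_zero (X_sub_C_ne_zero z)

lemma stmt15_pf_raw (u v : Finset ℤ) (hd : Disjoint u v) (hc : u.card = v.card) :
    Amap (∏ x ∈ u, (X - C (x : ℂ))) / Amap (∏ x ∈ v, (X - C (x : ℂ))) =
      1 + ∑ m ∈ v, ((∏ x ∈ u, ((m : ℂ) - (x : ℂ))) / ∏ x ∈ v.erase m, ((m : ℂ) - (x : ℂ))) •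
        (RatFunc.X - RatFunc.C (m : ℂ))⁻¹ := by
  set P : Polynomial ℂ := ∏ x ∈ u, (X - C (x : ℂ)) with hP
  set Q : Polynomial ℂ := ∏ x ∈ v, (X - C (x : ℂ)) with hQ
  have hQ0 : Q ≠ 0 := prod_ne_zero_iff.2 fun x _ => X_sub_C_ne_zero _
  have hP0 : P ≠ 0 := prod_ne_zero_iff.2 fun x _ => X_sub_C_ne_zero _
  have hAQ0 : Amap Q ≠ 0 := stmt15_A_ne_zero hQ0
  have hPm : P.Monic := monic_prod_of_monic _ _ fun _ _ => monic_X_sub_C _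
  have hQm : Q.Monic := monic_prod_of_monic _ _ fun _ _ => monic_X_sub_C _
  have hndP : P.natDegree = u.card := by
    rw [hP, natDegree_prod _ _ fun x _ => X_sub_C_ne_zero _]
    simp only [natDegree_X_sub_C, sum_const, smul_eq_mul, mul_one]
  have hndQ : Q.natDegree = v.card := by
    rw [hQ, natDegree_prod _ _ fun x _ => X_sub_C_ne_zero _]
    simp only [natDegree_X_sub_C, sum_const, smul_eq_mul, mul_one]
  have hdP : P.degree = (u.card : WithBot ℕ) := by rw [degree_eq_natDegree hP0, hndP]
  have hdQ : Q.degree = (v.card : WithBot ℕ) := by rw [degree_eq_natDegree hQ0, hndQ]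
  have hdPQ : P.degree = Q.degree := by rw [hdP, hdQ, hc]
  have hlc : P.leadingCoeff = Q.leadingCoeff := by rw [hPm.leadingCoeff, hQm.leadingCoeff]
  have hdR : (P - Q).degree < (v.card : WithBot ℕ) := by
    have := degree_sub_lt hdPQ hP0 hlc
    rwa [hdP, hc] at this
  have hinj : Set.InjOn (fun i : ℤ => (i : ℂ)) ↑v := fun x _ y _ h => Int.cast_injective h
  have hL : P - Q = ∑ m ∈ v, C ((P - Q).eval ((m : ℤ) : ℂ)) *
      Lagrange.basis v (fun i : ℤ => (i : ℂ)) m := by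
    conv_lhs => rw [Lagrange.eq_interpolate hinj hdR]
    rw [Lagrange.interpolate_apply]
  have hRe : ∀ m ∈ v, (P - Q).eval ((m : ℤ) : ℂ) = ∏ x ∈ u, ((m : ℂ) - (x : ℂ)) := by
    intro m hm
    have hQe : Q.eval ((m : ℤ) : ℂ) = 0 := by
      rw [hQ]
      rw [eval_prod]
      exact prod_eq_zero hm (by simp)
    rw [eval_sub, hQe, sub_zero, hP, eval_prod]
    simp
  have hbasis : ∀ m ∈ v, Lagrange.basis v (fun i : ℤ => (i : ℂ)) m =
      C ((∏ x ∈ v.erase m, ((m : ℂ) - (x : ℂ)))⁻¹) * ∏ x ∈ v.erase m, (X - C (x : ℂ)) := by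
    intro m hm
    rw [Lagrange.basis]
    simp only [Lagrange.basisDivisor]
    rw [prod_mul_distrib]
    congr 1
    rw [← prod_inv_distrib, map_prod]
  have key : ∀ m ∈ v, (((∏ x ∈ u, ((m : ℂ) - (x : ℂ))) / ∏ x ∈ v.erase m, ((m : ℂ) - (x : ℂ))) •
      (RatFunc.X - RatFunc.C (m : ℂ))⁻¹) * Amap Q
      = Amap (C ((P - Q).eval ((m : ℤ) : ℂ)) * Lagrange.basis v (fun i : ℤ => (i : ℂ)) m) := by
    intro m hm
    rw [hbasis m hm, hRe m hm]
    have hc1 : (C (∏ x ∈ u, ((m : ℂ) - (x : ℂ))) *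
        (C ((∏ x ∈ v.erase m, ((m : ℂ) - (x : ℂ)))⁻¹) * ∏ x ∈ v.erase m, (X - C (x : ℂ))))
        = C ((∏ x ∈ u, ((m : ℂ) - (x : ℂ))) * (∏ x ∈ v.erase m, ((m : ℂ) - (x : ℂ)))⁻¹) *
          ∏ x ∈ v.erase m, (X - C (x : ℂ)) := by
      rw [C_mul]; ring
    rw [hc1, map_mul, RatFunc.algebraMap_C]
    have hQfac : Q = (X - C ((m : ℤ) : ℂ)) * ∏ x ∈ v.erase m, (X - C (x : ℂ)) :=
      (mul_prod_erase v _ hm).symm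
    rw [smul_mul_assoc, RatFunc.smul_eq_C_mul, div_eq_mul_inv]
    congr 1
    rw [hQfac, map_mul, stmt15_A_lin, ← mul_assoc, inv_mul_cancel₀ (stmt15_lin_ne _), one_mul]
  have hdiv : Amap (P - Q) / Amap Q = ∑ m ∈ v,
      ((∏ x ∈ u, ((m : ℂ) - (x : ℂ))) / ∏ x ∈ v.erase m, ((m : ℂ) - (x : ℂ))) •
        (RatFunc.X - RatFunc.C (m : ℂ))⁻¹ := by
    rw [div_eq_iff hAQ0, sum_mul]
    conv_lhs => rw [hL]
    rw [map_sum]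
    exact sum_congr rfl fun m hm => (key m hm).symm
  calc Amap P / Amap Q = (Amap Q + Amap (P - Q)) / Amap Q := by
        rw [← map_add]
        congr 2
        ring
    _ = 1 + Amap (P - Q) / Amap Q := by rw [add_div, div_self hAQ0]
    _ = _ := by rw [hdiv]

noncomputable def stmt15_res (u v : Finset ℤ) (m : ℤ) : ℂ :=
  (∏ x ∈ u, ((m : ℂ) - (x : ℂ))) / ∏ x ∈ v.erase m, ((m : ℂ) - (x : ℂ))

lemma stmt15_res_ne (u v : Finset ℤ) (hd : Disjoint u v) {m : ℤ} (hm : m ∈ v) :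
    stmt15_res u v m ≠ 0 := by
  apply div_ne_zero
  · refine prod_ne_zero_iff.2 fun x hx => sub_ne_zero.2 fun h => ?_
    have hmx : m = x := by exact_mod_cast h
    exact (disjoint_left.1 hd hx) (hmx ▸ hm)
  · refine prod_ne_zero_iff.2 fun x hx => sub_ne_zero.2 fun h => ?_
    exact (mem_erase.1 hx).1 (by exact_mod_cast h.symm)

lemma stmt15_pf (u v : Finset ℤ) (hd : Disjoint u v) (hc : u.card = v.card) :
    Amap (∏ x ∈ u, (X - C (x : ℂ))) / Amap (∏ x ∈ v, (X - C (x : ℂ))) =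
      1 + ∑ m ∈ v, stmt15_res u v m • (RatFunc.X - RatFunc.C (m : ℂ))⁻¹ :=
  stmt15_pf_raw u v hd hc

noncomputable def stmt15_B (a b : ℤ) (j : ℤ) : RatFunc ℂ :=
  if j = 0 then 1
  else if 0 < j then (RatFunc.X - RatFunc.C ((b + j : ℤ) : ℂ))⁻¹
  else (RatFunc.X - RatFunc.C ((a + j : ℤ) : ℂ))⁻¹

def stmt15_W (k : ℤ) : Finset ℤ := Finset.Icc (min k 0) (max k 0)

lemma stmt15_fL_zero (a b : ℤ) : fL a b 0 = 1 := by
  rw [fL]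
  simp only [add_zero]
  exact div_self (prod_ne_zero_iff.2 fun x _ => stmt15_lin_ne _)

lemma stmt15_fL_eq (a b k : ℤ) :
    fL a b k =
      Amap (∏ x ∈ Finset.Icc a b \ Finset.Icc (a + k) (b + k), (X - C (x : ℂ))) /
        Amap (∏ x ∈ Finset.Icc (a + k) (b + k) \ Finset.Icc a b, (X - C (x : ℂ))) := by
  have hnum : (∏ x ∈ Finset.Icc a b, ((RatFunc.X : RatFunc ℂ) - RatFunc.C ((x : ℤ) : ℂ)))
      = Amap (∏ x ∈ Finset.Icc a b, (X - C (x : ℂ))) := by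
    rw [map_prod]
    exact prod_congr rfl fun x _ => (stmt15_A_lin _).symm
  have htmap : Finset.Icc (a + k) (b + k) = (Finset.Icc a b).map (addRightEmbedding k) :=
    (Finset.map_add_right_Icc a b k).symm
  have hden : (∏ x ∈ Finset.Icc a b, ((RatFunc.X : RatFunc ℂ) - RatFunc.C (((x + k : ℤ)) : ℂ)))
      = Amap (∏ x ∈ Finset.Icc (a + k) (b + k), (X - C (x : ℂ))) := by
    rw [map_prod, htmap, prod_map]
    refine prod_congr rfl fun x _ => ?_
    simp only [addRightEmbedding_apply]
    exact (stmt15_A_lin _).symm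
  rw [fL, hnum, hden]
  have h1 : (∏ x ∈ Finset.Icc a b, (X - C ((x : ℤ) : ℂ)))
      = (∏ x ∈ Finset.Icc a b ∩ Finset.Icc (a + k) (b + k), (X - C ((x : ℤ) : ℂ))) *
        ∏ x ∈ Finset.Icc a b \ Finset.Icc (a + k) (b + k), (X - C ((x : ℤ) : ℂ)) :=
    (prod_inter_mul_prod_diff _ _ _).symm
  have h2 : (∏ x ∈ Finset.Icc (a + k) (b + k), (X - C ((x : ℤ) : ℂ)))
      = (∏ x ∈ Finset.Icc a b ∩ Finset.Icc (a + k) (b + k), (X - C ((x : ℤ) : ℂ))) *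
        ∏ x ∈ Finset.Icc (a + k) (b + k) \ Finset.Icc a b, (X - C ((x : ℤ) : ℂ)) := by
    rw [inter_comm]
    exact (prod_inter_mul_prod_diff _ _ _).symm
  rw [h1, h2, map_mul, map_mul,
    mul_div_mul_left _ _ (stmt15_A_ne_zero (prod_ne_zero_iff.2 fun x _ => X_sub_C_ne_zero _))]

lemma stmt15_expand (a b : ℤ) (hab : a ≤ b) (k : ℤ) :
    ∃ c : ℤ → ℂ, c k ≠ 0 ∧ (∀ j, j ∉ stmt15_W k → c j = 0) ∧
      fL a b k = ∑ j ∈ stmt15_W k, c j • stmt15_B a b j := by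
  rcases eq_or_ne k 0 with rfl | hk0
  · refine ⟨fun j => if j = 0 then 1 else 0, by simp, fun j hj => ?_, ?_⟩
    · beta_reduce
      rw [if_neg]
      intro h
      subst h
      exact hj (by simp [stmt15_W])
    · have hW : stmt15_W 0 = {0} := by simp [stmt15_W]
      rw [hW, sum_singleton, stmt15_fL_zero]
      beta_reduce
      rw [if_pos rfl, one_smul, stmt15_B, if_pos rfl]
  set u : Finset ℤ := Finset.Icc a b \ Finset.Icc (a + k) (b + k) with hu
  set v : Finset ℤ := Finset.Icc (a + k) (b + k) \ Finset.Icc a b with hv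
  have hst : (Finset.Icc a b).card = (Finset.Icc (a + k) (b + k)).card := by
    rw [Int.card_Icc, Int.card_Icc]
    congr 1
    ring
  have hcard : u.card = v.card := by
    have h1 := card_inter_add_card_sdiff (Finset.Icc a b) (Finset.Icc (a + k) (b + k))
    have h2 := card_inter_add_card_sdiff (Finset.Icc (a + k) (b + k)) (Finset.Icc a b)
    rw [inter_comm] at h2
    rw [hu, hv]
    omega
  have hdisj : Disjoint u v := disjoint_sdiff_sdiff
  have hmain : fL a b k = 1 + ∑ m ∈ v, stmt15_res u v m • (RatFunc.X - RatFunc.C ((m : ℤ) : ℂ))⁻¹ := by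
    rw [stmt15_fL_eq, ← hu, ← hv, stmt15_pf u v hdisj hcard]
  rcases hk0.lt_or_gt with hk | hk
  · -- k < 0
    have hvmem : ∀ m ∈ v, a + k ≤ m ∧ m ≤ a - 1 := by
      intro m hm
      rw [hv, mem_sdiff, mem_Icc, mem_Icc] at hm
      omega
    have hak : a + k ∈ v := by
      rw [hv, mem_sdiff, mem_Icc, mem_Icc]
      omega
    have hW : stmt15_W k = Finset.Icc k 0 := by
      rw [stmt15_W, min_eq_left hk.le, max_eq_right hk.le]
    refine ⟨fun j => if j = 0 then 1 else if j < 0 ∧ a + j ∈ v then stmt15_res u v (a + j) else 0,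
      ?_, ?_, ?_⟩
    · beta_reduce
      rw [if_neg hk0, if_pos ⟨hk, hak⟩]
      exact stmt15_res_ne u v hdisj hak
    · intro j hj
      have hj' : ¬(k ≤ j ∧ j ≤ 0) := by rwa [hW, mem_Icc] at hj
      beta_reduce
      rw [if_neg (by omega : ¬ j = 0), if_neg]
      rintro ⟨h1, h2⟩
      have := hvmem _ h2
      omega
    · rw [hW, hmain]
      have hsplit : Finset.Icc k (0 : ℤ) = insert 0 (Finset.Icc k (-1)) := by
        ext x
        simp only [mem_insert, mem_Icc]
        omega
      rw [hsplit, sum_insert (by simp)]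
      beta_reduce
      rw [if_pos rfl, one_smul]
      have hB0 : stmt15_B a b 0 = 1 := by simp [stmt15_B]
      rw [hB0]
      congr 1
      have hvsub : v ⊆ Finset.Icc (a + k) (a - 1) := fun m hm => mem_Icc.2 (hvmem m hm)
      have hmap : Finset.Icc (a + k) (a - 1) = (Finset.Icc k (-1)).map (addRightEmbedding a) := by
        rw [Finset.map_add_right_Icc]
        congr 1 <;> ring
      calc ∑ m ∈ v, stmt15_res u v m • (RatFunc.X - RatFunc.C ((m : ℤ) : ℂ))⁻¹
          = ∑ m ∈ v, (if m ∈ v then stmt15_res u v m else 0) •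
              (RatFunc.X - RatFunc.C ((m : ℤ) : ℂ))⁻¹ :=
            sum_congr rfl fun m hm => by rw [if_pos hm]
        _ = ∑ m ∈ Finset.Icc (a + k) (a - 1), (if m ∈ v then stmt15_res u v m else 0) •
              (RatFunc.X - RatFunc.C ((m : ℤ) : ℂ))⁻¹ :=
            sum_subset hvsub (fun x _ hxv => by rw [if_neg hxv, zero_smul])
        _ = _ := by
            rw [hmap, sum_map]
            refine sum_congr rfl fun j hj => ?_
            rw [mem_Icc] at hj
            have hj0 : j ≠ 0 := by omega
            simp only [addRightEmbedding_apply]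
            rw [stmt15_B, if_neg hj0, if_neg (by omega : ¬ 0 < j), if_neg hj0]
            rw [add_comm j a]
            by_cases hbv : a + j ∈ v
            · rw [if_pos hbv, if_pos ⟨by omega, hbv⟩]
            · rw [if_neg hbv, if_neg (fun hh => hbv hh.2)]
  · -- 0 < k
    have hvmem : ∀ m ∈ v, b + 1 ≤ m ∧ m ≤ b + k := by
      intro m hm
      rw [hv, mem_sdiff, mem_Icc, mem_Icc] at hm
      omega
    have hbk : b + k ∈ v := by
      rw [hv, mem_sdiff, mem_Icc, mem_Icc]
      omega
    have hW : stmt15_W k = Finset.Icc 0 k := by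
      rw [stmt15_W, min_eq_right hk.le, max_eq_left hk.le]
    refine ⟨fun j => if j = 0 then 1 else if 0 < j ∧ b + j ∈ v then stmt15_res u v (b + j) else 0,
      ?_, ?_, ?_⟩
    · beta_reduce
      rw [if_neg hk0, if_pos ⟨hk, hbk⟩]
      exact stmt15_res_ne u v hdisj hbk
    · intro j hj
      have hj' : ¬(0 ≤ j ∧ j ≤ k) := by rwa [hW, mem_Icc] at hj
      beta_reduce
      rw [if_neg (by omega : ¬ j = 0), if_neg]
      rintro ⟨h1, h2⟩
      have := hvmem _ h2
      omega
    · rw [hW, hmain]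
      have hsplit : Finset.Icc (0 : ℤ) k = insert 0 (Finset.Icc 1 k) := by
        ext x
        simp only [mem_insert, mem_Icc]
        omega
      rw [hsplit, sum_insert (by simp)]
      beta_reduce
      rw [if_pos rfl, one_smul]
      have hB0 : stmt15_B a b 0 = 1 := by simp [stmt15_B]
      rw [hB0]
      congr 1
      have hvsub : v ⊆ Finset.Icc (b + 1) (b + k) := fun m hm => mem_Icc.2 (hvmem m hm)
      have hmap : Finset.Icc (b + 1) (b + k) = (Finset.Icc 1 k).map (addRightEmbedding b) := by
        rw [Finset.map_add_right_Icc]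
        congr 1 <;> ring
      calc ∑ m ∈ v, stmt15_res u v m • (RatFunc.X - RatFunc.C ((m : ℤ) : ℂ))⁻¹
          = ∑ m ∈ v, (if m ∈ v then stmt15_res u v m else 0) •
              (RatFunc.X - RatFunc.C ((m : ℤ) : ℂ))⁻¹ :=
            sum_congr rfl fun m hm => by rw [if_pos hm]
        _ = ∑ m ∈ Finset.Icc (b + 1) (b + k), (if m ∈ v then stmt15_res u v m else 0) •
              (RatFunc.X - RatFunc.C ((m : ℤ) : ℂ))⁻¹ :=
            sum_subset hvsub (fun x _ hxv => by rw [if_neg hxv, zero_smul])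
        _ = _ := by
            rw [hmap, sum_map]
            refine sum_congr rfl fun j hj => ?_
            rw [mem_Icc] at hj
            have hj0 : j ≠ 0 := by omega
            simp only [addRightEmbedding_apply]
            rw [stmt15_B, if_neg hj0, if_pos (by omega : 0 < j), if_neg hj0]
            rw [add_comm j b]
            by_cases hbv : b + j ∈ v
            · rw [if_pos hbv, if_pos ⟨by omega, hbv⟩]
            · rw [if_neg hbv, if_neg (fun hh => hbv hh.2)]

lemma stmt15_mem_W {k j : ℤ} : j ∈ stmt15_W k ↔ (0 ≤ j ∧ j ≤ k) ∨ (k ≤ j ∧ j ≤ 0) := by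
  rw [stmt15_W, mem_Icc]
  rcases le_total k 0 with h | h
  · rw [min_eq_left h, max_eq_right h]
    omega
  · rw [min_eq_right h, max_eq_left h]
    omega

def stmt15_phi (a b j : ℤ) : ℤ := if 0 < j then b + j else a + j

lemma stmt15_B_ne (a b : ℤ) {j : ℤ} (hj : j ≠ 0) :
    stmt15_B a b j = (RatFunc.X - RatFunc.C ((stmt15_phi a b j : ℤ) : ℂ))⁻¹ := by
  rw [stmt15_B, if_neg hj, stmt15_phi]
  split_ifs <;> rfl

lemma stmt15_phi_inj (a b : ℤ) (hab : a ≤ b) {i j : ℤ} (hi : i ≠ 0) (hj : j ≠ 0)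
    (h : stmt15_phi a b i = stmt15_phi a b j) : i = j := by
  rw [stmt15_phi, stmt15_phi] at h
  split_ifs at h <;> omega

lemma stmt15_indepB (a b : ℤ) (hab : a ≤ b) : LinearIndependent ℂ (stmt15_B a b) := by
  rw [linearIndependent_iff']
  intro s g hrel
  have hnz : ∀ j ∈ s.erase 0, g j = 0 := by
    intro j0 hj0
    have hj00 : j0 ≠ 0 := (mem_erase.1 hj0).1
    have hj0s : j0 ∈ s := (mem_erase.1 hj0).2
    set s' := s.erase 0 with hs'
    set D : Polynomial ℂ := ∏ i ∈ s', (X - C ((stmt15_phi a b i : ℤ) : ℂ)) with hD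
    set ψ : ℤ → Polynomial ℂ := fun j => if j = 0 then D
      else ∏ i ∈ s'.erase j, (X - C ((stmt15_phi a b i : ℤ) : ℂ)) with hψ
    have hterm : ∀ j ∈ s, stmt15_B a b j * Amap D = Amap (ψ j) := by
      intro j hj
      by_cases h0 : j = 0
      · rw [hψ]
        beta_reduce
        rw [if_pos h0, h0, stmt15_B, if_pos rfl, one_mul]
      · rw [hψ]
        beta_reduce
        rw [if_neg h0, stmt15_B_ne a b h0]
        have hDf : D = (X - C ((stmt15_phi a b j : ℤ) : ℂ)) *
            ∏ i ∈ s'.erase j, (X - C ((stmt15_phi a b i : ℤ) : ℂ)) :=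
          (mul_prod_erase _ _ (mem_erase.2 ⟨h0, hj⟩)).symm
        rw [hDf, map_mul, stmt15_A_lin]
        exact inv_mul_cancel_left₀ (stmt15_lin_ne _) _
    have hE : (∑ j ∈ s, C (g j) * ψ j) = 0 := by
      apply RatFunc.algebraMap_injective ℂ
      rw [map_zero, map_sum]
      have : ∀ j ∈ s, Amap (C (g j) * ψ j) = g j • (stmt15_B a b j * Amap D) := by
        intro j hj
        rw [hterm j hj, map_mul, RatFunc.algebraMap_C, ← RatFunc.smul_eq_C_mul]
      rw [sum_congr rfl this]
      have : (∑ j ∈ s, g j • (stmt15_B a b j * Amap D)) = (∑ j ∈ s, g j • stmt15_B a b j) * Amap D := by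
        rw [sum_mul]
        exact sum_congr rfl fun j _ => (smul_mul_assoc _ _ _).symm
      rw [this, hrel, zero_mul]
    have hev := congrArg (Polynomial.eval ((stmt15_phi a b j0 : ℤ) : ℂ)) hE
    rw [Polynomial.eval_finset_sum, eval_zero] at hev
    have hsingle : ∑ j ∈ s, ((C (g j) * ψ j).eval ((stmt15_phi a b j0 : ℤ) : ℂ))
        = g j0 * (ψ j0).eval ((stmt15_phi a b j0 : ℤ) : ℂ) := by
      rw [Finset.sum_eq_single_of_mem j0 hj0s]
      · rw [eval_mul, eval_C]
      · intro j hj hjj0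
        rw [eval_mul, eval_C]
        have : (ψ j).eval ((stmt15_phi a b j0 : ℤ) : ℂ) = 0 := by
          rw [hψ]
          beta_reduce
          by_cases h0 : j = 0
          · rw [if_pos h0, hD, eval_prod]
            exact prod_eq_zero hj0 (by simp)
          · rw [if_neg h0, eval_prod]
            exact prod_eq_zero (mem_erase.2 ⟨Ne.symm hjj0, hj0⟩) (by simp)
        rw [this, mul_zero]
    rw [hsingle] at hev
    have hprod : (ψ j0).eval ((stmt15_phi a b j0 : ℤ) : ℂ) ≠ 0 := by
      rw [hψ]
      beta_reduce
      rw [if_neg hj00, eval_prod]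
      refine prod_ne_zero_iff.2 fun i hi => ?_
      simp only [eval_sub, eval_X, eval_C]
      rw [sub_ne_zero]
      intro hcast
      have : stmt15_phi a b j0 = stmt15_phi a b i := by exact_mod_cast hcast
      have hi' := mem_erase.1 hi
      have hi0 : i ≠ 0 := (mem_erase.1 hi'.2).1
      exact hi'.1 (stmt15_phi_inj a b hab hi0 hj00 this.symm)
    exact (mul_eq_zero.1 hev).resolve_right hprod
  intro j hj
  by_cases h0 : j = 0
  · subst h0
    rw [← Finset.add_sum_erase _ _ hj] at hrel
    rw [Finset.sum_eq_zero (fun i hi => by rw [hnz i hi, zero_smul]), add_zero] at hrel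
    have hB0 : stmt15_B a b 0 = 1 := by simp [stmt15_B]
    rw [hB0] at hrel
    simpa using hrel
  · exact hnz j (mem_erase.2 ⟨h0, hj⟩)

lemma stmt15_rangeB (a b : ℤ) (hab : a ≤ b) :
    Set.range (stmt15_B a b) =
      ({1} ∪ {g : RatFunc ℂ | ∃ m : ℤ, m ∉ Finset.Icc a b ∧
        g = ((RatFunc.X : RatFunc ℂ) - RatFunc.C ((m : ℤ) : ℂ))⁻¹}) := by
  ext g
  constructor
  · rintro ⟨j, rfl⟩
    by_cases h0 : j = 0
    · left
      simp [h0, stmt15_B]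
    · right
      refine ⟨stmt15_phi a b j, ?_, stmt15_B_ne a b h0⟩
      rw [Finset.mem_Icc, stmt15_phi]
      split_ifs <;> omega
  · rintro (rfl | ⟨m, hm, rfl⟩)
    · exact ⟨0, by simp [stmt15_B]⟩
    · rw [Finset.mem_Icc] at hm
      push_neg at hm
      by_cases hmb : b < m
      · refine ⟨m - b, ?_⟩
        rw [stmt15_B_ne a b (by omega : m - b ≠ 0), stmt15_phi, if_pos (by omega)]
        norm_num
      · refine ⟨m - a, ?_⟩
        have hma : m < a := by omega
        rw [stmt15_B_ne a b (by omega : m - a ≠ 0), stmt15_phi, if_neg (by omega)]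
        norm_num

/-- For `L = {a,…,b}` with `n = b-a+1 ≥ 2` points, the functions `f_{L,k}`, `k ∈ ℤ`,
form a basis of `V_L`: they are linearly independent and span `V_L`. -/
theorem stmt_15 (a b : ℤ) (hab : a ≤ b) (hn : 2 ≤ b - a + 1) :
    LinearIndependent ℂ (fun k : ℤ => fL a b k) ∧
      Submodule.span ℂ (Set.range (fun k : ℤ => fL a b k)) = VL a b := by
  classical
  choose c hc0 hcW hce using stmt15_expand a b hab
  constructor
  · rw [linearIndependent_iff']
    intro s g hrel
    beta_reduce at hrel
    set U := s.biUnion stmt15_W with hU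
    have hWU : ∀ k ∈ s, stmt15_W k ⊆ U := fun k hk => subset_biUnion_of_mem _ hk
    have hexp : ∀ k ∈ s, fL a b k = ∑ j ∈ U, c k j • stmt15_B a b j := by
      intro k hk
      rw [hce k]
      exact sum_subset (hWU k hk) fun j _ hj => by rw [hcW k j hj, zero_smul]
    have hrel2 : ∑ j ∈ U, (∑ k ∈ s, g k * c k j) • stmt15_B a b j = 0 := by
      calc ∑ j ∈ U, (∑ k ∈ s, g k * c k j) • stmt15_B a b j
          = ∑ j ∈ U, ∑ k ∈ s, (g k * c k j) • stmt15_B a b j :=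
            sum_congr rfl fun j _ => by rw [sum_smul]
        _ = ∑ k ∈ s, ∑ j ∈ U, (g k * c k j) • stmt15_B a b j := sum_comm
        _ = ∑ k ∈ s, g k • fL a b k := by
            refine sum_congr rfl fun k hk => ?_
            rw [hexp k hk, smul_sum]
            exact sum_congr rfl fun j _ => by rw [mul_smul]
        _ = 0 := hrel
    have hcoef := linearIndependent_iff'.1 (stmt15_indepB a b hab) U _ hrel2
    intro k hk
    by_contra hgk
    obtain ⟨j, hjT, hjmax⟩ := Finset.exists_max_image (s.filter fun i => g i ≠ 0)
      (fun i => i.natAbs) ⟨k, mem_filter.2 ⟨hk, hgk⟩⟩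
    rw [mem_filter] at hjT
    have hjU : j ∈ U := hWU j hjT.1 (by rw [stmt15_mem_W]; omega)
    have hthis := hcoef j hjU
    have hsingle : ∑ i ∈ s, g i * c i j = g j * c j j := by
      refine Finset.sum_eq_single_of_mem j hjT.1 fun i hi hij => ?_
      rcases eq_or_ne (g i) 0 with h | h
      · rw [h, zero_mul]
      · have hile := hjmax i (mem_filter.2 ⟨hi, h⟩)
        rw [hcW i j (by rw [stmt15_mem_W]; omega), mul_zero]
    rw [hsingle] at hthis
    exact hjT.2 ((mul_eq_zero.1 hthis).resolve_right (hc0 j))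
  · have hVL : VL a b = Submodule.span ℂ (Set.range (stmt15_B a b)) := by
      rw [VL, ← stmt15_rangeB a b hab]
    rw [hVL]
    apply le_antisymm
    · rw [Submodule.span_le]
      rintro x ⟨k, rfl⟩
      rw [SetLike.mem_coe]
      beta_reduce
      rw [hce k]
      exact Submodule.sum_mem _ fun j _ =>
        Submodule.smul_mem _ _ (Submodule.subset_span ⟨j, rfl⟩)
    · rw [Submodule.span_le]
      rintro x ⟨j, rfl⟩
      rw [SetLike.mem_coe]
      have key : ∀ N : ℕ, ∀ j : ℤ, j.natAbs = N →
          stmt15_B a b j ∈ Submodule.span ℂ (Set.range fun k : ℤ => fL a b k) := by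
        intro N
        induction N using Nat.strong_induction_on with
        | _ N ih =>
          intro j hjN
          have hjW : j ∈ stmt15_W j := by rw [stmt15_mem_W]; omega
          have hfe := hce j
          rw [← Finset.add_sum_erase _ _ hjW] at hfe
          have hBj : stmt15_B a b j = (c j j)⁻¹ •
              (fL a b j - ∑ i ∈ (stmt15_W j).erase j, c j i • stmt15_B a b i) := by
            rw [hfe, add_sub_cancel_right, smul_smul, inv_mul_cancel₀ (hc0 j), one_smul]
          rw [hBj]
          refine Submodule.smul_mem _ _ (Submodule.sub_mem _ (Submodule.subset_span ⟨j, rfl⟩)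
            (Submodule.sum_mem _ fun i hi => Submodule.smul_mem _ _ ?_))
          have hii : i.natAbs < j.natAbs := by
            rw [mem_erase, stmt15_mem_W] at hi
            omega
          exact ih i.natAbs (by omega) i rfl
      exact key j.natAbs j rfl

end
end

section
/- For integers n ≥ 2 and m ≥ 1, the partial fraction identity 1/(t-n-m) = -1/(m+n-1) + (n-1)/((m)_n) · ∑_{k=1}^m (m-k+1)_{n-2} · (t-1)(t-2)⋯(t-n) / ((t-1-k)(t-2-k)⋯(t-n-k)) holds as an identity of rational functions in t. -/
open Finset

lemma myprod {M : Type*} [CommMonoid M] (f : ℕ → M) (b : ℕ) :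
    ∏ i ∈ Icc 1 b, f i = ∏ i ∈ range b, f (1+i) := by
  induction b with
  | zero => simp
  | succ b ih => rw [Finset.prod_Icc_succ_top (by omega), ih, Finset.prod_range_succ, Nat.add_comm 1 b]

lemma mytel {M : Type*} [AddCommGroup M] (T : ℕ → M) (m : ℕ) :
    ∑ k ∈ Icc 1 m, (T k - T (k+1)) = T 1 - T (m+1) := by
  induction m with
  | zero => simp
  | succ b ih => rw [Finset.sum_Icc_succ_top (by omega), ih]; abel

lemma XC_ne (c : ℚ) : (RatFunc.X : RatFunc ℚ) - RatFunc.C c ≠ 0 := by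
  have h : (RatFunc.X : RatFunc ℚ) - RatFunc.C c
      = algebraMap (Polynomial ℚ) _ (Polynomial.X - Polynomial.C c) := by
    simp [RatFunc.algebraMap_X, RatFunc.algebraMap_C]
  rw [h]
  exact RatFunc.algebraMap_ne_zero (Polynomial.X_sub_C_ne_zero c)

lemma prodXC_ne (s : Finset ℕ) (g : ℕ → ℚ) :
    (∏ i ∈ s, ((RatFunc.X : RatFunc ℚ) - RatFunc.C (g i))) ≠ 0 :=
  Finset.prod_ne_zero_iff.mpr fun i _ => XC_ne (g i)

/-- scalar rising factorial: pull out bottom -/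
lemma rise_bot (p : ℕ) (x : ℚ) :
    (∏ j ∈ range (p+1), (x+j)) = x * ∏ j ∈ range p, (x+1+j) := by
  rw [Finset.prod_range_succ']
  push_cast
  rw [add_zero, mul_comm]
  exact congrArg (x * ·) (Finset.prod_congr rfl fun i _ => by push_cast; ring)


noncomputable def Pr (p : ℕ) : RatFunc ℚ :=
  ∏ i ∈ range (p+2), (RatFunc.X - RatFunc.C (1+(i:ℚ)))
noncomputable def Qr (p k : ℕ) : RatFunc ℚ :=
  ∏ i ∈ range (p+2), (RatFunc.X - RatFunc.C (1+(i:ℚ)+k))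
noncomputable def Sr (p k : ℕ) : RatFunc ℚ :=
  ∏ i ∈ range (p+1), (RatFunc.X - RatFunc.C (1+(i:ℚ)+k))
noncomputable def Tr (p m k : ℕ) : RatFunc ℚ :=
  RatFunc.C ((∏ j ∈ range (p+1), ((m:ℚ)-k+1+j)) / (p+1)) * Pr p /
    ((RatFunc.X - RatFunc.C ((m:ℚ)+p+2)) * Sr p k)

lemma Qr_top (p k : ℕ) :
    Qr p k = Sr p k * (RatFunc.X - RatFunc.C ((p:ℚ)+2+k)) := by
  rw [Qr, Finset.prod_range_succ, Sr]
  congr 2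
  push_cast; ring

lemma Qr_bot (p k : ℕ) :
    Qr p k = (RatFunc.X - RatFunc.C (1+(k:ℚ))) * Sr p (k+1) := by
  rw [Qr, Finset.prod_range_succ']
  have h1 : ∏ i ∈ range (p+1), (RatFunc.X - RatFunc.C (1+((i+1:ℕ):ℚ)+k)) = Sr p (k+1) :=
    Finset.prod_congr rfl fun i _ => by congr 1; push_cast; ring
  have h2 : (RatFunc.X - RatFunc.C (1+((0:ℕ):ℚ)+k)) = RatFunc.X - RatFunc.C (1+(k:ℚ)) := by
    norm_num
  rw [h1, h2, mul_comm]

lemma key_scal (p m k : ℕ) :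
    RatFunc.C ((∏ j ∈ range (p+1), ((m:ℚ)-k+1+j)) / (p+1)) * (RatFunc.X - RatFunc.C ((p:ℚ)+2+k))
      - RatFunc.C ((∏ j ∈ range (p+1), ((m:ℚ)-(k+1:ℕ)+1+j)) / (p+1)) * (RatFunc.X - RatFunc.C (1+(k:ℚ)))
    = RatFunc.C (∏ j ∈ range p, ((m:ℚ)-k+1+j)) * (RatFunc.X - RatFunc.C ((m:ℚ)+p+2)) := by
  have hp : ((p:ℚ)+1) ≠ 0 := by positivity
  set x : ℚ := (m:ℚ) - k with hx
  have e1 : (∏ j ∈ range (p+1), ((m:ℚ)-k+1+j)) = (∏ j ∈ range p, (x+1+j)) * (x+1+p) := by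
    rw [Finset.prod_range_succ]
  have e2 : (∏ j ∈ range (p+1), ((m:ℚ)-(k+1:ℕ)+1+j)) = x * ∏ j ∈ range p, (x+1+j) := by
    rw [show (∏ j ∈ range (p+1), ((m:ℚ)-(k+1:ℕ)+1+j)) = ∏ j ∈ range (p+1), (x+j) from
      Finset.prod_congr rfl fun j _ => by push_cast; ring]
    exact rise_bot p x
  have e3 : (∏ j ∈ range p, ((m:ℚ)-k+1+j)) = ∏ j ∈ range p, (x+1+j) := by
    exact Finset.prod_congr rfl fun j _ => by push_cast; ring
  rw [e1, e2, e3]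
  set A : ℚ := ∏ j ∈ range p, (x+1+j) with hA
  have h1 : RatFunc.C (A*(x+1+p)/(p+1)) - RatFunc.C (x*A/(p+1)) = RatFunc.C A := by
    rw [← map_sub]
    congr 1
    field_simp
    ring
  have h2 : RatFunc.C (A*(x+1+p)/(p+1)) * RatFunc.C ((p:ℚ)+2+k) - RatFunc.C (x*A/(p+1)) * RatFunc.C (1+(k:ℚ))
      = RatFunc.C A * RatFunc.C ((m:ℚ)+p+2) := by
    rw [← map_mul, ← map_mul, ← map_mul, ← map_sub]
    congr 1
    have hxm : x + k = (m:ℚ) := by rw [hx]; ring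
    field_simp
    linear_combination (A*(p+1)) * hxm
  linear_combination RatFunc.X * h1 - h2

lemma term_eq (p m k : ℕ) :
    RatFunc.C (∏ j ∈ range p, ((m:ℚ)-k+1+j)) * (Pr p / Qr p k) = Tr p m k - Tr p m (k+1) := by
  have hD := XC_ne ((m:ℚ)+p+2)
  have hSk : Sr p k ≠ 0 := by rw [Sr]; exact prodXC_ne _ _
  have hSk1 : Sr p (k+1) ≠ 0 := by rw [Sr]; exact prodXC_ne _ _
  have hQ : Qr p k ≠ 0 := by rw [Qr]; exact prodXC_ne _ _
  rw [Tr, Tr, div_sub_div _ _ (mul_ne_zero hD hSk) (mul_ne_zero hD hSk1), ← mul_div_assoc,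
    div_eq_div_iff hQ (mul_ne_zero (mul_ne_zero hD hSk) (mul_ne_zero hD hSk1))]
  linear_combination
    (-(RatFunc.C ((∏ j ∈ range (p+1), ((m:ℚ)-k+1+j)) / (p+1)) * Pr p *
        (RatFunc.X - RatFunc.C ((m:ℚ)+p+2)) * Sr p (k+1))) * Qr_top p k +
    (RatFunc.C ((∏ j ∈ range (p+1), ((m:ℚ)-(k+1:ℕ)+1+j)) / (p+1)) * Pr p *
        (RatFunc.X - RatFunc.C ((m:ℚ)+p+2)) * Sr p k) * Qr_bot p k +
    (-(Pr p * (RatFunc.X - RatFunc.C ((m:ℚ)+p+2)) * Sr p k * Sr p (k+1))) * key_scal p m k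

lemma Tr_end (p m : ℕ) : Tr p m (m+1) = 0 := by
  rw [Tr]
  have : (∏ j ∈ range (p+1), ((m:ℚ)-((m+1:ℕ):ℚ)+1+j)) = 0 :=
    Finset.prod_eq_zero (Finset.mem_range.mpr (Nat.succ_pos p)) (by push_cast; ring)
  rw [this, zero_div, map_zero, zero_mul, zero_div]

lemma Tr_one (p m : ℕ) :
    Tr p m 1 = RatFunc.C ((∏ j ∈ range (p+1), ((m:ℚ)+j)) / (p+1)) *
      ((RatFunc.X - RatFunc.C 1) / (RatFunc.X - RatFunc.C ((m:ℚ)+p+2))) := by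
  rw [Tr]
  have hc : (∏ j ∈ range (p+1), ((m:ℚ)-(1:ℕ)+1+j)) = ∏ j ∈ range (p+1), ((m:ℚ)+j) :=
    Finset.prod_congr rfl fun j _ => by push_cast; ring
  have hP : Pr p = Sr p 1 * (RatFunc.X - RatFunc.C 1) := by
    rw [Pr, Finset.prod_range_succ', Sr]
    have h1 : ∏ i ∈ range (p+1), (RatFunc.X - RatFunc.C (1+((i+1:ℕ):ℚ))) =
        ∏ i ∈ range (p+1), (RatFunc.X - RatFunc.C (1+(i:ℚ)+(1:ℕ))) :=
      Finset.prod_congr rfl fun i _ => by congr 1; push_cast; ring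
    have h2 : (RatFunc.X - RatFunc.C (1+((0:ℕ):ℚ))) = RatFunc.X - RatFunc.C 1 := by norm_num
    rw [h1, h2]
  have hS : Sr p 1 ≠ 0 := by rw [Sr]; exact prodXC_ne _ _
  have hD := XC_ne ((m:ℚ)+p+2)
  rw [hc, hP, mul_comm (RatFunc.X - RatFunc.C ((m:ℚ)+p+2)) (Sr p 1), mul_comm (Sr p 1) (RatFunc.X - RatFunc.C 1), ← mul_assoc, mul_div_assoc]
  have hcan : Sr p 1 / (Sr p 1 * (RatFunc.X - RatFunc.C ((m:ℚ)+p+2))) =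
      (RatFunc.X - RatFunc.C ((m:ℚ)+p+2))⁻¹ := by
    rw [eq_comm, inv_eq_one_div, div_eq_div_iff hD (mul_ne_zero hS hD)]
    ring
  rw [hcan]
  ring

/-- For integers `n ≥ 2`, `m ≥ 1`, the partial fraction identity
`1/(t-n-m) = -1/(m+n-1) + (n-1)/((m)_n) · ∑_{k=1}^m (m-k+1)_{n-2} ·
  (t-1)⋯(t-n)/((t-1-k)⋯(t-n-k))` as rational functions in `t` over `ℚ`,
where `(x)_r` denotes the rising factorial. -/
theorem stmt_16 (n m : ℕ) (hn : 2 ≤ n) (hm : 1 ≤ m) :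
    ((RatFunc.X : RatFunc ℚ) - RatFunc.C ((n : ℚ) + m))⁻¹ =
      -RatFunc.C (((m : ℚ) + n - 1)⁻¹) +
        RatFunc.C (((n : ℚ) - 1) / ∏ j ∈ Finset.range n, ((m : ℚ) + j)) *
          ∑ k ∈ Finset.Icc 1 m,
            RatFunc.C (∏ j ∈ Finset.range (n - 2), ((m : ℚ) - k + 1 + j)) *
              ((∏ j ∈ Finset.Icc 1 n, ((RatFunc.X : RatFunc ℚ) - RatFunc.C (j : ℚ))) /
                ∏ j ∈ Finset.Icc 1 n, ((RatFunc.X : RatFunc ℚ) - RatFunc.C ((j : ℚ) + k))) := by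
  obtain ⟨p, rfl⟩ : ∃ p, n = p + 2 := ⟨n - 2, by omega⟩
  simp only [Nat.add_sub_cancel]
  have hP : (∏ j ∈ Finset.Icc 1 (p+2), ((RatFunc.X : RatFunc ℚ) - RatFunc.C (j : ℚ))) = Pr p := by
    rw [myprod, Pr]
    exact Finset.prod_congr rfl fun i _ => by congr 1; push_cast; ring
  have hQ : ∀ k : ℕ, (∏ j ∈ Finset.Icc 1 (p+2), ((RatFunc.X : RatFunc ℚ) - RatFunc.C ((j : ℚ) + k))) = Qr p k := by
    intro k
    rw [myprod, Qr]
    exact Finset.prod_congr rfl fun i _ => by congr 1; push_cast; ring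
  have hsum : ∑ k ∈ Finset.Icc 1 m,
      RatFunc.C (∏ j ∈ Finset.range p, ((m : ℚ) - k + 1 + j)) *
        ((∏ j ∈ Finset.Icc 1 (p+2), ((RatFunc.X : RatFunc ℚ) - RatFunc.C (j : ℚ))) /
          ∏ j ∈ Finset.Icc 1 (p+2), ((RatFunc.X : RatFunc ℚ) - RatFunc.C ((j : ℚ) + k)))
      = Tr p m 1 := by
    rw [Finset.sum_congr rfl (fun k _ => by rw [hP, hQ k, term_eq p m k]), mytel, Tr_end, sub_zero]
  rw [hsum, Tr_one, ← mul_assoc, ← map_mul,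
    show ((p+2:ℕ):ℚ) + m = (m:ℚ)+p+2 from by push_cast; ring]
  have hA : (∏ j ∈ Finset.range (p+1), ((m:ℚ) + j)) ≠ 0 :=
    Finset.prod_ne_zero_iff.mpr fun j _ => by
      have : (1:ℚ) ≤ (m:ℚ) := by exact_mod_cast hm
      positivity
  have hmp : ((m:ℚ)+p+1) ≠ 0 := by positivity
  have hp1 : ((p:ℚ)+1) ≠ 0 := by positivity
  have hu : ((↑(p+2)-1) / ∏ j ∈ Finset.range (p+2), ((m:ℚ) + j)) *
      ((∏ j ∈ Finset.range (p+1), ((m:ℚ) + j)) / (↑p + 1)) = ((m:ℚ)+p+1)⁻¹ := by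
    rw [Finset.prod_range_succ]
    push_cast
    field_simp
    ring
  have hv : ((m:ℚ) + ↑(p+2) - 1)⁻¹ = ((m:ℚ)+p+1)⁻¹ := by congr 1; push_cast; ring
  rw [hu, hv]
  have hD := XC_ne ((m:ℚ)+p+2)

  apply inv_eq_of_mul_eq_one_right
  have hcan : (RatFunc.X - RatFunc.C ((m:ℚ)+p+2)) * (RatFunc.C ((((m:ℚ)+p+1))⁻¹) *
      ((RatFunc.X - RatFunc.C 1) / (RatFunc.X - RatFunc.C ((m:ℚ)+p+2)))) =
      RatFunc.C ((((m:ℚ)+p+1))⁻¹) * (RatFunc.X - RatFunc.C 1) := by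
    rw [mul_comm, mul_assoc, div_mul_cancel₀ _ hD]
  rw [mul_add, hcan]
  have hc : RatFunc.C ((((m:ℚ)+p+1))⁻¹) * RatFunc.C (((m:ℚ)+p+2) - 1) = 1 := by
    rw [← map_mul, ← map_one RatFunc.C]
    congr 1
    field_simp
    ring
  have hs := map_sub RatFunc.C ((m:ℚ)+p+2) 1
  linear_combination hc - RatFunc.C ((((m:ℚ)+p+1))⁻¹) * hs
end

section
/- Let ν = (ν_1 ≥ … ≥ ν_N) ∈ ℤ^N, and let ν = (ν^+, ν^-) be its decomposition into positive and negative parts with modified Frobenius coordinates a_i^± = p_i^± + 1/2, b_i^± = q_i^± + 1/2 of the Young diagrams ν^±. Setting ṽ_i = ν_i + (N+1)/2 - i, one has the identity of rational functions in s: ∏_{i=1}^N (s - (N+1)/2 + i)/(s - ṽ_i) = ∏_{i=1}^{d^+} (s - N/2 + b_i^+)/(s - N/2 - a_i^+) · ∏_{i=1}^{d^-} (s + N/2 - b_i^-)/(s + N/2 + a_i^-). -/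
/-- `λ'_{i+1}`, the `(i+1)`-st part (0-based `i`) of the transposed Young diagram of
`λ`, where `λ j` is the `(j+1)`-st part of `λ`. -/
noncomputable def conjPart (lam : ℕ → ℕ) (i : ℕ) : ℕ := Nat.card {j : ℕ | i + 1 ≤ lam j}

/-- `d(λ)`, the number of diagonal boxes of the Young diagram `λ`. -/
noncomputable def frobLen (lam : ℕ → ℕ) : ℕ := Nat.card {i : ℕ | i + 1 ≤ lam i}

/-- The modified Frobenius coordinate `a_{i+1} = λ_{i+1} - (i+1) + 1/2` (0-based `i`). -/
noncomputable def aCoord (lam : ℕ → ℕ) (i : ℕ) : ℚ := (lam i : ℚ) - i - 1 / 2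

/-- The modified Frobenius coordinate `b_{i+1} = λ'_{i+1} - (i+1) + 1/2` (0-based `i`). -/
noncomputable def bCoord (lam : ℕ → ℕ) (i : ℕ) : ℚ := (conjPart lam i : ℚ) - i - 1 / 2

/-- The Young diagram `ν⁺` of positive parts of a signature `ν` (padded by zeros). -/
def posPart (N : ℕ) (ν : Fin N → ℤ) : ℕ → ℕ :=
  fun i => if h : i < N then (ν ⟨i, h⟩).toNat else 0

/-- The Young diagram `ν⁻` of negated negative parts of a signature `ν`
(padded by zeros). -/
def negPart (N : ℕ) (ν : Fin N → ℤ) : ℕ → ℕ :=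
  fun i => if h : i < N then (-(ν ⟨N - 1 - i, by omega⟩)).toNat else 0


lemma lowerCard (P : ℕ → Prop) (N : ℕ) (hlow : ∀ i j : ℕ, j ≤ i → P i → P j)
    (hbd : ∀ i, N ≤ i → ¬ P i) (i : ℕ) : P i ↔ i < Nat.card {i | P i} := by
  classical
  have hfin : {i | P i}.Finite := by
    apply Set.Finite.subset (Set.finite_Iio N)
    intro x hx
    simp only [Set.mem_Iio]
    by_contra h
    exact hbd x (le_of_not_gt h) hx
  have hcard : Nat.card {i | P i} = hfin.toFinset.card := by
    rw [Nat.card_coe_set_eq, Set.ncard_eq_toFinset_card _ hfin]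
  rw [hcard]
  constructor
  · intro hPi
    have hsub : Finset.range (i + 1) ⊆ hfin.toFinset := by
      intro j hj
      simp only [Finset.mem_range] at hj
      simp only [Set.Finite.mem_toFinset, Set.mem_setOf_eq]
      exact hlow i j (by omega) hPi
    have := Finset.card_le_card hsub
    simpa using this
  · intro hlt
    by_contra hP
    have hsub : hfin.toFinset ⊆ Finset.range i := by
      intro j hj
      simp only [Set.Finite.mem_toFinset, Set.mem_setOf_eq] at hj
      simp only [Finset.mem_range]
      by_contra h
      exact hP (hlow j i (by omega) hj)
    have := Finset.card_le_card hsub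
    simp only [Finset.card_range] at this
    omega


section
variable (lam : ℕ → ℕ) (N : ℕ)

lemma F1 (hmono : ∀ i j : ℕ, i ≤ j → lam j ≤ lam i) (hsupp : ∀ i, N ≤ i → lam i = 0)
    (i : ℕ) : i < frobLen lam ↔ i + 1 ≤ lam i := by
  exact (lowerCard (fun i => i + 1 ≤ lam i) N
    (fun a b hba ha => le_trans (by omega) (le_trans ha (hmono b a hba)))
    (fun a ha => by have := hsupp a ha; omega) i).symm

lemma F2 (hmono : ∀ i j : ℕ, i ≤ j → lam j ≤ lam i) (hsupp : ∀ i, N ≤ i → lam i = 0)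
    (j i : ℕ) : i < conjPart lam j ↔ j + 1 ≤ lam i := by
  exact (lowerCard (fun i => j + 1 ≤ lam i) N
    (fun a b hba ha => le_trans ha (hmono b a hba))
    (fun a ha => by have := hsupp a ha; omega) i).symm
end


lemma frob_prod {M : Type*} [CommMonoid M] (h : ℤ → M) (lam : ℕ → ℕ) (N : ℕ)
    (hmono : ∀ i j : ℕ, i ≤ j → lam j ≤ lam i) (hsupp : ∀ i, N ≤ i → lam i = 0) :
    (∏ i ∈ Finset.range N, h ((lam i : ℤ) - i - 1)) *
      ∏ j ∈ Finset.range (frobLen lam), h ((j : ℤ) - (conjPart lam j : ℤ))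
    = (∏ i ∈ Finset.range N, h (-(i : ℤ) - 1)) *
      ∏ j ∈ Finset.range (frobLen lam), h ((lam j : ℤ) - j - 1) := by
  classical
  have f1 := F1 lam N hmono hsupp
  have f2 := F2 lam N hmono hsupp
  set d := frobLen lam with hd
  have hdN : d ≤ N := by
    have := f1 N
    have := hsupp N le_rfl
    omega
  have hcN : ∀ j, conjPart lam j ≤ N := by
    intro j
    have := f2 j N
    have := hsupp N le_rfl
    omega
  -- injectivity of the four maps
  have hcast : ∀ a b : ℕ, a ≤ b → (lam b : ℤ) ≤ (lam a : ℤ) := fun a b hab => by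
    exact_mod_cast hmono a b hab
  have hi1 : Set.InjOn (fun i : ℕ => (lam i : ℤ) - i - 1) (Finset.range N) := by
    intro a _ b _ hab
    simp only at hab
    rcases Nat.lt_or_ge a b with hlt | hge
    · have := hcast a b hlt.le; omega
    · rcases Nat.lt_or_ge b a with hlt | hge'
      · have := hcast b a hlt.le; omega
      · omega
  have hi2 : Set.InjOn (fun j : ℕ => (j : ℤ) - (conjPart lam j : ℤ)) (Finset.range d) := by
    intro a _ b _ hab
    simp only at hab
    have hmc : ∀ a b : ℕ, a ≤ b → conjPart lam b ≤ conjPart lam a := by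
      intro a b hab
      have h1 := f2 b (conjPart lam a)
      have h2 := f2 a (conjPart lam a)
      omega
    rcases Nat.lt_or_ge a b with hlt | hge
    · have := hmc a b hlt.le; omega
    · rcases Nat.lt_or_ge b a with hlt | hge'
      · have := hmc b a hlt.le; omega
      · omega
  have hi3 : Set.InjOn (fun i : ℕ => -(i : ℤ) - 1) (Finset.range N) := by
    intro a _ b _ hab; simp only at hab; omega
  have hi4 : Set.InjOn (fun j : ℕ => (lam j : ℤ) - j - 1) (Finset.range d) := by
    intro a ha b hb hab
    exact hi1 (by simp only [Finset.coe_range, Set.mem_Iio] at *; omega)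
      (by simp only [Finset.coe_range, Set.mem_Iio] at *; omega) hab
  rw [show (∏ i ∈ Finset.range N, h ((lam i : ℤ) - i - 1))
      = ∏ c ∈ (Finset.range N).image (fun i : ℕ => (lam i : ℤ) - i - 1), h c from
      (Finset.prod_image fun x hx y hy => hi1 hx hy).symm,
    show (∏ j ∈ Finset.range d, h ((j : ℤ) - (conjPart lam j : ℤ)))
      = ∏ c ∈ (Finset.range d).image (fun j : ℕ => (j : ℤ) - (conjPart lam j : ℤ)), h c from
      (Finset.prod_image fun x hx y hy => hi2 hx hy).symm,
    show (∏ i ∈ Finset.range N, h (-(i : ℤ) - 1))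
      = ∏ c ∈ (Finset.range N).image (fun i : ℕ => -(i : ℤ) - 1), h c from
      (Finset.prod_image fun x hx y hy => hi3 hx hy).symm,
    show (∏ j ∈ Finset.range d, h ((lam j : ℤ) - j - 1))
      = ∏ c ∈ (Finset.range d).image (fun j : ℕ => (lam j : ℤ) - j - 1), h c from
      (Finset.prod_image fun x hx y hy => hi4 hx hy).symm,
    ← Finset.prod_union, ← Finset.prod_union]
  · congr 1
    ext c
    simp only [Finset.mem_union, Finset.mem_image, Finset.mem_range]
    constructor
    · rintro (⟨i, hi, rfl⟩ | ⟨j, hj, rfl⟩)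
      · by_cases hdi : i + 1 ≤ lam i
        · exact Or.inr ⟨i, (f1 i).mpr hdi, rfl⟩
        · exact Or.inl ⟨i - lam i, by omega, by omega⟩
      · have h1 : j < conjPart lam j := (f2 j j).mpr ((f1 j).mp hj)
        have h2 := hcN j
        exact Or.inl ⟨conjPart lam j - j - 1, by omega, by omega⟩
    · rintro (⟨i, hi, rfl⟩ | ⟨j, hj, rfl⟩)
      · -- the complementarity case: c = -i-1
        set g := Nat.card {k : ℕ | k + 1 ≤ lam k + i} with hg
        have hchar : ∀ k, k + 1 ≤ lam k + i ↔ k < g := by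
          intro k
          exact lowerCard (fun k => k + 1 ≤ lam k + i) N
            (fun a b hba ha => by have := hmono b a hba; omega)
            (fun a ha => by have := hsupp a ha; omega) k
        have hgN : g ≤ N := by have := hchar N; have := hsupp N le_rfl; omega
        have hng : lam g + i ≤ g := by have := hchar g; omega
        by_cases hA : g < N ∧ lam g + i = g
        · exact Or.inl ⟨g, hA.1, by omega⟩
        · -- c ∈ B with j0 = g - i - 1
          have hgi : i + 1 ≤ g := by
            rcases Nat.lt_or_ge g N with hlt | hge
            · have : lam g + i ≠ g := fun hh => hA ⟨hlt, hh⟩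
              omega
            · omega
          have hlow : ∀ k, k < g → g ≤ lam k + i := by
            intro k hk
            have hp := (hchar (g - 1)).mpr (by omega)
            have := hmono k (g - 1) (by omega)
            omega
          have hup : ∀ k, g ≤ k → lam k + i + 1 ≤ g := by
            intro k hk
            rcases Nat.lt_or_ge g N with hlt | hge
            · have : lam g + i ≠ g := fun hh => hA ⟨hlt, hh⟩
              have := hmono g k hk
              omega
            · have : lam k = 0 := hsupp k (by omega)
              omega
          have hconj : conjPart lam (g - i - 1) = g := by
            have hval : ∀ k, k < conjPart lam (g - i - 1) ↔ k < g := by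
              intro k
              rw [f2]
              constructor
              · intro hk
                by_contra hkg
                have := hup k (by omega)
                omega
              · intro hk
                have := hlow k hk
                omega
            have h1 := hval (conjPart lam (g - i - 1))
            have h2 := hval g
            omega
          refine Or.inr ⟨g - i - 1, ?_, by rw [hconj]; omega⟩
          rw [f1]
          have := hlow (g - i - 1) (by omega)
          omega
      · exact Or.inl ⟨j, by omega, rfl⟩
  · -- disjointness (right side)
    rw [Finset.disjoint_left]
    intro c hc1 hc2
    simp only [Finset.mem_image, Finset.mem_range] at hc1 hc2
    obtain ⟨i, hi, rfl⟩ := hc1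
    obtain ⟨j, hj, he⟩ := hc2
    have := (f1 j).mp hj
    omega
  · -- disjointness (left side)
    rw [Finset.disjoint_left]
    intro c hc1 hc2
    simp only [Finset.mem_image, Finset.mem_range] at hc1 hc2
    obtain ⟨i, hi, rfl⟩ := hc1
    obtain ⟨j, hj, he⟩ := hc2
    have h1 := (f1 j).mp hj
    have h2 := f2 j i
    omega


lemma split_prod {M : Type*} [CommMonoid M] (h : ℤ → M) (N : ℕ) (ν : Fin N → ℤ) :
    (∏ i : Fin N, h ((ν i : ℤ) - (i : ℕ) - 1)) * ∏ i : Fin N, h (-((i : ℕ) : ℤ) - 1)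
    = (∏ i : Fin N, h ((posPart N ν i : ℤ) - (i : ℕ) - 1)) *
      ∏ i : Fin N, h (((i : ℕ) : ℤ) - (negPart N ν i : ℤ) - N) := by
  have hrev : (∏ i : Fin N, h (((i : ℕ) : ℤ) - (negPart N ν i : ℤ) - N))
      = ∏ i : Fin N, h (-((i : ℕ) : ℤ) - 1 - ((-(ν i)).toNat : ℤ)) := by
    rw [← Equiv.prod_comp Fin.revPerm
      (fun i : Fin N => h (((i : ℕ) : ℤ) - (negPart N ν i : ℤ) - N))]
    refine Finset.prod_congr rfl fun i _ => ?_
    have hiN : (i : ℕ) < N := i.isLt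
    have hv : (Fin.revPerm i : ℕ) = N - 1 - (i : ℕ) := by
      simp [Fin.revPerm, Fin.val_rev]; omega
    congr 1
    have hneg : negPart N ν (Fin.revPerm i : ℕ) = (-(ν i)).toNat := by
      have hlt : (Fin.revPerm i : ℕ) < N := by omega
      unfold _root_.negPart; rw [dif_pos hlt]
      congr 2
      exact congrArg ν (Fin.ext (show N - 1 - (Fin.revPerm i : ℕ) = (i : ℕ) by rw [hv]; omega))
    rw [hneg, hv]
    omega
  rw [hrev, ← Finset.prod_mul_distrib, ← Finset.prod_mul_distrib]
  refine Finset.prod_congr rfl fun i _ => ?_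
  have hpos : posPart N ν (i : ℕ) = (ν i).toNat := by
    unfold _root_.posPart; rw [dif_pos i.isLt]
  rw [hpos]
  rcases le_or_gt 0 (ν i) with hp | hn
  · exact congrArg₂ (· * ·) (congrArg h (by omega)) (congrArg h (by omega))
  · rw [mul_comm]
    exact congrArg₂ (· * ·) (congrArg h (by omega)) (congrArg h (by omega))


noncomputable def hfac (N : ℕ) (m : ℤ) : RatFunc ℚ :=
  RatFunc.X - RatFunc.C (((N : ℚ) + 1) / 2 + (m : ℚ))

lemma hfac_ne (N : ℕ) (m : ℤ) : hfac N m ≠ 0 := by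
  unfold hfac
  rw [← RatFunc.algebraMap_X, ← RatFunc.algebraMap_C, ← map_sub]
  exact RatFunc.algebraMap_ne_zero (Polynomial.X_sub_C_ne_zero _)

lemma XCsub (x y : ℚ) : (RatFunc.X : RatFunc ℚ) - RatFunc.C x + RatFunc.C y
    = RatFunc.X - RatFunc.C (x - y) := by rw [map_sub]; ring
lemma XCadd (x y : ℚ) : (RatFunc.X : RatFunc ℚ) - RatFunc.C x - RatFunc.C y
    = RatFunc.X - RatFunc.C (x + y) := by rw [map_add]; ring
lemma XCsub' (x y : ℚ) : (RatFunc.X : RatFunc ℚ) + RatFunc.C x - RatFunc.C y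
    = RatFunc.X - RatFunc.C (y - x) := by rw [map_sub]; ring
lemma XCadd' (x y : ℚ) : (RatFunc.X : RatFunc ℚ) + RatFunc.C x + RatFunc.C y
    = RatFunc.X - RatFunc.C (-x - y) := by rw [map_sub, map_neg]; ring


/-- For a signature `ν = (ν_1 ≥ … ≥ ν_N)` with `ν = (ν⁺, ν⁻)` and modified Frobenius
coordinates `a_i^±, b_i^±` of `ν^±`, setting `ṽ_i = ν_i + (N+1)/2 - i`, one has the
identity of rational functions in `s`:
`∏_{i=1}^N (s - (N+1)/2 + i)/(s - ṽ_i)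
  = ∏_{i=1}^{d⁺} (s - N/2 + b_i⁺)/(s - N/2 - a_i⁺) ·
    ∏_{i=1}^{d⁻} (s + N/2 - b_i⁻)/(s + N/2 + a_i⁻)`. -/
theorem stmt_17 (N : ℕ) (ν : Fin N → ℤ) (hν : ∀ i j : Fin N, i ≤ j → ν j ≤ ν i) :
    (∏ i : Fin N,
        ((RatFunc.X : RatFunc ℚ) - RatFunc.C (((N : ℚ) + 1) / 2 - ((i.val : ℚ) + 1)))) /
      (∏ i : Fin N,
        ((RatFunc.X : RatFunc ℚ) -
          RatFunc.C ((ν i : ℚ) + ((N : ℚ) + 1) / 2 - ((i.val : ℚ) + 1)))) =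
    ((∏ i ∈ Finset.range (frobLen (posPart N ν)),
        ((RatFunc.X : RatFunc ℚ) - RatFunc.C ((N : ℚ) / 2) +
          RatFunc.C (bCoord (posPart N ν) i))) /
      (∏ i ∈ Finset.range (frobLen (posPart N ν)),
        ((RatFunc.X : RatFunc ℚ) - RatFunc.C ((N : ℚ) / 2) -
          RatFunc.C (aCoord (posPart N ν) i)))) *
    ((∏ i ∈ Finset.range (frobLen (negPart N ν)),
        ((RatFunc.X : RatFunc ℚ) + RatFunc.C ((N : ℚ) / 2) -
          RatFunc.C (bCoord (negPart N ν) i))) /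
      (∏ i ∈ Finset.range (frobLen (negPart N ν)),
        ((RatFunc.X : RatFunc ℚ) + RatFunc.C ((N : ℚ) / 2) +
          RatFunc.C (aCoord (negPart N ν) i)))) := by
  classical
  set lamP := posPart N ν with hlamP
  set lamN := negPart N ν with hlamN
  have hmonoP : ∀ i j : ℕ, i ≤ j → lamP j ≤ lamP i := by
    intro i j hij
    unfold lamP
    unfold _root_.posPart
    by_cases hj : j < N
    · have hi : i < N := lt_of_le_of_lt hij hj
      rw [dif_pos hi, dif_pos hj]
      exact Int.toNat_le_toNat (hν ⟨i, hi⟩ ⟨j, hj⟩ hij)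
    · rw [dif_neg hj]; exact Nat.zero_le _
  have hsuppP : ∀ i, N ≤ i → lamP i = 0 := by
    intro i hi
    unfold lamP
    unfold _root_.posPart
    rw [dif_neg (by omega)]
  have hmonoN : ∀ i j : ℕ, i ≤ j → lamN j ≤ lamN i := by
    intro i j hij
    unfold lamN
    unfold _root_.negPart
    by_cases hj : j < N
    · have hi : i < N := lt_of_le_of_lt hij hj
      rw [dif_pos hi, dif_pos hj]
      apply Int.toNat_le_toNat
      have := hν ⟨N - 1 - j, by omega⟩ ⟨N - 1 - i, by omega⟩ (by simp [Fin.mk_le_mk]; omega)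
      omega
    · rw [dif_neg hj]; exact Nat.zero_le _
  have hsuppN : ∀ i, N ≤ i → lamN i = 0 := by
    intro i hi
    unfold lamN
    unfold _root_.negPart
    rw [dif_neg (by omega)]
  set dP := frobLen lamP with hdP
  set dN := frobLen lamN with hdN
  -- convert the six products into `hfac` form
  have eP1 : (∏ i : Fin N,
      ((RatFunc.X : RatFunc ℚ) - RatFunc.C (((N : ℚ) + 1) / 2 - ((i.val : ℚ) + 1))))
      = ∏ i : Fin N, hfac N (-((i : ℕ) : ℤ) - 1) :=
    Finset.prod_congr rfl fun i _ => by unfold hfac; congr 1; push_cast; ring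
  have eP2 : (∏ i : Fin N,
      ((RatFunc.X : RatFunc ℚ) -
        RatFunc.C ((ν i : ℚ) + ((N : ℚ) + 1) / 2 - ((i.val : ℚ) + 1))))
      = ∏ i : Fin N, hfac N ((ν i : ℤ) - (i : ℕ) - 1) :=
    Finset.prod_congr rfl fun i _ => by unfold hfac; congr 1; push_cast; ring
  have eB1 : (∏ i ∈ Finset.range dP,
      ((RatFunc.X : RatFunc ℚ) - RatFunc.C ((N : ℚ) / 2) + RatFunc.C (bCoord lamP i)))
      = ∏ j ∈ Finset.range dP, hfac N ((j : ℤ) - (conjPart lamP j : ℤ)) :=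
    Finset.prod_congr rfl fun i _ => by
      rw [XCsub]; unfold hfac bCoord; congr 1; push_cast; ring
  have eB2 : (∏ i ∈ Finset.range dP,
      ((RatFunc.X : RatFunc ℚ) - RatFunc.C ((N : ℚ) / 2) - RatFunc.C (aCoord lamP i)))
      = ∏ j ∈ Finset.range dP, hfac N ((lamP j : ℤ) - j - 1) :=
    Finset.prod_congr rfl fun i _ => by
      rw [XCadd]; unfold hfac aCoord; congr 1; push_cast; ring
  have eR1 : (∏ i ∈ Finset.range dN,
      ((RatFunc.X : RatFunc ℚ) + RatFunc.C ((N : ℚ) / 2) - RatFunc.C (bCoord lamN i)))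
      = ∏ j ∈ Finset.range dN, hfac N ((conjPart lamN j : ℤ) - j - N - 1) :=
    Finset.prod_congr rfl fun i _ => by
      rw [XCsub']; unfold hfac bCoord; congr 1; push_cast; ring
  have eR2 : (∏ i ∈ Finset.range dN,
      ((RatFunc.X : RatFunc ℚ) + RatFunc.C ((N : ℚ) / 2) + RatFunc.C (aCoord lamN i)))
      = ∏ j ∈ Finset.range dN, hfac N ((j : ℤ) - (lamN j : ℤ) - N) :=
    Finset.prod_congr rfl fun i _ => by
      rw [XCadd']; unfold hfac aCoord; congr 1; push_cast; ring
  rw [eP1, eP2, eB1, eB2, eR1, eR2]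
  -- the three product identities
  have frobP := frob_prod (hfac N) lamP N hmonoP hsuppP
  have frobN : (∏ i ∈ Finset.range N, hfac N ((i : ℤ) - (lamN i : ℤ) - N)) *
      (∏ j ∈ Finset.range dN, hfac N ((conjPart lamN j : ℤ) - j - N - 1))
      = (∏ i ∈ Finset.range N, hfac N (-(i : ℤ) - 1)) *
        ∏ j ∈ Finset.range dN, hfac N ((j : ℤ) - (lamN j : ℤ) - N) := by
    have h0 := frob_prod (fun m => hfac N (-(N : ℤ) - 1 - m)) lamN N hmonoN hsuppN
    have L1 : (∏ i ∈ Finset.range N, hfac N (-(N : ℤ) - 1 - ((lamN i : ℤ) - i - 1)))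
        = ∏ i ∈ Finset.range N, hfac N ((i : ℤ) - (lamN i : ℤ) - N) :=
      Finset.prod_congr rfl fun i _ => congrArg (hfac N) (by ring)
    have L2 : (∏ j ∈ Finset.range dN, hfac N (-(N : ℤ) - 1 - ((j : ℤ) - (conjPart lamN j : ℤ))))
        = ∏ j ∈ Finset.range dN, hfac N ((conjPart lamN j : ℤ) - j - N - 1) :=
      Finset.prod_congr rfl fun j _ => congrArg (hfac N) (by ring)
    have L3 : (∏ i ∈ Finset.range N, hfac N (-(N : ℤ) - 1 - (-(i : ℤ) - 1)))
        = ∏ i ∈ Finset.range N, hfac N ((i : ℤ) - N) :=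
      Finset.prod_congr rfl fun i _ => congrArg (hfac N) (by ring)
    have L4 : (∏ j ∈ Finset.range dN, hfac N (-(N : ℤ) - 1 - ((lamN j : ℤ) - j - 1)))
        = ∏ j ∈ Finset.range dN, hfac N ((j : ℤ) - (lamN j : ℤ) - N) :=
      Finset.prod_congr rfl fun j _ => congrArg (hfac N) (by ring)
    have hQ : (∏ i ∈ Finset.range N, hfac N ((i : ℤ) - N))
        = ∏ i ∈ Finset.range N, hfac N (-(i : ℤ) - 1) := by
      rw [← Finset.prod_range_reflect (fun i => hfac N ((i : ℤ) - N)) N]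
      exact Finset.prod_congr rfl fun j hj =>
        congrArg (hfac N) (by simp only [Finset.mem_range] at hj; omega)
    rw [L1, L2, L3, L4, hQ] at h0
    exact h0
  have hsplit := split_prod (hfac N) N ν
  -- convert Fin-products to range-products in hsplit
  rw [Fin.prod_univ_eq_prod_range (fun k => hfac N ((lamP k : ℤ) - k - 1)) N,
    Fin.prod_univ_eq_prod_range (fun k => hfac N ((k : ℤ) - (lamN k : ℤ) - N)) N] at hsplit
  have hQfin : (∏ i : Fin N, hfac N (-((i : ℕ) : ℤ) - 1))
      = ∏ i ∈ Finset.range N, hfac N (-(i : ℤ) - 1) :=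
    Fin.prod_univ_eq_prod_range (fun k => hfac N (-(k : ℤ) - 1)) N
  rw [hQfin] at hsplit
  -- notation
  set P := ∏ i : Fin N, hfac N ((ν i : ℤ) - (i : ℕ) - 1) with hP
  set Q := ∏ i ∈ Finset.range N, hfac N (-(i : ℤ) - 1) with hQQ
  set Ap := ∏ i ∈ Finset.range N, hfac N ((lamP i : ℤ) - i - 1) with hAp
  set Am := ∏ i ∈ Finset.range N, hfac N ((i : ℤ) - (lamN i : ℤ) - N) with hAm
  set Bn := ∏ j ∈ Finset.range dP, hfac N ((j : ℤ) - (conjPart lamP j : ℤ)) with hBn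
  set Bd := ∏ j ∈ Finset.range dP, hfac N ((lamP j : ℤ) - j - 1) with hBd
  set Rn := ∏ j ∈ Finset.range dN, hfac N ((conjPart lamN j : ℤ) - j - N - 1) with hRn
  set Rd := ∏ j ∈ Finset.range dN, hfac N ((j : ℤ) - (lamN j : ℤ) - N) with hRd
  -- frobP : Ap * Bn = Q * Bd ; frobN : Am * Rn = Q * Rd ; hsplit : P * Q = Ap * Am
  have hQne : Q ≠ 0 := Finset.prod_ne_zero_iff.mpr fun i _ => hfac_ne N _
  have hPne : P ≠ 0 := Finset.prod_ne_zero_iff.mpr fun i _ => hfac_ne N _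
  have hApne : Ap ≠ 0 := Finset.prod_ne_zero_iff.mpr fun i _ => hfac_ne N _
  have hAmne : Am ≠ 0 := Finset.prod_ne_zero_iff.mpr fun i _ => hfac_ne N _
  have hBdne : Bd ≠ 0 := Finset.prod_ne_zero_iff.mpr fun i _ => hfac_ne N _
  have hRdne : Rd ≠ 0 := Finset.prod_ne_zero_iff.mpr fun i _ => hfac_ne N _
  have key : Q * Bd * Rd = P * Bn * Rn := by
    have hcancel : (Ap * Am) * (Q * Bd * Rd) = (Ap * Am) * (P * Bn * Rn) := by
      linear_combination (-(Q * Bd * Rd)) * hsplit + (-(P * Q * Rd)) * frobP +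
        (-(P * Ap * Bn)) * frobN
    exact mul_left_cancel₀ (mul_ne_zero hApne hAmne) hcancel
  rw [div_mul_div_comm, div_eq_div_iff hPne (mul_ne_zero hBdne hRdne)]
  linear_combination Bd * Rd * hQfin + key
end

section
/- Let (M^{(n)}) be a sequence of probability measures on ℤ, each log-concave (M(k)M(l) ≤ M((k+l)/2)² for all k,l of the same parity) and with no internal zeros (support an interval). If M^{(n)} converges weakly (pointwise on ℤ) to a nonzero measure M^{(∞)}, then M^{(∞)} is a probability measure and the second moments of M^{(n)} converge to the second moment of M^{(∞)}. -/
open Filter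

section aux
variable {f : ℤ → ℝ}

lemma three_pt (hlog : ∀ k l : ℤ, k % 2 = l % 2 → f k * f l ≤ f ((k + l) / 2) ^ 2)
    (k : ℤ) : f k * f (k + 2) ≤ f (k + 1) ^ 2 := by
  have h := hlog k (k + 2) (by omega)
  have h2 : (k + (k + 2)) / 2 = k + 1 := by omega
  rwa [h2] at h

lemma pow_ineq (hpos : ∀ k, 0 ≤ f k)
    (hlog : ∀ k l : ℤ, k % 2 = l % 2 → f k * f l ≤ f ((k + l) / 2) ^ 2)
    (hniz : ∀ k l m : ℤ, k ≤ l → l ≤ m → f k ≠ 0 → f m ≠ 0 → f l ≠ 0)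
    (a : ℤ) (p q : ℕ) :
    f a ^ q * f (a + p + q) ^ p ≤ f (a + p) ^ (p + q) := by
  rcases Nat.eq_zero_or_pos p with hp | hp
  · subst hp; simp
  rcases Nat.eq_zero_or_pos q with hq | hq
  · subst hq; simp
  by_cases hfa : f a = 0
  · rw [hfa, zero_pow hq.ne', zero_mul]
    exact pow_nonneg (hpos _) _
  by_cases hfc : f (a + p + q) = 0
  · rw [hfc, zero_pow hp.ne', mul_zero]
    exact pow_nonneg (hpos _) _
  have hposI : ∀ i : ℤ, a ≤ i → i ≤ a + p + q → 0 < f i := by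
    intro i h1 h2
    exact lt_of_le_of_ne (hpos i) (Ne.symm (hniz a i (a + p + q) h1 h2 hfa hfc))
  set N := p + q with hN
  set L : ℕ → ℝ := fun i => Real.log (f (a + i)) with hL
  set d : ℕ → ℝ := fun i => L (i + 1) - L i with hd
  have hstep : ∀ i : ℕ, i + 2 ≤ N → d (i + 1) ≤ d i := by
    intro i hi
    have h0 : 0 < f (a + i) := hposI _ (by omega) (by push_cast; omega)
    have h1 : 0 < f (a + i + 1) := hposI _ (by omega) (by push_cast; omega)
    have h2 : 0 < f (a + i + 2) := hposI _ (by omega) (by push_cast; omega)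
    have h3 := three_pt hlog (a + i)
    have hlog3 : Real.log (f (a + i)) + Real.log (f (a + i + 2)) ≤
        2 * Real.log (f (a + i + 1)) := by
      have := Real.log_le_log (by positivity) h3
      rwa [Real.log_mul h0.ne' h2.ne', Real.log_pow, Nat.cast_ofNat] at this
    simp only [hd, hL]
    have e1 : a + ((i : ℤ) + 1) = a + i + 1 := by ring
    have e2 : a + ((i : ℤ) + 1 + 1) = a + i + 2 := by ring
    push_cast
    rw [e1, e2]
    linarith
  have hanti : ∀ i j : ℕ, i ≤ j → j + 1 ≤ N → d j ≤ d i := by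
    intro i j hij hjN
    induction j, hij using Nat.le_induction with
    | base => exact le_rfl
    | succ n hn ih =>
        exact le_trans (hstep n (by omega)) (ih (by omega))
  have htel : ∀ n : ℕ, L n = L 0 + ∑ i ∈ Finset.range n, d i := by
    intro n
    induction n with
    | zero => simp
    | succ n ih => rw [Finset.sum_range_succ, ← add_assoc, ← ih]; simp [hd]
  have hS1 : (p : ℝ) * d (p - 1) ≤ ∑ i ∈ Finset.range p, d i := by
    have := Finset.card_nsmul_le_sum (Finset.range p) d (d (p - 1)) ?_
    · simpa [nsmul_eq_mul] using this
    · intro i hi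
      rw [Finset.mem_range] at hi
      exact hanti i (p - 1) (by omega) (by omega)
  have hS2 : ∑ i ∈ Finset.range q, d (p + i) ≤ (q : ℝ) * d (p - 1) := by
    have := Finset.sum_le_card_nsmul (Finset.range q) (fun i => d (p + i)) (d (p - 1)) ?_
    · simpa [nsmul_eq_mul] using this
    · intro i hi
      rw [Finset.mem_range] at hi
      exact hanti (p - 1) (p + i) (by omega) (by omega)
  have hsplit : ∑ i ∈ Finset.range N, d i
      = ∑ i ∈ Finset.range p, d i + ∑ i ∈ Finset.range q, d (p + i) := by
    rw [hN, Finset.sum_range_add]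
  have hb : 0 < f (a + p) := hposI _ (by omega) (by push_cast; omega)
  have hfa' : 0 < f a := lt_of_le_of_ne (hpos a) (Ne.symm hfa)
  have hfc' : 0 < f (a + p + q) := lt_of_le_of_ne (hpos _) (Ne.symm hfc)
  have hLp : L p = L 0 + ∑ i ∈ Finset.range p, d i := htel p
  have hLN : L N = L 0 + (∑ i ∈ Finset.range p, d i + ∑ i ∈ Finset.range q, d (p + i)) := by
    rw [htel N, hsplit]
  -- goal in log form
  have hgoal : (q : ℝ) * L 0 + (p : ℝ) * L N ≤ ((p : ℝ) + q) * L p := by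
    have hp0 : (0:ℝ) ≤ p := by positivity
    have hq0 : (0:ℝ) ≤ q := by positivity
    nlinarith [mul_le_mul_of_nonneg_left hS1 hq0, mul_le_mul_of_nonneg_left hS2 hp0]
  have hLN' : L N = Real.log (f (a + p + q)) := by
    simp only [hL, hN]; push_cast; ring_nf
  have hL0 : L 0 = Real.log (f a) := by simp [hL]
  have hLp' : L p = Real.log (f (a + p)) := by simp [hL]
  rw [hLN', hL0, hLp'] at hgoal
  have lhs_pos : 0 < f a ^ q * f (a + p + q) ^ p := by positivity
  have rhs_pos : 0 < f (a + p) ^ (p + q) := by positivity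
  rw [← Real.log_le_log_iff lhs_pos rhs_pos]
  rw [Real.log_mul (by positivity) (by positivity), Real.log_pow, Real.log_pow, Real.log_pow]
  push_cast
  linarith


lemma tail_right (hpos : ∀ k, 0 ≤ f k)
    (hlog : ∀ k l : ℤ, k % 2 = l % 2 → f k * f l ≤ f ((k + l) / 2) ^ 2)
    (hniz : ∀ k l m : ℤ, k ≤ l → l ≤ m → f k ≠ 0 → f m ≠ 0 → f l ≠ 0)
    (hsum : Summable f) (htot : ∑' k : ℤ, f k = 1)
    {k0 : ℤ} {δ : ℝ} (hδ : 0 < δ) (hδ1 : δ ≤ 1) (hk0 : δ ≤ f k0) :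
    ∀ j : ℕ, f (k0 + j) ≤ (1/2 : ℝ) ^ (j / ⌈2/δ⌉₊) := by
  set m := ⌈2/δ⌉₊ with hmdef
  have hm2 : (2 : ℝ) / δ ≤ m := Nat.le_ceil _
  have hm1 : 2 ≤ (m : ℝ) := le_trans (by rw [le_div_iff₀ hδ]; nlinarith) hm2
  have hmnat : 2 ≤ m := by exact_mod_cast hm1
  have hle1 : ∀ k, f k ≤ 1 := by
    intro k
    rw [← htot]
    exact Summable.le_tsum hsum k (fun j _ => hpos j)
  have hsmall : ∀ j : ℕ, m ≤ j → f (k0 + j) ≤ δ / 2 := by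
    intro j hj
    by_contra hcon
    push_neg at hcon
    have hall : ∀ i ∈ Finset.range (j + 1), δ / 2 ≤ f (k0 + i) := by
      intro i hi
      rw [Finset.mem_range] at hi
      have hij : i ≤ j := by omega
      have h1 := pow_ineq hpos hlog hniz k0 i (j - i)
      have e1 : k0 + (i : ℤ) + ((j - i : ℕ) : ℤ) = k0 + j := by
        have : ((j - i : ℕ) : ℤ) = (j : ℤ) - i := by omega
        rw [this]; ring
      have e2 : i + (j - i) = j := by omega
      rw [e1, e2] at h1
      have h2 : (δ/2) ^ j ≤ f (k0 + i) ^ j := by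
        calc (δ/2) ^ j = (δ/2) ^ (j - i) * (δ/2) ^ i := by
              rw [← pow_add]; congr 1; omega
        _ ≤ f k0 ^ (j - i) * f (k0 + j) ^ i := by
            apply mul_le_mul (pow_le_pow_left₀ (by linarith) (by linarith) _)
              (pow_le_pow_left₀ (by linarith) hcon.le _) (by positivity)
              (pow_nonneg (hpos _) _)
        _ ≤ f (k0 + i) ^ j := h1
      exact le_of_pow_le_pow_left₀ (by omega) (hpos _) h2
    have hsum1 : ∑ i ∈ Finset.range (j + 1), f (k0 + i) ≤ 1 := by
      rw [← htot]
      have hinj : Function.Injective (fun i : ℕ => k0 + (i : ℤ)) := by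
        intro x y h; simpa using h
      calc ∑ i ∈ Finset.range (j + 1), f (k0 + i)
          = ∑ k ∈ (Finset.range (j + 1)).map ⟨fun i : ℕ => k0 + (i : ℤ), hinj⟩, f k := by
            rw [Finset.sum_map]; rfl
        _ ≤ ∑' k : ℤ, f k := Summable.sum_le_tsum _ (fun k _ => hpos k) hsum
    have hcard := Finset.card_nsmul_le_sum (Finset.range (j + 1)) (fun i => f (k0 + i)) (δ/2) hall
    rw [Finset.card_range, nsmul_eq_mul] at hcard
    have hj' : (m : ℝ) ≤ j := by exact_mod_cast hj
    have : ((j : ℝ) + 1) * (δ/2) ≤ 1 := by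
      calc ((j : ℝ) + 1) * (δ/2) = ((j + 1 : ℕ) : ℝ) * (δ/2) := by push_cast; ring
      _ ≤ ∑ i ∈ Finset.range (j + 1), f (k0 + i) := hcard
      _ ≤ 1 := hsum1
    have h2δ : (j : ℝ) + 1 ≤ 2 / δ := by
      rw [le_div_iff₀ hδ]; nlinarith
    linarith
  intro j
  rcases lt_or_ge j m with hj | hj
  · rw [Nat.div_eq_of_lt hj, pow_zero]
    exact hle1 _
  · have h1 := pow_ineq hpos hlog hniz k0 m (j - m)
    have e1 : k0 + (m : ℤ) + ((j - m : ℕ) : ℤ) = k0 + j := by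
      have : ((j - m : ℕ) : ℤ) = (j : ℤ) - m := by omega
      rw [this]; ring
    have e2 : m + (j - m) = j := by omega
    rw [e1, e2] at h1
    have h2 : f (k0 + m) ≤ δ / 2 := hsmall m le_rfl
    have h3 : δ ^ (j - m) * f (k0 + j) ^ m ≤ δ ^ (j - m) * (δ ^ m * (1/2 : ℝ) ^ j) := by
      calc δ ^ (j - m) * f (k0 + j) ^ m ≤ f k0 ^ (j - m) * f (k0 + j) ^ m := by
            apply mul_le_mul_of_nonneg_right (pow_le_pow_left₀ hδ.le hk0 _)
              (pow_nonneg (hpos _) _)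
        _ ≤ f (k0 + m) ^ j := h1
        _ ≤ (δ/2) ^ j := pow_le_pow_left₀ (hpos _) h2 _
        _ = δ ^ (j - m) * (δ ^ m * (1/2 : ℝ) ^ j) := by
            have hδpow : δ ^ j = δ ^ (j - m) * δ ^ m := by
              rw [← pow_add]; congr 1; omega
            rw [div_eq_mul_inv, mul_pow, hδpow, one_div]
            ring
    have h4 : f (k0 + j) ^ m ≤ δ ^ m * (1/2 : ℝ) ^ j :=
      le_of_mul_le_mul_left h3 (pow_pos hδ _)
    have h5 : f (k0 + j) ^ m ≤ ((1/2 : ℝ) ^ (j / m)) ^ m := by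
      calc f (k0 + j) ^ m ≤ δ ^ m * (1/2 : ℝ) ^ j := h4
        _ ≤ 1 * (1/2 : ℝ) ^ j := by
            apply mul_le_mul_of_nonneg_right _ (by positivity)
            exact pow_le_one₀ hδ.le hδ1
        _ = (1/2 : ℝ) ^ j := one_mul _
        _ ≤ (1/2 : ℝ) ^ (j / m * m) := by
            apply pow_le_pow_of_le_one (by norm_num) (by norm_num)
            exact Nat.div_mul_le_self j m
        _ = ((1/2 : ℝ) ^ (j / m)) ^ m := by rw [pow_mul]
    exact le_of_pow_le_pow_left₀ (by omega) (by positivity) h5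

lemma tail_both (hpos : ∀ k, 0 ≤ f k)
    (hlog : ∀ k l : ℤ, k % 2 = l % 2 → f k * f l ≤ f ((k + l) / 2) ^ 2)
    (hniz : ∀ k l m : ℤ, k ≤ l → l ≤ m → f k ≠ 0 → f m ≠ 0 → f l ≠ 0)
    (hsum : Summable f) (htot : ∑' k : ℤ, f k = 1)
    {k0 : ℤ} {δ : ℝ} (hδ : 0 < δ) (hδ1 : δ ≤ 1) (hk0 : δ ≤ f k0) :
    ∀ k : ℤ, f k ≤ (1/2 : ℝ) ^ ((k - k0).natAbs / ⌈2/δ⌉₊) := by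
  intro k
  rcases le_or_gt k0 k with hk | hk
  · have hj := tail_right hpos hlog hniz hsum htot hδ hδ1 hk0 (k - k0).toNat
    have e1 : k0 + ((k - k0).toNat : ℤ) = k := by omega
    have e2 : (k - k0).natAbs = (k - k0).toNat := by omega
    rw [e1] at hj
    rwa [e2]
  · set g : ℤ → ℝ := fun x => f (-x) with hg
    have hgpos : ∀ x, 0 ≤ g x := fun x => hpos _
    have hglog : ∀ a b : ℤ, a % 2 = b % 2 → g a * g b ≤ g ((a + b) / 2) ^ 2 := by
      intro a b hab
      have h := hlog (-a) (-b) (by omega)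
      have e : (-a + -b) / 2 = -((a + b) / 2) := by omega
      rw [e] at h
      exact h
    have hgniz : ∀ a b c : ℤ, a ≤ b → b ≤ c → g a ≠ 0 → g c ≠ 0 → g b ≠ 0 := by
      intro a b c h1 h2 ha hc
      exact hniz (-c) (-b) (-a) (by omega) (by omega) hc ha
    have hgsum : Summable g := by
      exact (Equiv.neg ℤ).summable_iff.mpr hsum
    have hgtot : ∑' x : ℤ, g x = 1 := by
      rw [← htot]
      exact (Equiv.neg ℤ).tsum_eq f
    have hgk0 : δ ≤ g (-k0) := by simpa [hg] using hk0
    have hj := tail_right hgpos hglog hgniz hgsum hgtot hδ hδ1 hgk0 (k0 - k).toNat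
    have e1 : -k0 + ((k0 - k).toNat : ℤ) = -k := by omega
    have e2 : (k - k0).natAbs = (k0 - k).toNat := by omega
    rw [e1] at hj
    rw [e2]
    simpa [hg] using hj


lemma sumnat (c : ℝ) (m : ℕ) (hm : 1 ≤ m) :
    Summable (fun n : ℕ => (((n : ℝ) + c) ^ 2 + 1) * (1/2 : ℝ) ^ (n / m)) := by
  set w : ℝ := (1/2 : ℝ) ^ ((m : ℝ)⁻¹) with hwdef
  have hm0 : (0 : ℝ) < m := by exact_mod_cast hm
  have hw0 : 0 < w := Real.rpow_pos_of_pos (by norm_num) _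
  have hw1 : w < 1 := Real.rpow_lt_one (by norm_num) (by norm_num) (by positivity)
  have key : ∀ n : ℕ, (1/2 : ℝ) ^ (n / m) ≤ 2 * w ^ n := by
    intro n
    have ht : (n : ℝ) / m - 1 ≤ (n / m : ℕ) := by
      have h1 := Nat.div_add_mod n m
      have h2 : n % m < m := Nat.mod_lt _ (by omega)
      have h3 : (n : ℝ) = m * (n / m : ℕ) + (n % m : ℕ) := by exact_mod_cast h1.symm
      have h4 : ((n % m : ℕ) : ℝ) < m := by exact_mod_cast h2
      rw [div_sub_one hm0.ne', div_le_iff₀ hm0]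
      nlinarith
    calc (1/2 : ℝ) ^ (n / m) = (1/2 : ℝ) ^ ((n / m : ℕ) : ℝ) := (Real.rpow_natCast _ _).symm
      _ ≤ (1/2 : ℝ) ^ ((n : ℝ) / m - 1) :=
          Real.rpow_le_rpow_of_exponent_ge (by norm_num) (by norm_num) ht
      _ = 2 * (1/2 : ℝ) ^ ((n : ℝ) / m) := by
          rw [Real.rpow_sub (by norm_num), Real.rpow_one]
          ring
      _ = 2 * w ^ n := by
          rw [hwdef, ← Real.rpow_natCast ((1/2 : ℝ) ^ ((m : ℝ)⁻¹)) n, ← Real.rpow_mul (by norm_num)]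
          congr 1
          rw [inv_mul_eq_div]
  have hwn : ‖w‖ < 1 := by rwa [Real.norm_eq_abs, abs_of_pos hw0]
  have h2 : Summable (fun n : ℕ => (n : ℝ) ^ 2 * w ^ n) := by
    simpa using summable_pow_mul_geometric_of_norm_lt_one 2 hwn
  have h0 : Summable (fun n : ℕ => w ^ n) := summable_geometric_of_lt_one hw0.le hw1
  have hb : Summable (fun n : ℕ => 4 * ((n : ℝ) ^ 2 * w ^ n) + (4 * c ^ 2 + 6) * w ^ n) :=
    (h2.mul_left 4).add (h0.mul_left _)
  apply hb.of_nonneg_of_le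
  · intro n
    positivity
  · intro n
    have h1 : ((n : ℝ) + c) ^ 2 + 1 ≤ 2 * (n : ℝ) ^ 2 + 2 * c ^ 2 + 1 := by nlinarith [sq_nonneg ((n : ℝ) - c)]
    have h2' : (0 : ℝ) ≤ (1/2 : ℝ) ^ (n / m) := by positivity
    have h3 : (0 : ℝ) < 2 * (n : ℝ) ^ 2 + 2 * c ^ 2 + 1 := by positivity
    calc (((n : ℝ) + c) ^ 2 + 1) * (1/2 : ℝ) ^ (n / m)
        ≤ (2 * (n : ℝ) ^ 2 + 2 * c ^ 2 + 1) * (1/2 : ℝ) ^ (n / m) :=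
          mul_le_mul_of_nonneg_right h1 h2'
      _ ≤ (2 * (n : ℝ) ^ 2 + 2 * c ^ 2 + 1) * (2 * w ^ n) :=
          mul_le_mul_of_nonneg_left (key n) h3.le
      _ ≤ 4 * ((n : ℝ) ^ 2 * w ^ n) + (4 * c ^ 2 + 6) * w ^ n := by
          have hwn' : (0 : ℝ) ≤ w ^ n := by positivity
          nlinarith

lemma sumint (k0 : ℤ) (m : ℕ) (hm : 1 ≤ m) :
    Summable (fun k : ℤ => ((k : ℝ) ^ 2 + 1) * (1/2 : ℝ) ^ ((k - k0).natAbs / m)) := by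
  rw [← (Equiv.addRight k0).summable_iff]
  have heq : ((fun k : ℤ => ((k : ℝ) ^ 2 + 1) * (1/2 : ℝ) ^ ((k - k0).natAbs / m)) ∘
      (Equiv.addRight k0)) = fun k : ℤ => (((k : ℝ) + (k0 : ℝ)) ^ 2 + 1) * (1/2 : ℝ) ^ (k.natAbs / m) := by
    funext k
    simp only [Function.comp_apply, Equiv.coe_addRight, add_sub_cancel_right]
    push_cast
    ring_nf
  rw [heq]
  apply Summable.of_nat_of_neg
  · apply (sumnat (k0 : ℝ) m hm).congr
    intro n
    simp
  · apply (sumnat (-(k0 : ℝ)) m hm).congr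
    intro n
    simp only [Int.natAbs_neg, Int.natAbs_natCast]
    push_cast
    ring_nf

end aux

/-- Let `M⁽ⁿ⁾` be probability measures on `ℤ`, each log-concave
(`M(k)M(l) ≤ M((k+l)/2)²` for `k ≡ l mod 2`) and with no internal zeros (the support
is an interval). If `M⁽ⁿ⁾ → M⁽∞⁾` pointwise on `ℤ` with `M⁽∞⁾` nonzero, then `M⁽∞⁾`
is a probability measure and the second moments of `M⁽ⁿ⁾` converge to the second
moment of `M⁽∞⁾`. -/
theorem stmt_19 (M : ℕ → ℤ → ℝ) (Minf : ℤ → ℝ)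
    (hpos : ∀ n k, 0 ≤ M n k)
    (hprob : ∀ n, Summable (fun k : ℤ => M n k) ∧ ∑' k : ℤ, M n k = 1)
    (hlog : ∀ n, ∀ k l : ℤ, k % 2 = l % 2 → M n k * M n l ≤ M n ((k + l) / 2) ^ 2)
    (hniz : ∀ n, ∀ k l m : ℤ, k ≤ l → l ≤ m → M n k ≠ 0 → M n m ≠ 0 → M n l ≠ 0)
    (hconv : ∀ k : ℤ, Tendsto (fun n => M n k) atTop (nhds (Minf k)))
    (hne : ∃ k : ℤ, Minf k ≠ 0) :
    (Summable (fun k : ℤ => Minf k) ∧ ∑' k : ℤ, Minf k = 1) ∧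
      (∀ n, Summable (fun k : ℤ => (k : ℝ) ^ 2 * M n k)) ∧
      Summable (fun k : ℤ => (k : ℝ) ^ 2 * Minf k) ∧
      Tendsto (fun n => ∑' k : ℤ, (k : ℝ) ^ 2 * M n k) atTop
        (nhds (∑' k : ℤ, (k : ℝ) ^ 2 * Minf k)) := by
  obtain ⟨k0, hk0⟩ := hne
  have hMnn : ∀ k, 0 ≤ Minf k := fun k =>
    ge_of_tendsto (hconv k) (Eventually.of_forall fun n => hpos n k)
  have hk0pos : 0 < Minf k0 := lt_of_le_of_ne (hMnn k0) (Ne.symm hk0)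
  have hle1 : ∀ n k, M n k ≤ 1 := by
    intro n k
    rw [← (hprob n).2]
    exact Summable.le_tsum (hprob n).1 k (fun j _ => hpos n j)
  have hMinfle1 : Minf k0 ≤ 1 :=
    le_of_tendsto (hconv k0) (Eventually.of_forall fun n => hle1 n k0)
  set δ : ℝ := Minf k0 / 2 with hδdef
  have hδ : 0 < δ := half_pos hk0pos
  have hδ1 : δ ≤ 1 := by rw [hδdef]; linarith
  set m := ⌈2/δ⌉₊ with hm
  have hm1 : 1 ≤ m := by
    have : 0 < m := Nat.ceil_pos.mpr (by positivity)
    omega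
  have hev : ∀ᶠ n in atTop, δ ≤ M n k0 :=
    (hconv k0).eventually (eventually_ge_nhds (by linarith))
  set g0 : ℤ → ℝ := fun k => (1/2 : ℝ) ^ ((k - k0).natAbs / m) with hg0
  set g2 : ℤ → ℝ := fun k => ((k : ℝ) ^ 2 + 1) * g0 k with hg2
  have hg2sum : Summable g2 := sumint k0 m hm1
  have hg0nn : ∀ k, 0 ≤ g0 k := fun k => by rw [hg0]; positivity
  have hg0le : ∀ k, g0 k ≤ g2 k := by
    intro k
    simp only [hg2]
    nlinarith [hg0nn k, sq_nonneg (k : ℝ)]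
  have hg0sum : Summable g0 := hg2sum.of_nonneg_of_le hg0nn hg0le
  have hboundM : ∀ᶠ n in atTop, ∀ k, M n k ≤ g0 k := by
    filter_upwards [hev] with n hn
    exact tail_both (hpos n) (hlog n) (hniz n) (hprob n).1 (hprob n).2 hδ hδ1 hn
  have hboundMinf : ∀ k, Minf k ≤ g0 k := fun k =>
    le_of_tendsto (hconv k) (hboundM.mono fun n h => h k)
  have hMinfsum : Summable (fun k : ℤ => Minf k) :=
    hg0sum.of_nonneg_of_le hMnn hboundMinf
  have htsum1 : ∑' k : ℤ, Minf k = 1 := by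
    have hdom := tendsto_tsum_of_dominated_convergence (𝓕 := atTop)
      (f := fun (n : ℕ) (k : ℤ) => M n k) (g := Minf) (bound := g0) hg0sum hconv ?_
    · have hconst : Tendsto (fun n : ℕ => ∑' k : ℤ, M n k) atTop (nhds 1) := by
        have he : (fun n : ℕ => ∑' k : ℤ, M n k) = fun _ => 1 := funext fun n => (hprob n).2
        rw [he]
        exact tendsto_const_nhds
      exact tendsto_nhds_unique hdom hconst
    · filter_upwards [hboundM] with n h k
      rw [Real.norm_eq_abs, abs_of_nonneg (hpos n k)]
      exact h k
  refine ⟨⟨hMinfsum, htsum1⟩, ?_, ?_, ?_⟩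
  · intro n
    have hex : ∃ k, M n k ≠ 0 := by
      by_contra h
      push_neg at h
      have h0 : ∑' k : ℤ, M n k = 0 := by simp [h]
      rw [(hprob n).2] at h0
      norm_num at h0
    obtain ⟨kn, hkn⟩ := hex
    have hknpos : 0 < M n kn := lt_of_le_of_ne (hpos n kn) (Ne.symm hkn)
    have hkn1 : M n kn ≤ 1 := hle1 n kn
    have hmn1 : 1 ≤ ⌈2 / M n kn⌉₊ := by
      have : 0 < ⌈2 / M n kn⌉₊ := Nat.ceil_pos.mpr (by positivity)
      omega
    have htb := tail_both (hpos n) (hlog n) (hniz n) (hprob n).1 (hprob n).2 hknpos hkn1 le_rfl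
    apply (sumint kn _ hmn1).of_nonneg_of_le
    · intro k
      exact mul_nonneg (sq_nonneg _) (hpos n k)
    · intro k
      calc (k : ℝ) ^ 2 * M n k
          ≤ (k : ℝ) ^ 2 * (1/2 : ℝ) ^ ((k - kn).natAbs / ⌈2 / M n kn⌉₊) :=
            mul_le_mul_of_nonneg_left (htb k) (sq_nonneg _)
        _ ≤ ((k : ℝ) ^ 2 + 1) * (1/2 : ℝ) ^ ((k - kn).natAbs / ⌈2 / M n kn⌉₊) := by
            have hp : (0:ℝ) ≤ (1/2 : ℝ) ^ ((k - kn).natAbs / ⌈2 / M n kn⌉₊) := by positivity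
            nlinarith
  · apply hg2sum.of_nonneg_of_le
    · intro k
      exact mul_nonneg (sq_nonneg _) (hMnn k)
    · intro k
      calc (k : ℝ) ^ 2 * Minf k ≤ (k : ℝ) ^ 2 * g0 k :=
            mul_le_mul_of_nonneg_left (hboundMinf k) (sq_nonneg _)
        _ ≤ g2 k := by
            simp only [hg2]
            nlinarith [hg0nn k, sq_nonneg (k : ℝ)]
  · apply tendsto_tsum_of_dominated_convergence (𝓕 := atTop)
      (f := fun (n : ℕ) (k : ℤ) => (k : ℝ) ^ 2 * M n k) (bound := g2) hg2sum
    · intro k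
      exact (hconv k).const_mul _
    · filter_upwards [hboundM] with n h k
      rw [Real.norm_eq_abs, abs_of_nonneg (mul_nonneg (sq_nonneg _) (hpos n k))]
      calc (k : ℝ) ^ 2 * M n k ≤ (k : ℝ) ^ 2 * g0 k :=
            mul_le_mul_of_nonneg_left (h k) (sq_nonneg _)
        _ ≤ g2 k := by
            simp only [hg2]
            nlinarith [hg0nn k, sq_nonneg (k : ℝ)]
end
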